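/- arXiv:0903.1832 — 4 statements merged into one kernel-verified Lean document; each statement's English description precedes it below -/
import Mathlib

section
/- Let X^{(a)}, a ∈ ℕ, be irreducible positive recurrent Markov chains on countable state spaces 𝒜_a with distinguished state ℓ ∈ 𝒜_a and subset H_a ⊂ 𝒜_a. Then for all s, t > 0 and every a, the following two inequalities hold: P( S^{(a)} > s+t , S̃^{(a)}_s ≤ s+β_a ) ≥ P( S^{(a)} > s+β_a , S̃^{(a)}_s ≤ s+β_a ) · P( S^{(a)} > t ), and P( S^{(a)} > s+t , S̃^{(a)}_s ≤ s+β_a ) ≤ P( S^{(a)} > s ) · P( S^{(a)} > t−β_a ). -/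
open MeasureTheory Filter Topology ENNReal ProbabilityTheory

noncomputable section
open scoped Classical
set_option linter.unusedSectionVars false

/-- First time `t ≥ 0` at which the path `ω` visits the set `A`,
with value `⊤` if the path never visits `A`. -/
def hitTime {S : Type*} (A : Set S) (ω : ℕ → S) : ℝ≥0∞ :=
  ⨅ (t : ℕ) (_ : ω t ∈ A), (t : ℝ≥0∞)

/-- First time `t > 0` at which the path `ω` visits the set `A`. -/
def hitTimePos {S : Type*} (A : Set S) (ω : ℕ → S) : ℝ≥0∞ :=
  ⨅ (t : ℕ) (_ : 0 < t) (_ : ω t ∈ A), (t : ℝ≥0∞)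

/-- First time `t ≥ r` at which the path `ω` visits the set `A`. -/
def hitTimeAfter {S : Type*} (A : Set S) (r : ℝ≥0∞) (ω : ℕ → S) : ℝ≥0∞ :=
  ⨅ (t : ℕ) (_ : r ≤ (t : ℝ≥0∞)) (_ : ω t ∈ A), (t : ℝ≥0∞)

/-- A discrete-time Markov chain on a (countable) state space `S`, given by its
transition probabilities `P u v` and by the laws `law x` of the chain started at `x`
on path space `ℕ → S` (characterized by the cylinder/Markov property `markov`). -/
structure MC (S : Type*) [MeasurableSpace S] where
  P : S → S → ℝ
  law : S → Measure (ℕ → S)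
  prob : ∀ x, IsProbabilityMeasure (law x)
  nonneg : ∀ x y, 0 ≤ P x y
  rowsum : ∀ x, ∑' y, P x y = 1
  init : ∀ x, law x {ω | ω 0 = x} = 1
  markov : ∀ (x : S) (u : ℕ → S) (n : ℕ),
    law x {ω | ∀ i ≤ n + 1, ω i = u i}
      = law x {ω | ∀ i ≤ n, ω i = u i} * ENNReal.ofReal (P (u n) (u (n + 1)))

/-- Irreducibility: any state can be reached from any other through a path of
positive-probability steps. -/
def MC.Irreducible {S : Type*} [MeasurableSpace S] (c : MC S) : Prop :=
  ∀ x y : S, ∃ (k : ℕ) (u : ℕ → S), u 0 = x ∧ u k = y ∧ ∀ i < k, 0 < c.P (u i) (u (i + 1))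

/-- Positive recurrence (for an irreducible chain): all mean (positive) hitting times
are finite. -/
def MC.PositiveRecurrent {S : Type*} [MeasurableSpace S] (c : MC S) : Prop :=
  ∀ x y : S, ∫⁻ ω, hitTimePos {y} ω ∂(c.law x) < ⊤

/-- Mean hitting time `E[T^{(a)}_{x→ℓ}]` of the distinguished state `ℓ a` from `x`. -/
def meanHitLow (S : ℕ → Type*) [∀ a, MeasurableSpace (S a)] (X : ∀ a, MC (S a))
    (ℓ : ∀ a, S a) (a : ℕ) (x : S a) : ℝ≥0∞ :=
  ∫⁻ ω, hitTime {ℓ a} ω ∂((X a).law x)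

/-- Mean hitting time `E[T^{(a)}_{ℓ→H_a}]` of the high region `H a` from `ℓ a`. -/
def meanHitHigh (S : ℕ → Type*) [∀ a, MeasurableSpace (S a)] (X : ∀ a, MC (S a))
    (ℓ : ∀ a, S a) (H : ∀ a, Set (S a)) (a : ℕ) : ℝ≥0∞ :=
  ∫⁻ ω, hitTimePos (H a) ω ∂((X a).law (ℓ a))

/-- The normalized hitting time `S^{(a)} = T^{(a)}_{ℓ→H_a} / E[T^{(a)}_{ℓ→H_a}]`. -/
def Snorm (S : ℕ → Type*) [∀ a, MeasurableSpace (S a)] (X : ∀ a, MC (S a))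
    (ℓ : ∀ a, S a) (H : ∀ a, Set (S a)) (a : ℕ) (ω : ℕ → S a) : ℝ≥0∞ :=
  hitTimePos (H a) ω / meanHitHigh S X ℓ H a

/-- The intermediate time scale
`Δ_a = sqrt( E[T^{(a)}_{ℓ→H_a}] · sup_x E[T^{(a)}_{x→ℓ}] )`. -/
def DeltaA (S : ℕ → Type*) [∀ a, MeasurableSpace (S a)] (X : ∀ a, MC (S a))
    (ℓ : ∀ a, S a) (H : ∀ a, Set (S a)) (a : ℕ) : ℝ≥0∞ :=
  (meanHitHigh S X ℓ H a * ⨆ x : S a, meanHitLow S X ℓ a x) ^ (1 / 2 : ℝ)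

/-- `β_a = Δ_a / E[T^{(a)}_{ℓ→H_a}]`. -/
def betaA (S : ℕ → Type*) [∀ a, MeasurableSpace (S a)] (X : ∀ a, MC (S a))
    (ℓ : ∀ a, S a) (H : ∀ a, Set (S a)) (a : ℕ) : ℝ≥0∞ :=
  DeltaA S X ℓ H a / meanHitHigh S X ℓ H a

/-- `S̃^{(a)}_s = T̃^{(a)}_s / E[T^{(a)}_{ℓ→H_a}]`, where `T̃^{(a)}_s` is the first
return time to `ℓ` after time `s · E[T^{(a)}_{ℓ→H_a}]`. -/
def Sreturn (S : ℕ → Type*) [∀ a, MeasurableSpace (S a)] (X : ∀ a, MC (S a))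
    (ℓ : ∀ a, S a) (H : ∀ a, Set (S a)) (s : ℝ) (a : ℕ) (ω : ℕ → S a) : ℝ≥0∞ :=
  hitTimeAfter {ℓ a} (ENNReal.ofReal s * meanHitHigh S X ℓ H a) ω / meanHitHigh S X ℓ H a

namespace MCaux

variable {α : Type*} [MeasurableSpace α]

/-- two points are measurably indistinguishable -/
def mrel (x y : α) : Prop := ∀ B : Set α, MeasurableSet B → (x ∈ B ↔ y ∈ B)

lemma mrel_refl (x : α) : mrel x x := fun _ _ => Iff.rfl

lemma mrel_symm {x y : α} (h : mrel x y) : mrel y x := fun B hB => (h B hB).symm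

lemma mrel_trans {x y z : α} (h : mrel x y) (h' : mrel y z) : mrel x z :=
  fun B hB => (h B hB).trans (h' B hB)

def mSetoid (α : Type*) [MeasurableSpace α] : Setoid α :=
  ⟨mrel, ⟨mrel_refl, mrel_symm, mrel_trans⟩⟩

abbrev Qt (α : Type*) [MeasurableSpace α] := Quotient (mSetoid α)

def qmk (x : α) : Qt α := Quotient.mk (mSetoid α) x

lemma qmk_eq_iff {x y : α} : qmk x = qmk y ↔ mrel x y := by
  constructor
  · intro h; exact Quotient.exact h
  · intro h; exact Quotient.sound h

lemma measurableSet_mrelset [Countable α] (y : α) : MeasurableSet {x | mrel x y} := by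
  classical
  have hsep : ∀ z : α, ¬ mrel z y → ∃ C : Set α, MeasurableSet C ∧ y ∈ C ∧ z ∉ C := by
    intro z hz
    simp only [mrel, not_forall] at hz
    obtain ⟨B, hB, hiff⟩ := hz
    by_cases hzB : z ∈ B
    · refine ⟨Bᶜ, hB.compl, ?_, ?_⟩
      · intro hyB; exact hiff ⟨fun _ => hyB, fun _ => hzB⟩
      · simp [hzB]
    · refine ⟨B, hB, ?_, hzB⟩
      by_contra hyB
      exact hiff ⟨fun h => absurd h hzB, fun h => absurd h hyB⟩
  have key : {x | mrel x y} = ⋂ z : {z : α // ¬ mrel z y},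
      (hsep z.1 z.2).choose := by
    ext x
    simp only [Set.mem_setOf_eq, Set.mem_iInter]
    constructor
    · intro hx z
      obtain ⟨hC, hyC, hzC⟩ := (hsep z.1 z.2).choose_spec
      exact (hx _ hC).mpr hyC
    · intro hx
      by_contra hxy
      obtain ⟨hC, hyC, hzC⟩ := (hsep x hxy).choose_spec
      exact hzC (hx ⟨x, hxy⟩)
  rw [key]
  exact MeasurableSet.iInter fun z => ((hsep z.1 z.2).choose_spec).1

lemma measurableSet_fiber [Countable α] (q : Qt α) : MeasurableSet {x : α | qmk x = q} := by
  induction q using Quotient.inductionOn with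
  | h y =>
    have : {x : α | qmk x = Quotient.mk (mSetoid α) y} = {x | mrel x y} := by
      ext x; exact qmk_eq_iff
    rw [this]; exact measurableSet_mrelset y

/-- pointwise measurable indistinguishability of paths -/
def prel (ω ω' : ℕ → α) : Prop := ∀ k, mrel (ω k) (ω' k)

lemma measurable_saturated {B : Set (ℕ → α)} (hB : MeasurableSet B)
    {ω ω' : ℕ → α} (h : prel ω ω') (hω : ω ∈ B) : ω' ∈ B := by
  classical
  let m' : MeasurableSpace (ℕ → α) :=
    { MeasurableSet' := fun C => ∀ σ ∈ C, ∀ σ', prel σ σ' → σ' ∈ C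
      measurableSet_empty := by intro σ h; exact absurd h (Set.notMem_empty σ)
      measurableSet_compl := by
        intro C hC σ hσ σ' hrel hσ'
        exact hσ (hC σ' hσ' σ (fun k => mrel_symm (hrel k)))
      measurableSet_iUnion := by
        intro f hf σ hσ σ' hrel
        obtain ⟨i, hi⟩ := Set.mem_iUnion.mp hσ
        exact Set.mem_iUnion.mpr ⟨i, hf i σ hi σ' hrel⟩ }
  have hle : (MeasurableSpace.pi : MeasurableSpace (ℕ → α)) ≤ m' := by
    rw [MeasurableSpace.pi]
    refine iSup_le fun k => ?_
    intro C hC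
    obtain ⟨D, hD, rfl⟩ := hC
    intro σ hσ σ' hrel
    exact (hrel k D hD).mp hσ
  exact hle B hB ω hω ω' h
  

lemma mu_le_of_rep (μ : Measure (ℕ → α)) {M X : Set (ℕ → α)}
    (h : ∀ ω ∈ M, ∃ ω', prel ω ω' ∧ ω' ∈ X) : μ M ≤ μ X := by
  rw [measure_eq_iInf X]
  refine le_iInf fun B => le_iInf fun hXB => le_iInf fun hB => ?_
  refine measure_mono fun ω hω => ?_
  obtain ⟨ω', hrel, hω'⟩ := h ω hω
  exact measurable_saturated hB (fun k => mrel_symm (hrel k)) (hXB hω')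


section chain

variable [Countable α] (c : MC α) (l0 : α)

/-- canonical representative of an atom, chosen to be `l0` on the atom of `l0`. -/
def rep (q : Qt α) : α := if q = qmk l0 then l0 else q.out

lemma qmk_rep (q : Qt α) : qmk (rep l0 q) = q := by
  unfold rep
  split
  · rename_i h; rw [h]
  · exact Quotient.out_eq q

lemma rep_l0 : rep l0 (qmk l0) = l0 := by simp [rep]

/-- point cylinder -/
def pcyl (u : ℕ → α) (n : ℕ) : Set (ℕ → α) := {ω | ∀ k ≤ n, ω k = u k}

/-- atom cylinder -/
def ccyl (v : ℕ → Qt α) (n : ℕ) : Set (ℕ → α) := {ω | ∀ k ≤ n, qmk (ω k) = v k}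

def cylval (v : ℕ → Qt α) (n : ℕ) : ℝ≥0∞ :=
  (if v 0 = qmk l0 then 1 else 0) *
    ∏ k ∈ Finset.range n, ENNReal.ofReal (c.P (rep l0 (v k)) (rep l0 (v (k+1))))

lemma measurableSet_ccyl (v : ℕ → Qt α) (n : ℕ) : MeasurableSet (ccyl v n) := by
  have : ccyl v n = ⋂ k ∈ Finset.range (n+1), (fun ω : ℕ → α => ω k) ⁻¹' {x | qmk x = v k} := by
    ext ω
    simp only [ccyl, Set.mem_setOf_eq, Set.mem_iInter, Set.mem_preimage, Finset.mem_range,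
      Nat.lt_succ_iff]
  rw [this]
  refine MeasurableSet.biInter (Finset.range (n+1)).countable_toSet (fun k _ => ?_)
  have : (fun ω : ℕ → α => ω k) ⁻¹' {x | qmk x = v k} = (fun ω : ℕ → α => ω k) ⁻¹' {x | qmk x = v k} := rfl
  exact (measurable_pi_apply k) (measurableSet_fiber (v k))

lemma mu_ccyl_eq_pcyl (v : ℕ → Qt α) (n : ℕ) :
    c.law l0 (ccyl v n) = c.law l0 (pcyl (fun k => rep l0 (v k)) n) := by
  classical
  refine le_antisymm ?_ (measure_mono ?_)
  · refine mu_le_of_rep _ fun ω hω => ?_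
    refine ⟨fun k => if k ≤ n then rep l0 (v k) else ω k, ?_, ?_⟩
    · intro k
      by_cases hk : k ≤ n
      · simp only [hk, if_true]
        exact Quotient.exact (((hω k hk).trans (qmk_rep l0 (v k)).symm))
      · simp only [hk, if_false]; exact mrel_refl _
    · intro k hk; simp [hk]
  · intro ω hω k hk
    rw [hω k hk]; exact qmk_rep l0 (v k)

lemma mu_fiber0 [hp : IsProbabilityMeasure (c.law l0)] (q : Qt α) :
    c.law l0 {ω : ℕ → α | qmk (ω 0) = q} = if q = qmk l0 then 1 else 0 := by
  classical
  have hmeas : ∀ p : Qt α, MeasurableSet {ω : ℕ → α | qmk (ω 0) = p} := by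
    intro p
    have : {ω : ℕ → α | qmk (ω 0) = p} = (fun ω : ℕ → α => ω 0) ⁻¹' {x | qmk x = p} := rfl
    rw [this]
    exact (measurable_pi_apply 0) (measurableSet_fiber p)
  have h1 : c.law l0 {ω : ℕ → α | qmk (ω 0) = qmk l0} = 1 := by
    refine le_antisymm prob_le_one ?_
    calc (1:ℝ≥0∞) = c.law l0 {ω | ω 0 = l0} := (c.init l0).symm
    _ ≤ c.law l0 {ω : ℕ → α | qmk (ω 0) = qmk l0} := by
        refine measure_mono fun ω hω => ?_
        simp only [Set.mem_setOf_eq] at hω ⊢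
        rw [hω]
  split
  · rename_i h; rw [h]; exact h1
  · rename_i h
    by_contra hne
    have hdisj : Disjoint {ω : ℕ → α | qmk (ω 0) = q} {ω : ℕ → α | qmk (ω 0) = qmk l0} := by
      rw [Set.disjoint_left]
      intro ω hω hω'
      exact h (hω.symm.trans hω')
    have hmu := measure_union (μ := c.law l0) hdisj (hmeas (qmk l0))
    have hle : c.law l0 ({ω : ℕ → α | qmk (ω 0) = q} ∪ {ω : ℕ → α | qmk (ω 0) = qmk l0}) ≤ 1 :=
      prob_le_one
    rw [hmu, h1] at hle
    have : c.law l0 {ω : ℕ → α | qmk (ω 0) = q} = 0 := by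
      by_contra h0
      have := ENNReal.add_lt_add_right (by simp : (1:ℝ≥0∞) ≠ ⊤)
        (lt_of_le_of_ne zero_le (Ne.symm h0))
      simp only [zero_add] at this
      exact absurd hle (not_le.mpr this)
    exact hne this
  
lemma mu_ccyl [hp : IsProbabilityMeasure (c.law l0)] (v : ℕ → Qt α) (n : ℕ) :
    c.law l0 (ccyl v n) = cylval c l0 v n := by
  classical
  induction n with
  | zero =>
    have : ccyl v 0 = {ω : ℕ → α | qmk (ω 0) = v 0} := by
      ext ω
      simp only [ccyl, Set.mem_setOf_eq]
      constructor
      · intro h; exact h 0 le_rfl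
      · intro h k hk; interval_cases k; exact h
    rw [this, mu_fiber0 c l0 (v 0)]
    simp [cylval]
  | succ n ih =>
    rw [mu_ccyl_eq_pcyl, ]
    have hm := c.markov l0 (fun k => rep l0 (v k)) n
    have hpc : ∀ m : ℕ, ({ω : ℕ → α | ∀ i ≤ m, ω i = rep l0 (v i)}) =
        pcyl (fun k => rep l0 (v k)) m := fun m => rfl
    rw [hpc, hpc] at hm
    rw [hm, ← mu_ccyl_eq_pcyl, ih]
    unfold cylval
    rw [Finset.prod_range_succ, mul_assoc]

/-- box event -/
def Ebox (F : ℕ → Set α) (n : ℕ) : Set (ℕ → α) := {ω | ∀ k ≤ n, ω k ∈ F k}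

def Vset (l0 : α) (n : ℕ) : Set (ℕ → Qt α) := {v | ∀ k, n < k → v k = qmk l0}

def adm (F : ℕ → Set α) (n : ℕ) (v : ℕ → Qt α) : Prop :=
  ∀ k ≤ n, ∀ x : α, qmk x = v k → x ∈ F k

omit [Countable α] in
lemma mem_of_mrel_mem {F : Set α} (hF : MeasurableSet F) {x y : α}
    (h : qmk x = qmk y) (hx : x ∈ F) : y ∈ F :=
  ((qmk_eq_iff.mp h) F hF).mp hx

lemma measurableSet_Ebox {F : ℕ → Set α} (hF : ∀ k, MeasurableSet (F k)) (n : ℕ) :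
    MeasurableSet (Ebox F n) := by
  have : Ebox F n = ⋂ k ∈ Finset.range (n+1), (fun ω : ℕ → α => ω k) ⁻¹' (F k) := by
    ext ω
    simp only [Ebox, Set.mem_setOf_eq, Set.mem_iInter, Set.mem_preimage, Finset.mem_range,
      Nat.lt_succ_iff]
  rw [this]
  exact MeasurableSet.biInter (Finset.range (n+1)).countable_toSet
    (fun k _ => (measurable_pi_apply k) (hF k))

instance countable_Vset (l0 : α) (n : ℕ) : Countable ↥(Vset (α := α) l0 n) := by
  haveI : Countable (Qt α) := Quotient.countable
  have hinj : Function.Injective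
      (fun v : ↥(Vset (α := α) l0 n) => (fun k : Fin (n+1) => v.1 k.1)) := by
    intro v w h
    apply Subtype.ext
    funext k
    by_cases hk : k ≤ n
    · have := congrFun h ⟨k, Nat.lt_succ_of_le hk⟩
      exact this
    · rw [v.2 k (not_le.mp hk), w.2 k (not_le.mp hk)]
  exact hinj.countable

lemma mu_box [hp : IsProbabilityMeasure (c.law l0)] {F : ℕ → Set α}
    (hF : ∀ k, MeasurableSet (F k)) (n : ℕ) :
    c.law l0 (Ebox F n)
      = ∑' v : ↥(Vset (α := α) l0 n), if adm F n v.1 then cylval c l0 v.1 n else 0 := by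
  classical
  have hcover : Ebox F n = ⋃ v : ↥(Vset (α := α) l0 n), (ccyl v.1 n ∩ Ebox F n) := by
    ext ω
    constructor
    · intro hω
      refine Set.mem_iUnion.mpr ⟨⟨fun k => if k ≤ n then qmk (ω k) else qmk l0, ?_⟩, ?_, hω⟩
      · intro k hk; simp [Nat.not_le.mpr hk]
      · intro k hk; simp [hk, ccyl]
    · rintro hω
      obtain ⟨v, hv⟩ := Set.mem_iUnion.mp hω
      exact hv.2
  have hdisj : Pairwise (Function.onFun Disjoint
      (fun v : ↥(Vset (α := α) l0 n) => ccyl v.1 n ∩ Ebox F n)) := by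
    intro v w hvw
    rw [Function.onFun, Set.disjoint_left]
    rintro ω ⟨hω1, _⟩ ⟨hω2, _⟩
    apply hvw
    apply Subtype.ext
    funext k
    by_cases hk : k ≤ n
    · rw [← hω1 k hk, ← hω2 k hk]
    · rw [v.2 k (not_le.mp hk), w.2 k (not_le.mp hk)]
  have hmeas : ∀ v : ↥(Vset (α := α) l0 n), MeasurableSet (ccyl v.1 n ∩ Ebox F n) :=
    fun v => (measurableSet_ccyl v.1 n).inter (measurableSet_Ebox hF n)
  rw [hcover, measure_iUnion hdisj hmeas]
  congr 1
  funext v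
  have hkey : ccyl v.1 n ∩ Ebox F n = if adm F n v.1 then ccyl v.1 n else ∅ := by
    split
    · rename_i hadm
      rw [Set.inter_eq_left]
      intro ω hω k hk
      exact hadm k hk (ω k) (hω k hk)
    · rename_i hadm
      rw [Set.eq_empty_iff_forall_notMem]
      rintro ω ⟨hω1, hω2⟩
      apply hadm
      intro k hk x hx
      exact mem_of_mrel_mem (hF k) ((hω1 k hk).trans hx.symm) (hω2 k hk)
  rw [hkey]
  split
  · exact mu_ccyl c l0 v.1 n
  · simp

lemma splice [hp : IsProbabilityMeasure (c.law l0)] {K : ℕ → Set α}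
    (hK : ∀ k, MeasurableSet (K k)) (n m : ℕ) (hKn : K n = {x | qmk x = qmk l0}) :
    c.law l0 (Ebox K (n+m))
      = c.law l0 (Ebox K n)
        * c.law l0 (Ebox (fun j => if j = 0 then Set.univ else K (n+j)) m) := by
  classical
  set Ksh : ℕ → Set α := fun j => if j = 0 then Set.univ else K (n+j) with hKsh
  have hKsh_meas : ∀ j, MeasurableSet (Ksh j) := by
    intro j
    by_cases hj : j = 0 <;> simp [hKsh, hj, hK]
  set fA : (ℕ → Qt α) → ℝ≥0∞ :=
    Set.indicator (Vset l0 n) (fun v => if adm K n v then cylval c l0 v n else 0) with hfA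
  set fB : (ℕ → Qt α) → ℝ≥0∞ :=
    Set.indicator (Vset l0 m) (fun v => if adm Ksh m v then cylval c l0 v m else 0) with hfB
  set fG : (ℕ → Qt α) → ℝ≥0∞ :=
    Set.indicator (Vset l0 (n+m))
      (fun v => if adm K (n+m) v then cylval c l0 v (n+m) else 0) with hfG
  have hmuG : c.law l0 (Ebox K (n+m)) = ∑' x, fG x := by
    rw [mu_box c l0 hK (n+m), hfG]
    exact tsum_subtype (Vset l0 (n+m)) (fun v => if adm K (n+m) v then cylval c l0 v (n+m) else 0)
  have hmuA : c.law l0 (Ebox K n) = ∑' x, fA x := by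
    rw [mu_box c l0 hK n, hfA]
    exact tsum_subtype (Vset l0 n) (fun v => if adm K n v then cylval c l0 v n else 0)
  have hmuB : c.law l0 (Ebox Ksh m) = ∑' x, fB x := by
    rw [mu_box c l0 hKsh_meas m, hfB]
    exact tsum_subtype (Vset l0 m) (fun v => if adm Ksh m v then cylval c l0 v m else 0)
  rw [hmuG, hmuA, hmuB]
  -- facts about supports
  have hsuppA : ∀ v, fA v ≠ 0 → v ∈ Vset (α := α) l0 n ∧ adm K n v ∧ cylval c l0 v n ≠ 0 := by
    intro v hv
    rw [hfA] at hv
    by_cases hVv : v ∈ Vset (α := α) l0 n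
    · rw [Set.indicator_of_mem hVv] at hv
      by_cases hadm : adm K n v
      · rw [if_pos hadm] at hv; exact ⟨hVv, hadm, hv⟩
      · rw [if_neg hadm] at hv; exact absurd rfl hv
    · rw [Set.indicator_of_notMem hVv] at hv; exact absurd rfl hv
  have hsuppB : ∀ w, fB w ≠ 0 → w ∈ Vset (α := α) l0 m ∧ adm Ksh m w ∧ cylval c l0 w m ≠ 0 := by
    intro w hw
    rw [hfB] at hw
    by_cases hVw : w ∈ Vset (α := α) l0 m
    · rw [Set.indicator_of_mem hVw] at hw
      by_cases hadm : adm Ksh m w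
      · rw [if_pos hadm] at hw; exact ⟨hVw, hadm, hw⟩
      · rw [if_neg hadm] at hw; exact absurd rfl hw
    · rw [Set.indicator_of_notMem hVw] at hw; exact absurd rfl hw
  have hsuppG : ∀ x, fG x ≠ 0 →
      x ∈ Vset (α := α) l0 (n+m) ∧ adm K (n+m) x ∧ cylval c l0 x (n+m) ≠ 0 := by
    intro x hx
    rw [hfG] at hx
    by_cases hVx : x ∈ Vset (α := α) l0 (n+m)
    · rw [Set.indicator_of_mem hVx] at hx
      by_cases hadm : adm K (n+m) x
      · rw [if_pos hadm] at hx; exact ⟨hVx, hadm, hx⟩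
      · rw [if_neg hadm] at hx; exact absurd rfl hx
    · rw [Set.indicator_of_notMem hVx] at hx; exact absurd rfl hx
  have hval0 : ∀ (v : ℕ → Qt α) (N : ℕ), cylval c l0 v N ≠ 0 → v 0 = qmk l0 := by
    intro v N hv
    by_contra h0
    rw [cylval, if_neg h0, zero_mul] at hv
    exact hv rfl
  have hadm_l0 : ∀ (v : ℕ → Qt α) (N : ℕ), n ≤ N → adm K N v → v n = qmk l0 := by
    intro v N hnN hadm
    have := hadm n hnN (rep l0 (v n)) (qmk_rep l0 (v n))
    rw [hKn] at this
    rw [← this, qmk_rep]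
  -- the right-hand side as a sum over pairs
  have hRHS : (∑' x, fA x) * (∑' x, fB x)
      = ∑' p : (ℕ → Qt α) × (ℕ → Qt α), fA p.1 * fB p.2 := by
    rw [ENNReal.tsum_prod']
    rw [← ENNReal.tsum_mul_right]
    congr 1
    funext v
    rw [← ENNReal.tsum_mul_left]
  rw [hRHS]
  -- the bijection
  set g : (ℕ → Qt α) × (ℕ → Qt α) → ℝ≥0∞ := fun p => fA p.1 * fB p.2 with hg
  set spl : (ℕ → Qt α) × (ℕ → Qt α) → (ℕ → Qt α) :=
    fun p k => if k ≤ n then p.1 k else p.2 (k - n) with hspl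
  refine tsum_eq_tsum_of_ne_zero_bij (fun p => spl p.1) ?_ ?_ ?_
  · -- injective
    rintro ⟨⟨v, w⟩, hp⟩ ⟨⟨v', w'⟩, hp'⟩ heq
    simp only [hg, Function.mem_support] at hp hp'
    have hA := hsuppA v (fun h => hp (by simp [h]))
    have hA' := hsuppA v' (fun h => hp' (by simp [h]))
    have hB := hsuppB w (fun h => hp (by simp [h]))
    have hB' := hsuppB w' (fun h => hp' (by simp [h]))
    have hw0 : w 0 = qmk l0 := hval0 w m hB.2.2
    have hw0' : w' 0 = qmk l0 := hval0 w' m hB'.2.2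
    have heqf : ∀ k, spl (v, w) k = spl (v', w') k := fun k => congrFun heq k
    apply Subtype.ext
    simp only [Prod.mk.injEq]
    constructor
    · funext k
      by_cases hk : k ≤ n
      · have := heqf k; simpa [hspl, hk] using this
      · rw [hA.1 k (not_le.mp hk), hA'.1 k (not_le.mp hk)]
    · funext j
      rcases Nat.eq_zero_or_pos j with hj | hj
      · rw [hj, hw0, hw0']
      · have := heqf (n + j)
        have hnj : ¬ (n + j ≤ n) := by omega
        simp only [hspl, hnj, if_false] at this
        simpa [Nat.add_sub_cancel_left] using this
  · -- support of fG covered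
    intro x hx
    rw [Function.mem_support] at hx
    obtain ⟨hVx, hadmx, hcylx⟩ := hsuppG x hx
    have hxn : x n = qmk l0 := hadm_l0 x (n+m) (Nat.le_add_right n m) hadmx
    have hx0 : x 0 = qmk l0 := hval0 x (n+m) hcylx
    set v : ℕ → Qt α := fun k => if k ≤ n then x k else qmk l0 with hv
    set w : ℕ → Qt α := fun j => if j = 0 then qmk l0 else x (n + j) with hw
    -- cylval x decomposes
    have hprod : cylval c l0 x (n+m) = cylval c l0 v n * cylval c l0 w m := by
      rw [cylval, cylval, cylval]
      have hv0 : v 0 = x 0 := by simp [hv]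
      have hw0 : w 0 = qmk l0 := by simp [hw]
      rw [if_pos hx0, if_pos (hv0.trans hx0), if_pos hw0]
      rw [Finset.prod_range_add]
      have h1 : ∀ k ∈ Finset.range n,
          ENNReal.ofReal (c.P (rep l0 (x k)) (rep l0 (x (k+1))))
            = ENNReal.ofReal (c.P (rep l0 (v k)) (rep l0 (v (k+1)))) := by
        intro k hk
        rw [Finset.mem_range] at hk
        have h1 : v k = x k := by simp [hv, Nat.le_of_lt hk]
        have h2 : v (k+1) = x (k+1) := by simp [hv, Nat.succ_le_of_lt hk]
        rw [h1, h2]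
      have h2 : ∀ j ∈ Finset.range m,
          ENNReal.ofReal (c.P (rep l0 (x (n+j))) (rep l0 (x (n+j+1))))
            = ENNReal.ofReal (c.P (rep l0 (w j)) (rep l0 (w (j+1)))) := by
        intro j hj
        rw [Finset.mem_range] at hj
        rcases Nat.eq_zero_or_pos j with hj0 | hj0
        · subst hj0
          have hwj : w 0 = qmk l0 := by simp [hw]
          have hwj1 : w 1 = x (n+1) := by simp [hw]
          simp only [Nat.add_zero]
          rw [hwj, hwj1, hxn]
        · have hwj : w j = x (n+j) := by simp [hw, Nat.pos_iff_ne_zero.mp hj0]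
          have hwj1 : w (j+1) = x (n+j+1) := by
            simp only [hw]
            rw [if_neg (by omega)]
            congr 1
          rw [hwj, hwj1]
      rw [Finset.prod_congr rfl h1, Finset.prod_congr rfl h2]
      ring
    refine ⟨⟨(v, w), ?_⟩, ?_⟩
    · rw [Function.mem_support]
      show fA v * fB w ≠ 0
      have hfAv : fA v ≠ 0 := by
        have hVv : v ∈ Vset (α := α) l0 n := by
          intro k hk; simp [hv, Nat.not_le.mpr hk]
        have hadmv : adm K n v := by
          intro k hk y hy
          have : v k = x k := by simp [hv, hk]
          exact hadmx k (Nat.le_add_right_of_le hk) y (by rw [hy, this])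
        rw [hfA, Set.indicator_of_mem hVv, if_pos hadmv]
        intro h0
        rw [hprod, h0, zero_mul] at hcylx
        exact hcylx rfl
      have hfBw : fB w ≠ 0 := by
        have hVw : w ∈ Vset (α := α) l0 m := by
          intro j hj
          simp only [hw]
          rw [if_neg (by omega)]
          exact hVx (n + j) (by omega)
        have hadmw : adm Ksh m w := by
          intro j hj y hy
          rcases Nat.eq_zero_or_pos j with hj0 | hj0
          · subst hj0; simp [hKsh]
          · have hne : j ≠ 0 := Nat.pos_iff_ne_zero.mp hj0
            have : w j = x (n+j) := by simp [hw, hne]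
            simp only [hKsh, if_neg hne]
            exact hadmx (n+j) (by omega) y (by rw [hy, this])
        rw [hfB, Set.indicator_of_mem hVw, if_pos hadmw]
        intro h0
        rw [hprod, h0, mul_zero] at hcylx
        exact hcylx rfl
      exact mul_ne_zero hfAv hfBw
    · -- spl (v, w) = x
      funext k
      simp only [hspl]
      by_cases hk : k ≤ n
      · simp [hv, hk]
      · rw [if_neg hk]
        simp only [hw]
        rw [if_neg (by omega)]
        congr 1
        omega
  · -- value agreement
    rintro ⟨⟨v, w⟩, hp⟩
    simp only [hg, Function.mem_support] at hp
    have hA := hsuppA v (fun h => hp (by simp [h]))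
    have hB := hsuppB w (fun h => hp (by simp [h]))
    obtain ⟨hVv, hadmv, hcylv⟩ := hA
    obtain ⟨hVw, hadmw, hcylw⟩ := hB
    have hv0 : v 0 = qmk l0 := hval0 v n hcylv
    have hw0 : w 0 = qmk l0 := hval0 w m hcylw
    have hvn : v n = qmk l0 := hadm_l0 v n le_rfl hadmv
    set x : ℕ → Qt α := spl (v, w) with hx
    have hxk_le : ∀ k, k ≤ n → x k = v k := by
      intro k hk; simp [hx, hspl, hk]
    have hxk_gt : ∀ j, 1 ≤ j → x (n + j) = w j := by
      intro j hj
      simp only [hx, hspl]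
      rw [if_neg (by omega)]
      congr 1
      omega
    have hVx : x ∈ Vset (α := α) l0 (n+m) := by
      intro k hk
      have h1 : ¬ (k ≤ n) := by omega
      simp only [hx, hspl, h1, if_false]
      exact hVw (k - n) (by omega)
    have hadmx : adm K (n+m) x := by
      intro k hk y hy
      by_cases h1 : k ≤ n
      · rw [hxk_le k h1] at hy
        exact hadmv k h1 y hy
      · have h2 : k = n + (k - n) := by omega
        have h3 : 1 ≤ k - n := by omega
        rw [h2] at hy ⊢
        rw [hxk_gt (k - n) h3] at hy
        have := hadmw (k - n) (by omega) y hy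
        simpa [hKsh, Nat.pos_iff_ne_zero.mp h3] using this
    have hprod : cylval c l0 x (n+m) = cylval c l0 v n * cylval c l0 w m := by
      rw [cylval, cylval, cylval]
      have hx0 : x 0 = v 0 := hxk_le 0 (Nat.zero_le n)
      rw [if_pos (hx0.trans hv0), if_pos hv0, if_pos hw0]
      rw [Finset.prod_range_add]
      have h1 : ∀ k ∈ Finset.range n,
          ENNReal.ofReal (c.P (rep l0 (x k)) (rep l0 (x (k+1))))
            = ENNReal.ofReal (c.P (rep l0 (v k)) (rep l0 (v (k+1)))) := by
        intro k hk
        rw [Finset.mem_range] at hk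
        rw [hxk_le k (Nat.le_of_lt hk), hxk_le (k+1) (Nat.succ_le_of_lt hk)]
      have h2 : ∀ j ∈ Finset.range m,
          ENNReal.ofReal (c.P (rep l0 (x (n+j))) (rep l0 (x (n+j+1))))
            = ENNReal.ofReal (c.P (rep l0 (w j)) (rep l0 (w (j+1)))) := by
        intro j hj
        rcases Nat.eq_zero_or_pos j with hj0 | hj0
        · subst hj0
          have e1 : x (n + 0) = v n := by rw [Nat.add_zero]; exact hxk_le n le_rfl
          have e2 : x (n + 0 + 1) = w 1 := hxk_gt 1 le_rfl
          rw [e1, e2, hvn, hw0]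
        · have e1 : x (n + j) = w j := hxk_gt j hj0
          have e2 : x (n + j + 1) = w (j+1) := hxk_gt (j+1) (by omega)
          rw [e1, e2]
      rw [Finset.prod_congr rfl h1, Finset.prod_congr rfl h2]
      ring
    rw [hfG, Set.indicator_of_mem hVx, if_pos hadmx, hprod]
    show cylval c l0 v n * cylval c l0 w m = fA v * fB w
    rw [hfA, Set.indicator_of_mem hVv, if_pos hadmv]
    rw [hfB, Set.indicator_of_mem hVw, if_pos hadmw]

end chain

section hit

lemma natInf_cases (P : ℕ → Prop) :
    ((∀ k, ¬ P k) ∧ (⨅ (k : ℕ) (_ : P k), (k:ℝ≥0∞)) = ⊤)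
    ∨ ∃ k, P k ∧ (⨅ (k : ℕ) (_ : P k), (k:ℝ≥0∞)) = k ∧ ∀ j, P j → k ≤ j := by
  classical
  by_cases h : ∃ k, P k
  · right
    refine ⟨Nat.find h, Nat.find_spec h, ?_, fun j hj => Nat.find_min' h hj⟩
    refine le_antisymm (iInf₂_le (Nat.find h) (Nat.find_spec h)) ?_
    refine le_iInf fun k => le_iInf fun hk => ?_
    exact_mod_cast Nat.cast_le.mpr (Nat.find_min' h hk)
  · left
    push_neg at h
    refine ⟨h, ?_⟩
    rw [iInf_eq_top]
    intro k
    rw [iInf_eq_top]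
    intro hk
    exact absurd hk (h k)

lemma natInf_le_iff {P : ℕ → Prop} {w : ℝ≥0∞} (hw : w ≠ ⊤) :
    (⨅ (k : ℕ) (_ : P k), (k:ℝ≥0∞)) ≤ w ↔ ∃ k, P k ∧ (k:ℝ≥0∞) ≤ w := by
  constructor
  · intro h
    rcases natInf_cases P with ⟨_, htop⟩ | ⟨k, hk, heq, _⟩
    · rw [htop] at h; exact absurd (top_le_iff.mp h) hw
    · exact ⟨k, hk, heq ▸ h⟩
  · rintro ⟨k, hk, hkw⟩
    exact le_trans (iInf₂_le k hk) hkw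

lemma lt_natInf_iff {P : ℕ → Prop} {w : ℝ≥0∞} (hw : w ≠ ⊤) :
    w < (⨅ (k : ℕ) (_ : P k), (k:ℝ≥0∞)) ↔ ∀ k, P k → w < (k:ℝ≥0∞) := by
  constructor
  · intro h k hk
    exact lt_of_lt_of_le h (iInf₂_le k hk)
  · intro h
    rcases natInf_cases P with ⟨_, htop⟩ | ⟨k, hk, heq, _⟩
    · rw [htop]; exact lt_of_le_of_ne le_top hw
    · rw [heq]; exact h k hk

lemma hitTimePos_eq {S : Type*} (A : Set S) (ω : ℕ → S) :
    hitTimePos A ω = ⨅ (k : ℕ) (_ : 0 < k ∧ ω k ∈ A), (k:ℝ≥0∞) := by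
  unfold hitTimePos
  refine iInf_congr fun k => ?_
  rw [iInf_and]

lemma hitTimeAfter_eq {S : Type*} (A : Set S) (r : ℝ≥0∞) (ω : ℕ → S) :
    hitTimeAfter A r ω = ⨅ (k : ℕ) (_ : r ≤ (k:ℝ≥0∞) ∧ ω k ∈ A), (k:ℝ≥0∞) := by
  unfold hitTimeAfter
  refine iInf_congr fun k => ?_
  rw [iInf_and]

lemma one_le_hitTimePos {S : Type*} (A : Set S) (ω : ℕ → S) : 1 ≤ hitTimePos A ω := by
  unfold hitTimePos
  refine le_iInf fun k => le_iInf fun hk => le_iInf fun _ => ?_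
  exact_mod_cast Nat.one_le_cast.mpr hk

end hit

section core

variable {α : Type*} [MeasurableSpace α] [Countable α]

def Lset (l0 : α) : Set α := {x | qmk x = qmk l0}

def Hker (Hs : Set α) : Set α := {x | ∀ y, qmk y = qmk x → y ∈ Hs}

lemma measurableSet_Lset (l0 : α) : MeasurableSet (Lset l0) := measurableSet_fiber (qmk l0)

lemma l0_mem_Lset (l0 : α) : l0 ∈ Lset l0 := rfl

lemma Hker_subset (Hs : Set α) : Hker Hs ⊆ Hs := fun x hx => hx x rfl

lemma Hker_saturated {Hs : Set α} {x x' : α} (hx : x ∈ Hker Hs) (h : qmk x = qmk x') :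
    x' ∈ Hker Hs := fun y hy => hx y (hy.trans h.symm)

lemma measurableSet_Hker (Hs : Set α) : MeasurableSet (Hker Hs) := by
  have : Hker Hs = ⋃ x : ↥(Hker Hs), {y | qmk y = qmk x.1} := by
    ext z
    constructor
    · intro hz; exact Set.mem_iUnion.mpr ⟨⟨z, hz⟩, rfl⟩
    · intro hz
      obtain ⟨x, hx⟩ := Set.mem_iUnion.mp hz
      exact Hker_saturated x.2 (hx : qmk z = qmk x.1).symm
  rw [this]
  exact MeasurableSet.iUnion fun x => measurableSet_fiber (qmk x.1)

lemma not_mem_Hker_of_not_mem {Hs : Set α} {x : α} (h : x ∉ Hs) : x ∉ Hker Hs :=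
  fun hx => h (Hker_subset Hs hx)

lemma Lset_disjoint_Hker {l0 : α} {Hs : Set α} (h : l0 ∉ Hs) {x : α}
    (hx : x ∈ Lset l0) : x ∉ Hker Hs := by
  intro hxk
  exact h (Hker_subset Hs (Hker_saturated hxk hx))

open scoped Classical in
def pick (Hs : Set α) (x : α) : α :=
  if h : ∃ y, qmk y = qmk x ∧ y ∉ Hs then h.choose else x

lemma qmk_pick (Hs : Set α) (x : α) : qmk (pick Hs x) = qmk x := by
  unfold pick
  split
  · rename_i h; exact h.choose_spec.1
  · rfl

lemma pick_not_mem {Hs : Set α} {x : α} (hx : x ∉ Hker Hs) : pick Hs x ∉ Hs := by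
  have h : ∃ y, qmk y = qmk x ∧ y ∉ Hs := by
    by_contra hc
    push_neg at hc
    exact hx fun y hy => hc y hy
  unfold pick
  rw [dif_pos h]
  exact h.choose_spec.2

section events

variable (l0 : α) (Hs : Set α) (W1 : ℝ≥0∞)

def preF (r : ℕ) : ℕ → Set α := fun k =>
  if k = r then Lset l0
  else (if 1 ≤ k then (Hker Hs)ᶜ else Set.univ) ∩
    (if W1 ≤ (k:ℝ≥0∞) then (Lset l0)ᶜ else Set.univ)

def PreE (r : ℕ) : Set (ℕ → α) := Ebox (preF l0 Hs W1 r) r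

def FreshE (w : ℝ≥0∞) : Set (ℕ → α) :=
  {ω | ∀ j : ℕ, 1 ≤ j → (j:ℝ≥0∞) ≤ w → ω j ∉ Hker Hs}

def PieceE (r : ℕ) (w : ℝ≥0∞) : Set (ℕ → α) :=
  PreE l0 Hs W1 r ∩ {ω | ∀ j : ℕ, 1 ≤ j → (j:ℝ≥0∞) ≤ w → ω (r + j) ∉ Hker Hs}

lemma measurableSet_preF (r k : ℕ) : MeasurableSet (preF l0 Hs W1 r k) := by
  unfold preF
  split
  · exact measurableSet_Lset l0
  · refine MeasurableSet.inter ?_ ?_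
    · split
      · exact (measurableSet_Hker Hs).compl
      · exact MeasurableSet.univ
    · split
      · exact (measurableSet_Lset l0).compl
      · exact MeasurableSet.univ

lemma measurableSet_PreE (r : ℕ) : MeasurableSet (PreE l0 Hs W1 r) :=
  measurableSet_Ebox (measurableSet_preF l0 Hs W1 r) r

lemma measurableSet_FreshE (w : ℝ≥0∞) : MeasurableSet (FreshE Hs w) := by
  have : FreshE Hs w = ⋂ j : ℕ,
      (if 1 ≤ j ∧ (j:ℝ≥0∞) ≤ w then (fun ω : ℕ → α => ω j) ⁻¹' (Hker Hs)ᶜ else Set.univ) := by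
    ext ω
    simp only [FreshE, Set.mem_setOf_eq, Set.mem_iInter]
    constructor
    · intro h j
      split
      · rename_i hj; exact h j hj.1 hj.2
      · trivial
    · intro h j hj1 hjw
      have := h j
      rw [if_pos ⟨hj1, hjw⟩] at this
      exact this
  rw [this]
  refine MeasurableSet.iInter fun j => ?_
  split
  · exact (measurable_pi_apply j) (measurableSet_Hker Hs).compl
  · exact MeasurableSet.univ

lemma measurableSet_PieceE (r : ℕ) (w : ℝ≥0∞) : MeasurableSet (PieceE l0 Hs W1 r w) := by
  refine (measurableSet_PreE l0 Hs W1 r).inter ?_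
  have : {ω : ℕ → α | ∀ j : ℕ, 1 ≤ j → (j:ℝ≥0∞) ≤ w → ω (r + j) ∉ Hker Hs} = ⋂ j : ℕ,
      (if 1 ≤ j ∧ (j:ℝ≥0∞) ≤ w then (fun ω : ℕ → α => ω (r + j)) ⁻¹' (Hker Hs)ᶜ
        else Set.univ) := by
    ext ω
    simp only [Set.mem_setOf_eq, Set.mem_iInter]
    constructor
    · intro h j
      split
      · rename_i hj; exact h j hj.1 hj.2
      · trivial
    · intro h j hj1 hjw
      have := h j
      rw [if_pos ⟨hj1, hjw⟩] at this
      exact this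
  rw [this]
  refine MeasurableSet.iInter fun j => ?_
  split
  · exact (measurable_pi_apply (r + j)) (measurableSet_Hker Hs).compl
  · exact MeasurableSet.univ

lemma mem_PreE_iff {r : ℕ} {ω : ℕ → α} :
    ω ∈ PreE l0 Hs W1 r ↔
      (∀ k : ℕ, 1 ≤ k → k < r → ω k ∉ Hker Hs) ∧
        (∀ k : ℕ, W1 ≤ (k:ℝ≥0∞) → k < r → ω k ∉ Lset l0) ∧ ω r ∈ Lset l0 := by
  unfold PreE Ebox preF
  simp only [Set.mem_setOf_eq]
  constructor
  · intro h
    refine ⟨?_, ?_, ?_⟩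
    · intro k hk1 hkr
      have := h k (le_of_lt hkr)
      rw [if_neg (Nat.ne_of_lt hkr)] at this
      have := this.1
      rw [if_pos hk1] at this
      exact this
    · intro k hkW hkr
      have := h k (le_of_lt hkr)
      rw [if_neg (Nat.ne_of_lt hkr)] at this
      have := this.2
      rw [if_pos hkW] at this
      exact this
    · have := h r le_rfl
      rw [if_pos rfl] at this
      exact this
  · rintro ⟨h1, h2, h3⟩ k hk
    by_cases hkr : k = r
    · rw [if_pos hkr, hkr]; exact h3
    · rw [if_neg hkr]
      have hklt : k < r := lt_of_le_of_ne hk hkr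
      constructor
      · split
        · rename_i hk1; exact h1 k hk1 hklt
        · trivial
      · split
        · rename_i hkW; exact h2 k hkW hklt
        · trivial

lemma natcast_le_iff {w : ℝ≥0∞} (hw : w ≠ ⊤) (k : ℕ) :
    (k:ℝ≥0∞) ≤ w ↔ k ≤ ⌊w.toReal⌋₊ := by
  rw [Nat.le_floor_iff ENNReal.toReal_nonneg]
  rw [← ENNReal.ofReal_le_iff_le_toReal hw]
  rw [ENNReal.ofReal_natCast]

lemma Ebox_congr {F G : ℕ → Set α} {n : ℕ} (h : ∀ k ≤ n, F k = G k) :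
    Ebox F n = Ebox G n := by
  unfold Ebox
  ext ω
  constructor
  · intro hω k hk; rw [← h k hk]; exact hω k hk
  · intro hω k hk; rw [h k hk]; exact hω k hk

lemma mu_PieceE (c : MC α) [IsProbabilityMeasure (c.law l0)] (hl0H : l0 ∉ Hs)
    (r : ℕ) (w : ℝ≥0∞) (hw : w ≠ ⊤) :
    c.law l0 (PieceE l0 Hs W1 r w)
      = c.law l0 (PreE l0 Hs W1 r) * c.law l0 (FreshE Hs w) := by
  classical
  set mw := ⌊w.toReal⌋₊ with hmw
  set pieceF : ℕ → Set α := fun k =>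
    if k ≤ r then preF l0 Hs W1 r k
    else (if ((k - r : ℕ):ℝ≥0∞) ≤ w then (Hker Hs)ᶜ else Set.univ) with hpieceF
  have hmeas : ∀ k, MeasurableSet (pieceF k) := by
    intro k
    simp only [hpieceF]
    split
    · exact measurableSet_preF l0 Hs W1 r k
    · split
      · exact (measurableSet_Hker Hs).compl
      · exact MeasurableSet.univ
  have h1 : PieceE l0 Hs W1 r w = Ebox pieceF (r + mw) := by
    ext ω
    unfold PieceE PreE Ebox
    simp only [Set.mem_inter_iff, Set.mem_setOf_eq]
    constructor
    · rintro ⟨hpre, hfresh⟩ k hk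
      simp only [hpieceF]
      by_cases hkr : k ≤ r
      · rw [if_pos hkr]; exact hpre k hkr
      · rw [if_neg hkr]
        split
        · rename_i hkw
          have hj1 : 1 ≤ k - r := by omega
          have := hfresh (k - r) hj1 hkw
          have hrk : r + (k - r) = k := by omega
          rw [hrk] at this
          exact this
        · trivial
    · intro h
      constructor
      · intro k hk
        have := h k (le_trans hk (Nat.le_add_right r mw))
        simp only [hpieceF] at this
        rw [if_pos hk] at this
        exact this
      · intro j hj1 hjw
        have hjm : j ≤ mw := (natcast_le_iff hw j).mp hjw
        have := h (r + j) (by omega)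
        simp only [hpieceF] at this
        rw [if_neg (by omega)] at this
        rw [if_pos (by rw [Nat.add_sub_cancel_left]; exact hjw)] at this
        exact this
  have h2 : Ebox pieceF r = PreE l0 Hs W1 r := by
    refine Ebox_congr fun k hk => ?_
    simp only [hpieceF]
    rw [if_pos hk]
  have h3 : Ebox (fun j => if j = 0 then Set.univ else pieceF (r + j)) mw = FreshE Hs w := by
    ext ω
    unfold Ebox FreshE
    simp only [Set.mem_setOf_eq]
    constructor
    · intro h j hj1 hjw
      have hjm : j ≤ mw := (natcast_le_iff hw j).mp hjw
      have := h j hjm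
      rw [if_neg (by omega)] at this
      simp only [hpieceF] at this
      rw [if_neg (by omega)] at this
      rw [if_pos (by rw [Nat.add_sub_cancel_left]; exact hjw)] at this
      exact this
    · intro h j hjm
      by_cases hj0 : j = 0
      · rw [if_pos hj0]; trivial
      · rw [if_neg hj0]
        simp only [hpieceF]
        rw [if_neg (by omega)]
        split
        · rename_i hjw
          rw [Nat.add_sub_cancel_left] at hjw
          exact h j (by omega) hjw
        · trivial
  have hKn : pieceF r = {x | qmk x = qmk l0} := by
    simp only [hpieceF]
    rw [if_pos le_rfl]
    unfold preF
    rw [if_pos rfl]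
    rfl
  rw [h1, splice c l0 hmeas r mw hKn, h2, h3]

end events

end core

end MCaux

/-- For irreducible positive recurrent Markov chains on countable
state spaces, for all `s, t > 0` and every `a`:
`P(S^{(a)} > s+t, S̃^{(a)}_s ≤ s+β_a) ≥ P(S^{(a)} > s+β_a, S̃^{(a)}_s ≤ s+β_a) · P(S^{(a)} > t)`
and
`P(S^{(a)} > s+t, S̃^{(a)}_s ≤ s+β_a) ≤ P(S^{(a)} > s) · P(S^{(a)} > t-β_a)`. -/
theorem factorization_inequalities (S : ℕ → Type*) [∀ a, MeasurableSpace (S a)]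
    [∀ a, Countable (S a)] (X : ∀ a, MC (S a))
    (hirr : ∀ a, (X a).Irreducible) (hrec : ∀ a, (X a).PositiveRecurrent)
    (ℓ : ∀ a, S a) (H : ∀ a, Set (S a)) :
    ∀ (a : ℕ) (s t : ℝ), 0 < s → 0 < t →
      ((X a).law (ℓ a) ({ω | ENNReal.ofReal (s + t) < Snorm S X ℓ H a ω}
            ∩ {ω | Sreturn S X ℓ H s a ω ≤ ENNReal.ofReal s + betaA S X ℓ H a})
          ≥ (X a).law (ℓ a) ({ω | ENNReal.ofReal s + betaA S X ℓ H a < Snorm S X ℓ H a ω}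
              ∩ {ω | Sreturn S X ℓ H s a ω ≤ ENNReal.ofReal s + betaA S X ℓ H a})
            * (X a).law (ℓ a) {ω | ENNReal.ofReal t < Snorm S X ℓ H a ω}) ∧
      ((X a).law (ℓ a) ({ω | ENNReal.ofReal (s + t) < Snorm S X ℓ H a ω}
            ∩ {ω | Sreturn S X ℓ H s a ω ≤ ENNReal.ofReal s + betaA S X ℓ H a})
          ≤ (X a).law (ℓ a) {ω | ENNReal.ofReal s < Snorm S X ℓ H a ω}
            * (X a).law (ℓ a)
              {ω | ENNReal.ofReal t - betaA S X ℓ H a < Snorm S X ℓ H a ω}) := by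
  classical
  intro a s t hs ht
  haveI : IsProbabilityMeasure ((X a).law (ℓ a)) := (X a).prob (ℓ a)
  set E : ℝ≥0∞ := meanHitHigh S X ℓ H a with hE
  set β : ℝ≥0∞ := betaA S X ℓ H a with hβ
  set T : (ℕ → S a) → ℝ≥0∞ := fun ω => hitTimePos (H a) ω with hT
  set Tr : (ℕ → S a) → ℝ≥0∞ := fun ω => hitTimeAfter {ℓ a} (ENNReal.ofReal s * E) ω with hTr
  have hSnorm : ∀ ω, Snorm S X ℓ H a ω = T ω / E := fun ω => rfl
  have hSret : ∀ ω, Sreturn S X ℓ H s a ω = Tr ω / E := fun ω => rfl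
  have hT1 : ∀ ω, 1 ≤ T ω := fun ω => MCaux.one_le_hitTimePos _ _
  have hE1 : (1:ℝ≥0∞) ≤ E := by
    rw [hE]
    unfold meanHitHigh
    calc (1:ℝ≥0∞) = ∫⁻ _, 1 ∂((X a).law (ℓ a)) := by
          rw [lintegral_one, measure_univ]
    _ ≤ _ := lintegral_mono fun ω => MCaux.one_le_hitTimePos _ _
  have hE0 : E ≠ 0 := by
    intro h
    rw [h] at hE1
    simp at hE1
  by_cases hEtop : E = ⊤
  · -- degenerate: E = ⊤, Snorm ≡ 0
    have hz : ∀ ω, Snorm S X ℓ H a ω = 0 := by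
      intro ω
      rw [hSnorm, hEtop, ENNReal.div_top]
    have hA : {ω | ENNReal.ofReal (s + t) < Snorm S X ℓ H a ω} = ∅ := by
      ext ω
      simp [hz ω]
    have hB : {ω | ENNReal.ofReal s + β < Snorm S X ℓ H a ω} = ∅ := by
      ext ω
      simp [hz ω]
    constructor
    · rw [hA, hB]
      simp
    · rw [hA]
      simp
  · -- E finite
    have hAset : ∀ c' : ℝ≥0∞,
        {ω | c' < Snorm S X ℓ H a ω} = {ω | c' * E < T ω} := by
      intro c'
      ext ω
      rw [Set.mem_setOf_eq, Set.mem_setOf_eq, hSnorm,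
        ENNReal.lt_div_iff_mul_lt (Or.inl hE0) (Or.inl hEtop)]
    have hCset : {ω | Sreturn S X ℓ H s a ω ≤ ENNReal.ofReal s + β}
        = {ω | Tr ω ≤ (ENNReal.ofReal s + β) * E} := by
      ext ω
      rw [Set.mem_setOf_eq, Set.mem_setOf_eq, hSret,
        ENNReal.div_le_iff_le_mul (Or.inl hE0) (Or.inl hEtop)]
    by_cases hbt : ENNReal.ofReal t ≤ β
    · -- trivial subcase: β ≥ t
      have hofst : ENNReal.ofReal (s + t) = ENNReal.ofReal s + ENNReal.ofReal t :=
        ENNReal.ofReal_add hs.le ht.le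
      have hsub : {ω | ENNReal.ofReal s + β < Snorm S X ℓ H a ω}
          ⊆ {ω | ENNReal.ofReal (s + t) < Snorm S X ℓ H a ω} := by
        intro ω hω
        rw [Set.mem_setOf_eq] at hω ⊢
        refine lt_of_le_of_lt ?_ hω
        rw [hofst]
        exact add_le_add_right hbt _
      have hsub2 : {ω | ENNReal.ofReal (s + t) < Snorm S X ℓ H a ω}
          ⊆ {ω | ENNReal.ofReal s < Snorm S X ℓ H a ω} := by
        intro ω hω
        rw [Set.mem_setOf_eq] at hω ⊢
        refine lt_of_le_of_lt ?_ hω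
        exact ENNReal.ofReal_le_ofReal (by linarith)
      constructor
      · calc (X a).law (ℓ a) ({ω | ENNReal.ofReal s + β < Snorm S X ℓ H a ω}
              ∩ {ω | Sreturn S X ℓ H s a ω ≤ ENNReal.ofReal s + β})
            * (X a).law (ℓ a) {ω | ENNReal.ofReal t < Snorm S X ℓ H a ω}
            ≤ (X a).law (ℓ a) ({ω | ENNReal.ofReal s + β < Snorm S X ℓ H a ω}
              ∩ {ω | Sreturn S X ℓ H s a ω ≤ ENNReal.ofReal s + β}) * 1 :=
              mul_le_mul_right prob_le_one _
        _ = _ := mul_one _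
        _ ≤ _ := measure_mono (Set.inter_subset_inter_left _ hsub)
      · have hA' : {ω | ENNReal.ofReal t - β < Snorm S X ℓ H a ω} = Set.univ := by
          ext ω
          simp only [Set.mem_setOf_eq, Set.mem_univ, iff_true]
          rw [tsub_eq_zero_of_le hbt, hSnorm]
          exact ENNReal.div_pos (fun h => by simpa [h] using hT1 ω) hEtop
        rw [hA', measure_univ, mul_one]
        exact le_trans (measure_mono Set.inter_subset_left) (measure_mono hsub2)
    · -- main subcase: β < t
      have hβlt : β < ENNReal.ofReal t := not_le.mp hbt
      have hβtop : β ≠ ⊤ := (lt_of_lt_of_le hβlt le_top).ne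
      have hofst : ENNReal.ofReal (s + t) = ENNReal.ofReal s + ENNReal.ofReal t :=
        ENNReal.ofReal_add hs.le ht.le
      set W1 : ℝ≥0∞ := ENNReal.ofReal s * E with hW1
      set W2 : ℝ≥0∞ := (ENNReal.ofReal s + β) * E with hW2
      set W3 : ℝ≥0∞ := (ENNReal.ofReal s + ENNReal.ofReal t) * E with hW3
      set W4 : ℝ≥0∞ := ENNReal.ofReal t * E with hW4
      set W5 : ℝ≥0∞ := (ENNReal.ofReal t - β) * E with hW5
      have hW1top : W1 ≠ ⊤ := ENNReal.mul_ne_top ENNReal.ofReal_ne_top hEtop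
      have hW2top : W2 ≠ ⊤ :=
        ENNReal.mul_ne_top (ENNReal.add_ne_top.mpr ⟨ENNReal.ofReal_ne_top, hβtop⟩) hEtop
      have hW3top : W3 ≠ ⊤ :=
        ENNReal.mul_ne_top (ENNReal.add_ne_top.mpr
          ⟨ENNReal.ofReal_ne_top, ENNReal.ofReal_ne_top⟩) hEtop
      have hW4top : W4 ≠ ⊤ := ENNReal.mul_ne_top ENNReal.ofReal_ne_top hEtop
      have hW5top : W5 ≠ ⊤ :=
        ENNReal.mul_ne_top (fun h => ENNReal.ofReal_ne_top
          (top_le_iff.mp (h ▸ tsub_le_self : (⊤:ℝ≥0∞) ≤ ENNReal.ofReal t))) hEtop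
      have hW10 : W1 ≠ 0 := mul_ne_zero (ENNReal.ofReal_pos.mpr hs).ne' hE0
      have hW12 : W1 ≤ W2 := mul_le_mul_left le_self_add E
      have hW23 : W2 ≤ W3 := mul_le_mul_left (add_le_add_right hβlt.le _) E
      have hsum14 : W1 + W4 = W3 := by
        rw [hW1, hW4, hW3, ← add_mul]
      have hsum25 : W2 + W5 = W3 := by
        rw [hW2, hW5, hW3, ← add_mul]
        congr 1
        rw [add_assoc, add_comm β _, tsub_add_cancel_of_le hβlt.le]
      -- translated forms
      have hAst : {ω | ENNReal.ofReal (s + t) < Snorm S X ℓ H a ω} = {ω | W3 < T ω} := by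
        rw [hAset, hofst]
      have hAs : {ω | ENNReal.ofReal s < Snorm S X ℓ H a ω} = {ω | W1 < T ω} := hAset _
      have hAt : {ω | ENNReal.ofReal t < Snorm S X ℓ H a ω} = {ω | W4 < T ω} := hAset _
      have hAtb : {ω | ENNReal.ofReal t - β < Snorm S X ℓ H a ω} = {ω | W5 < T ω} := hAset _
      have hBs : {ω | ENNReal.ofReal s + β < Snorm S X ℓ H a ω} = {ω | W2 < T ω} := hAset _
      -- characterization of T and Tr
      have hTlt : ∀ (w : ℝ≥0∞) (ω : ℕ → S a), w ≠ ⊤ →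
          (w < T ω ↔ ∀ k : ℕ, 0 < k → ω k ∈ H a → w < (k:ℝ≥0∞)) := by
        intro w ω hw
        have hTeq : T ω = ⨅ (k : ℕ) (_ : 0 < k ∧ ω k ∈ H a), (k:ℝ≥0∞) :=
          MCaux.hitTimePos_eq (H a) ω
        rw [hTeq, MCaux.lt_natInf_iff hw]
        constructor
        · intro h k hk1 hk2; exact h k ⟨hk1, hk2⟩
        · rintro h k ⟨hk1, hk2⟩; exact h k hk1 hk2
      have hTrle : ∀ ω : ℕ → S a,
          (Tr ω ≤ W2 ↔ ∃ k : ℕ, W1 ≤ (k:ℝ≥0∞) ∧ ω k = ℓ a ∧ (k:ℝ≥0∞) ≤ W2) := by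
        intro ω
        have hTreq : Tr ω = ⨅ (k : ℕ) (_ : W1 ≤ (k:ℝ≥0∞) ∧ ω k ∈ {ℓ a}), (k:ℝ≥0∞) :=
          MCaux.hitTimeAfter_eq {ℓ a} W1 ω
        rw [hTreq, MCaux.natInf_le_iff hW2top]
        constructor
        · rintro ⟨k, ⟨hk1, hk2⟩, hk3⟩; exact ⟨k, hk1, hk2, hk3⟩
        · rintro ⟨k, hk1, hk2, hk3⟩; exact ⟨k, ⟨hk1, hk2⟩, hk3⟩
      have hCset2 : {ω | Sreturn S X ℓ H s a ω ≤ ENNReal.ofReal s + β} = {ω | Tr ω ≤ W2} := by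
        rw [hCset]
      by_cases hlH : ℓ a ∈ H a
      · -- ℓ ∈ H : both intersections empty
        have hempty : ∀ c2 : ℝ≥0∞, W2 ≤ c2 → c2 ≠ ⊤ →
            {ω | c2 < T ω} ∩ {ω | Tr ω ≤ W2} = ∅ := by
          intro c2 hc2 hc2top
          rw [Set.eq_empty_iff_forall_notMem]
          rintro ω ⟨hωA, hωC⟩
          rw [Set.mem_setOf_eq] at hωA hωC
          obtain ⟨k, hk1, hk2, hk3⟩ := (hTrle ω).mp hωC
          have hk0 : 0 < k := by
            rcases Nat.eq_zero_or_pos k with h0 | h0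
            · exfalso
              apply hW10
              rw [h0] at hk1
              exact le_antisymm (by simpa using hk1) zero_le
            · exact h0
          have := (hTlt c2 ω hc2top).mp hωA k hk0 (hk2 ▸ hlH)
          exact absurd (le_trans hk3 hc2) (not_le.mpr this)
        constructor
        · rw [hCset2, hBs, hempty W2 le_rfl hW2top]
          simp
        · rw [hCset2, hAst, hempty W3 hW23 hW3top]
          simp
      · -- CORE case: ℓ ∉ H
        set Win : Set ℕ := {r | W1 ≤ (r:ℝ≥0∞) ∧ (r:ℝ≥0∞) ≤ W2} with hWin
        set Pre : ℕ → Set (ℕ → S a) := fun r => MCaux.PreE (ℓ a) (H a) W1 r with hPre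
        set Fre : ℝ≥0∞ → Set (ℕ → S a) := fun w => MCaux.FreshE (H a) w with hFre
        set Pie : ℕ → ℝ≥0∞ → Set (ℕ → S a) :=
          fun r w => MCaux.PieceE (ℓ a) (H a) W1 r w with hPie
        set μ : Measure (ℕ → S a) := (X a).law (ℓ a) with hμ
        -- decomposition inclusion
        have hdecomp : ∀ c2 : ℝ≥0∞, W2 ≤ c2 → c2 ≠ ⊤ →
            {ω | c2 < T ω} ∩ {ω | Tr ω ≤ W2}
              ⊆ ⋃ r : ↥Win, Pie r.1 (c2 - (r.1:ℝ≥0∞)) := by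
          intro c2 hc2 hc2top
          rintro ω ⟨hωA, hωC⟩
          rw [Set.mem_setOf_eq] at hωA hωC
          have hωA' := (hTlt c2 ω hc2top).mp hωA
          obtain ⟨k0, hk01, hk02, hk03⟩ := (hTrle ω).mp hωC
          have hex : ∃ k : ℕ, W1 ≤ (k:ℝ≥0∞) ∧ ω k ∈ MCaux.Lset (ℓ a) :=
            ⟨k0, hk01, by rw [MCaux.Lset, Set.mem_setOf_eq, hk02]⟩
          set r := Nat.find hex with hr
          obtain ⟨hrW1, hrL⟩ := Nat.find_spec hex
          have hrk0 : r ≤ k0 := Nat.find_min' hex ⟨hk01, by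
            rw [MCaux.Lset, Set.mem_setOf_eq, hk02]⟩
          have hrW2 : (r:ℝ≥0∞) ≤ W2 := le_trans (Nat.cast_le.mpr hrk0) hk03
          have hrc2 : (r:ℝ≥0∞) ≤ c2 := le_trans hrW2 hc2
          refine Set.mem_iUnion.mpr ⟨⟨r, hrW1, hrW2⟩, ?_⟩
          rw [hPie]
          constructor
          · rw [MCaux.mem_PreE_iff]
            refine ⟨?_, ?_, hrL⟩
            · intro k hk1 hkr
              intro hker
              have hkH : ω k ∈ H a := MCaux.Hker_subset (H a) hker
              have := hωA' k (by omega) hkH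
              have hkc2 : (k:ℝ≥0∞) ≤ c2 :=
                le_trans (le_trans (Nat.cast_le.mpr (le_of_lt hkr)) hrW2) hc2
              exact absurd hkc2 (not_le.mpr this)
            · intro k hkW hkr
              have := Nat.find_min hex hkr
              intro hkL
              exact this ⟨hkW, hkL⟩
          · intro j hj1 hjw
            intro hker
            have hkH : ω (r + j) ∈ H a := MCaux.Hker_subset (H a) hker
            have := hωA' (r + j) (by omega) hkH
            have : c2 < (r:ℝ≥0∞) + (j:ℝ≥0∞) := by
              rw [← Nat.cast_add]
              exact this
            have hle : (r:ℝ≥0∞) + (j:ℝ≥0∞) ≤ c2 := by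
              calc (r:ℝ≥0∞) + (j:ℝ≥0∞) ≤ (r:ℝ≥0∞) + (c2 - (r:ℝ≥0∞)) := add_le_add_right hjw _
              _ = c2 := add_tsub_cancel_of_le hrc2
            exact absurd hle (not_le.mpr this)
        -- pairwise disjointness of pieces
        have hdisj : ∀ w : ↥Win → ℝ≥0∞,
            Pairwise (Function.onFun Disjoint (fun r : ↥Win => Pie r.1 (w r))) := by
          intro w r r' hrr'
          have hne : r.1 ≠ r'.1 := fun h => hrr' (Subtype.ext h)
          rw [Function.onFun, Set.disjoint_left]
          rintro ω ⟨hω1, _⟩ ⟨hω2, _⟩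
          rw [hPie] at *
          rcases Nat.lt_or_ge r.1 r'.1 with hlt | hge
          · exact ((MCaux.mem_PreE_iff _ _ _).mp hω2).2.1 r.1 r.2.1 hlt
              ((MCaux.mem_PreE_iff _ _ _).mp hω1).2.2
          · have hlt : r'.1 < r.1 := lt_of_le_of_ne hge (Ne.symm hne)
            exact ((MCaux.mem_PreE_iff _ _ _).mp hω1).2.1 r'.1 r'.2.1 hlt
              ((MCaux.mem_PreE_iff _ _ _).mp hω2).2.2
        have hdisjPre : Pairwise (Function.onFun Disjoint (fun r : ↥Win => Pre r.1)) := by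
          intro r r' hrr'
          have hne : r.1 ≠ r'.1 := fun h => hrr' (Subtype.ext h)
          rw [Function.onFun, Set.disjoint_left]
          intro ω hω1 hω2
          rw [hPre] at *
          rcases Nat.lt_or_ge r.1 r'.1 with hlt | hge
          · exact ((MCaux.mem_PreE_iff _ _ _).mp hω2).2.1 r.1 r.2.1 hlt
              ((MCaux.mem_PreE_iff _ _ _).mp hω1).2.2
          · have hlt : r'.1 < r.1 := lt_of_le_of_ne hge (Ne.symm hne)
            exact ((MCaux.mem_PreE_iff _ _ _).mp hω1).2.1 r'.1 r'.2.1 hlt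
              ((MCaux.mem_PreE_iff _ _ _).mp hω2).2.2
        haveI : Countable ↥Win := Set.Countable.to_subtype (Set.to_countable Win)
        -- measure of a union of pieces
        have hmuUnion : ∀ w : ↥Win → ℝ≥0∞, (∀ r, w r ≠ ⊤) →
            μ (⋃ r : ↥Win, Pie r.1 (w r)) = ∑' r : ↥Win, μ (Pre r.1) * μ (Fre (w r)) := by
          intro w hw
          rw [measure_iUnion (hdisj w) (fun r => MCaux.measurableSet_PieceE _ _ _ _ _)]
          congr 1
          funext r
          rw [hPie, hPre, hFre]
          exact MCaux.mu_PieceE _ _ _ _ hlH r.1 (w r) (hw r)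
        -- (K4): A_t ⊆ Fresh W4
        have hK4 : μ {ω | W4 < T ω} ≤ μ (Fre W4) := by
          refine measure_mono ?_
          intro ω hω
          rw [Set.mem_setOf_eq] at hω
          intro j hj1 hjw hker
          have := (hTlt W4 ω hW4top).mp hω j (by omega) (MCaux.Hker_subset (H a) hker)
          exact absurd hjw (not_le.mpr this)
        -- (K5): rep: μ (Fre w) ≤ μ {ω | w < T ω}
        have hK5 : ∀ w : ℝ≥0∞, w ≠ ⊤ → μ (Fre w) ≤ μ {ω | w < T ω} := by
          intro w hw
          refine MCaux.mu_le_of_rep μ fun ω hω => ?_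
          refine ⟨fun k => if 1 ≤ k ∧ (k:ℝ≥0∞) ≤ w then MCaux.pick (H a) (ω k) else ω k,
            ?_, ?_⟩
          · intro k
            show MCaux.mrel (ω k)
              (if 1 ≤ k ∧ (k:ℝ≥0∞) ≤ w then MCaux.pick (H a) (ω k) else ω k)
            split
            · exact MCaux.qmk_eq_iff.mp (MCaux.qmk_pick (H a) (ω k)).symm
            · exact MCaux.mrel_refl _
          · rw [Set.mem_setOf_eq]
            rw [hTlt w _ hw]
            intro k hk1 hk2
            replace hk2 : (if 1 ≤ k ∧ (k:ℝ≥0∞) ≤ w then MCaux.pick (H a) (ω k) else ω k)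
              ∈ H a := hk2
            by_contra hc
            have hkw : (k:ℝ≥0∞) ≤ w := not_lt.mp hc
            rw [if_pos ⟨hk1, hkw⟩] at hk2
            exact MCaux.pick_not_mem (hω k hk1 hkw) hk2
        -- (K6): pieces with W4 are (saturatedly) inside the target event
        have hK6 : μ (⋃ r : ↥Win, Pie r.1 W4) ≤ μ ({ω | W3 < T ω} ∩ {ω | Tr ω ≤ W2}) := by
          refine MCaux.mu_le_of_rep μ fun ω hω => ?_
          obtain ⟨r, hωr⟩ := Set.mem_iUnion.mp hω
          rw [hPie] at hωr
          obtain ⟨hωpre, hωfresh⟩ := hωr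
          obtain ⟨hpre1, hpre2, hpre3⟩ := (MCaux.mem_PreE_iff _ _ _).mp hωpre
          obtain ⟨hrW1, hrW2⟩ := r.2
          have hnotk : ∀ k : ℕ, 1 ≤ k → k ≠ r.1 → (k:ℝ≥0∞) ≤ (r.1:ℝ≥0∞) + W4 →
              ω k ∉ MCaux.Hker (H a) := by
            intro k hk1 hkr hkle
            rcases Nat.lt_or_ge k r.1 with hlt | hge
            · exact hpre1 k hk1 hlt
            · have hgt : r.1 < k := lt_of_le_of_ne hge (Ne.symm hkr)
              have hj : k = r.1 + (k - r.1) := by omega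
              have hj1 : 1 ≤ k - r.1 := by omega
              have hjle : ((k - r.1 : ℕ):ℝ≥0∞) ≤ W4 := by
                have hcast : (k:ℝ≥0∞) = (r.1:ℝ≥0∞) + ((k - r.1:ℕ):ℝ≥0∞) := by
                  rw [← Nat.cast_add, Nat.add_sub_cancel' hge]
                rw [hcast] at hkle
                exact (ENNReal.add_le_add_iff_left (by simp : (r.1:ℝ≥0∞) ≠ ⊤)).mp hkle
              have := hωfresh (k - r.1) hj1 hjle
              rw [← hj] at this
              exact this
          refine ⟨fun k => if k = r.1 then ℓ a
            else if 1 ≤ k ∧ (k:ℝ≥0∞) ≤ (r.1:ℝ≥0∞) + W4 then MCaux.pick (H a) (ω k)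
            else ω k, ?_, ?_, ?_⟩
          · intro k
            show MCaux.mrel (ω k) (if k = r.1 then ℓ a
              else if 1 ≤ k ∧ (k:ℝ≥0∞) ≤ (r.1:ℝ≥0∞) + W4 then MCaux.pick (H a) (ω k)
              else ω k)
            split
            · rename_i hk
              rw [hk]
              exact MCaux.qmk_eq_iff.mp hpre3
            · split
              · exact MCaux.qmk_eq_iff.mp (MCaux.qmk_pick (H a) (ω k)).symm
              · exact MCaux.mrel_refl _
          · rw [Set.mem_setOf_eq, hTlt W3 _ hW3top]
            intro k hk1 hk2
            replace hk2 : (if k = r.1 then ℓ a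
              else if 1 ≤ k ∧ (k:ℝ≥0∞) ≤ (r.1:ℝ≥0∞) + W4 then MCaux.pick (H a) (ω k)
              else ω k) ∈ H a := hk2
            by_contra hc
            have hkW3 : (k:ℝ≥0∞) ≤ W3 := not_lt.mp hc
            have hkle : (k:ℝ≥0∞) ≤ (r.1:ℝ≥0∞) + W4 := by
              calc (k:ℝ≥0∞) ≤ W3 := hkW3
              _ = W1 + W4 := hsum14.symm
              _ ≤ (r.1:ℝ≥0∞) + W4 := add_le_add_left hrW1 _
            by_cases hkr : k = r.1
            · rw [if_pos hkr] at hk2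
              exact hlH hk2
            · rw [if_neg hkr, if_pos ⟨hk1, hkle⟩] at hk2
              exact MCaux.pick_not_mem (hnotk k hk1 hkr hkle) hk2
          · rw [Set.mem_setOf_eq, hTrle]
            refine ⟨r.1, hrW1, ?_, hrW2⟩
            show (if r.1 = r.1 then ℓ a
              else if 1 ≤ r.1 ∧ (r.1:ℝ≥0∞) ≤ (r.1:ℝ≥0∞) + W4 then MCaux.pick (H a) (ω r.1)
              else ω r.1) = ℓ a
            rw [if_pos rfl]
        -- decomposition bounds
        have hup : ∀ c2 : ℝ≥0∞, W2 ≤ c2 → c2 ≠ ⊤ →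
            μ ({ω | c2 < T ω} ∩ {ω | Tr ω ≤ W2})
              ≤ ∑' r : ↥Win, μ (Pre r.1) * μ (Fre (c2 - (r.1:ℝ≥0∞))) := by
          intro c2 hc2 hc2top
          calc μ ({ω | c2 < T ω} ∩ {ω | Tr ω ≤ W2})
              ≤ μ (⋃ r : ↥Win, Pie r.1 (c2 - (r.1:ℝ≥0∞))) :=
                measure_mono (hdecomp c2 hc2 hc2top)
          _ = _ := hmuUnion _ (fun r => fun h => hc2top (top_le_iff.mp (h ▸ tsub_le_self)))
        -- sum of Pre bounded by A_s measure
        have hPreSum : ∑' r : ↥Win, μ (Pre r.1) ≤ μ {ω | W1 < T ω} := by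
          rw [← measure_iUnion hdisjPre (fun r => MCaux.measurableSet_PreE _ _ _ _)]
          have hsub : (⋃ r : ↥Win, Pre r.1) ⊆ Fre W1 := by
            intro ω hω
            obtain ⟨r, hωr⟩ := Set.mem_iUnion.mp hω
            rw [hPre] at hωr
            obtain ⟨hpre1, hpre2, hpre3⟩ := (MCaux.mem_PreE_iff _ _ _).mp hωr
            intro j hj1 hjw
            rcases Nat.lt_or_ge j r.1 with hlt | hge
            · exact hpre1 j hj1 hlt
            · have hjr : j = r.1 := by
                by_contra hne
                have : (r.1:ℝ≥0∞) < (j:ℝ≥0∞) := Nat.cast_lt.mpr (by omega)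
                have : (r.1:ℝ≥0∞) < W1 := lt_of_lt_of_le this hjw
                exact absurd r.2.1 (not_le.mpr this)
              rw [hjr]
              intro hker
              exact MCaux.Lset_disjoint_Hker hlH hpre3 hker
          exact le_trans (measure_mono hsub) (hK5 W1 hW1top)
        -- final assembly
        rw [hCset2, hAst, hAs, hAt, hAtb, hBs]
        constructor
        · -- first inequality
          rw [ge_iff_le]
          calc μ ({ω | W2 < T ω} ∩ {ω | Tr ω ≤ W2}) * μ {ω | W4 < T ω}
              ≤ (∑' r : ↥Win, μ (Pre r.1) * μ (Fre (W2 - (r.1:ℝ≥0∞)))) * μ {ω | W4 < T ω} :=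
                mul_le_mul_left (hup W2 le_rfl hW2top) _
          _ ≤ (∑' r : ↥Win, μ (Pre r.1) * μ (Fre (W2 - (r.1:ℝ≥0∞)))) * μ (Fre W4) :=
                mul_le_mul_right hK4 _
          _ = ∑' r : ↥Win, μ (Pre r.1) * μ (Fre (W2 - (r.1:ℝ≥0∞))) * μ (Fre W4) :=
                ENNReal.tsum_mul_right.symm
          _ ≤ ∑' r : ↥Win, μ (Pre r.1) * μ (Fre W4) := by
                refine ENNReal.tsum_le_tsum fun r => ?_
                calc μ (Pre r.1) * μ (Fre (W2 - (r.1:ℝ≥0∞))) * μ (Fre W4)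
                    ≤ μ (Pre r.1) * 1 * μ (Fre W4) :=
                      mul_le_mul_left (mul_le_mul_right prob_le_one _) _
                _ = μ (Pre r.1) * μ (Fre W4) := by rw [mul_one]
          _ = μ (⋃ r : ↥Win, Pie r.1 W4) := (hmuUnion (fun _ => W4) (fun _ => hW4top)).symm
          _ ≤ μ ({ω | W3 < T ω} ∩ {ω | Tr ω ≤ W2}) := hK6
        · -- second inequality
          calc μ ({ω | W3 < T ω} ∩ {ω | Tr ω ≤ W2})
              ≤ ∑' r : ↥Win, μ (Pre r.1) * μ (Fre (W3 - (r.1:ℝ≥0∞))) := hup W3 hW23 hW3top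
          _ ≤ ∑' r : ↥Win, μ (Pre r.1) * μ (Fre W5) := by
                refine ENNReal.tsum_le_tsum fun r => ?_
                refine mul_le_mul_right ?_ _
                refine measure_mono ?_
                intro ω hω j hj1 hjw
                refine hω j hj1 ?_
                calc (j:ℝ≥0∞) ≤ W5 := hjw
                _ = W3 - W2 := by
                      rw [← hsum25, ENNReal.add_sub_cancel_left hW2top]
                _ ≤ W3 - (r.1:ℝ≥0∞) := tsub_le_tsub_left r.2.2 _
          _ = (∑' r : ↥Win, μ (Pre r.1)) * μ (Fre W5) := ENNReal.tsum_mul_right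
          _ ≤ μ {ω | W1 < T ω} * μ (Fre W5) := mul_le_mul_left hPreSum _
          _ ≤ μ {ω | W1 < T ω} * μ {ω | W5 < T ω} := mul_le_mul_right (hK5 W5 hW5top) _
end
end

section
/- Let X be an irreducible birth-and-death chain on ⟦b,a⟧ with transition probabilities p_x, q_x and reversible invariant probability measure π. Then for all integers b ≤ n < j ≤ a: E[T_{j→n}] = Σ_{k=n+1}^{j} π(⟦k,a⟧) / ( q_k · π(k) ). -/
open MeasureTheory Filter Topology ENNReal ProbabilityTheory

noncomputable section

/-- One-step transition probabilities of a birth-and-death chain on `ℤ` with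
birth rates `p` and death rates `q` (and holding probability `1 - p x - q x`). -/
def bdStep (p q : ℤ → ℝ) (x y : ℤ) : ℝ :=
  if y = x + 1 then p x else if y = x - 1 then q x
  else if y = x then 1 - p x - q x else 0

/-- An irreducible discrete-time birth-and-death chain on the integer interval
`⟦b,a⟧`, given by its transition probabilities `p x = p(x,x+1) > 0` (for `b ≤ x ≤ a-1`),
`q x = p(x,x-1) > 0` (for `b+1 ≤ x ≤ a`), and by the laws `law x` of the chain started
at `x` on path space `ℕ → ℤ` (characterized by the cylinder/Markov property `markov`). -/
structure BDChain (b a : ℤ) where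
  p : ℤ → ℝ
  q : ℤ → ℝ
  law : ℤ → Measure (ℕ → ℤ)
  prob : ∀ x, IsProbabilityMeasure (law x)
  p_pos : ∀ x, b ≤ x → x ≤ a - 1 → 0 < p x
  q_pos : ∀ x, b + 1 ≤ x → x ≤ a → 0 < q x
  p_zero : ∀ x, x < b ∨ a ≤ x → p x = 0
  q_zero : ∀ x, x ≤ b ∨ a < x → q x = 0
  r_nonneg : ∀ x, b ≤ x → x ≤ a → p x + q x ≤ 1
  init : ∀ x, law x {ω | ω 0 = x} = 1
  markov : ∀ (x : ℤ) (u : ℕ → ℤ) (n : ℕ),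
    law x {ω | ∀ i ≤ n + 1, ω i = u i}
      = law x {ω | ∀ i ≤ n, ω i = u i} * ENNReal.ofReal (bdStep p q (u n) (u (n + 1)))

/-- Mean hitting time `E[T_{x → y}]` for the birth-and-death chain `c`. -/
def BDChain.eT {b a : ℤ} (c : BDChain b a) (x y : ℤ) : ℝ≥0∞ :=
  ∫⁻ ω, hitTime {y} ω ∂(c.law x)

/-- Mean hitting time `E[T_{x → A}]` of a set `A` for the birth-and-death chain `c`. -/
def BDChain.eTset {b a : ℤ} (c : BDChain b a) (x : ℤ) (A : Set ℤ) : ℝ≥0∞ :=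
  ∫⁻ ω, hitTime A ω ∂(c.law x)

/-- Second moment `E[T_{x → y}²]` of the hitting time. -/
def BDChain.eT2 {b a : ℤ} (c : BDChain b a) (x y : ℤ) : ℝ≥0∞ :=
  ∫⁻ ω, (hitTime {y} ω) ^ 2 ∂(c.law x)

/-- `π` is the (unique) reversible invariant probability measure of the
birth-and-death chain `c` on `⟦b,a⟧`: it is positive on `⟦b,a⟧`, vanishes outside,
has total mass one, and satisfies the reversibility (detailed balance) relation
`π(x) q_x = π(x-1) p_{x-1}`. -/
def BDChain.IsStationary {b a : ℤ} (c : BDChain b a) (π : ℤ → ℝ) : Prop :=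
  (∀ x, b ≤ x → x ≤ a → 0 < π x) ∧ (∀ x, x < b ∨ a < x → π x = 0) ∧
  (∑ x ∈ Finset.Icc b a, π x) = 1 ∧
  (∀ x, b + 1 ≤ x → x ≤ a → π x * c.q x = π (x - 1) * c.p (x - 1))
section Infra
variable {b a : ℤ} (c : BDChain b a)

lemma BDChain.p_nonneg (x : ℤ) : 0 ≤ c.p x := by
  rcases lt_or_ge x b with h | h
  · rw [c.p_zero x (Or.inl h)]
  rcases le_or_gt a x with h2 | h2
  · rw [c.p_zero x (Or.inr h2)]
  · exact (c.p_pos x h (by omega)).le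

lemma BDChain.q_nonneg (x : ℤ) : 0 ≤ c.q x := by
  rcases le_or_gt x b with h | h
  · rw [c.q_zero x (Or.inl h)]
  rcases lt_or_ge a x with h2 | h2
  · rw [c.q_zero x (Or.inr h2)]
  · exact (c.q_pos x h h2).le

lemma BDChain.q_le_one (x : ℤ) : c.q x ≤ 1 := by
  rcases le_or_gt x b with h | h
  · rw [c.q_zero x (Or.inl h)]; norm_num
  rcases lt_or_ge a x with h2 | h2
  · rw [c.q_zero x (Or.inr h2)]; norm_num
  · have := c.r_nonneg x (by omega) h2
    have := c.p_nonneg x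
    linarith

lemma bdStep_nonneg (x y : ℤ) : 0 ≤ bdStep c.p c.q x y := by
  unfold bdStep
  split_ifs with h1 h2 h3
  · exact c.p_nonneg x
  · exact c.q_nonneg x
  · rcases le_or_gt b x with hb | hb
    · rcases le_or_gt x a with ha | ha
      · linarith [c.r_nonneg x hb ha]
      · rw [c.p_zero x (Or.inr ha.le), c.q_zero x (Or.inr ha)]; norm_num
    · rw [c.p_zero x (Or.inl hb), c.q_zero x (Or.inl hb.le)]; norm_num
  · exact le_refl _

lemma cyl_measurable (u : ℕ → ℤ) (t : ℕ) :
    MeasurableSet {ω : ℕ → ℤ | ∀ i ≤ t, ω i = u i} := by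
  have : {ω : ℕ → ℤ | ∀ i ≤ t, ω i = u i} = ⋂ i ∈ Set.Iic t, (fun ω : ℕ → ℤ => ω i) ⁻¹' {u i} := by
    ext ω; simp [Set.mem_iInter]
  rw [this]
  exact MeasurableSet.biInter (Set.to_countable _)
    (fun i _ => (measurable_pi_apply i) (measurableSet_singleton _))

lemma law_cyl_zero (x : ℤ) (u : ℕ → ℤ) :
    c.law x {ω | ∀ i ≤ 0, ω i = u i} = if u 0 = x then 1 else 0 := by
  have hset : {ω : ℕ → ℤ | ∀ i ≤ 0, ω i = u i} = {ω | ω 0 = u 0} := by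
    ext ω; constructor
    · intro h; exact h 0 le_rfl
    · intro h i hi; interval_cases i; exact h
  rw [hset]
  split_ifs with h
  · rw [h]; exact c.init x
  · have hprob := c.prob x
    have hd : Disjoint {ω : ℕ → ℤ | ω 0 = u 0} {ω : ℕ → ℤ | ω 0 = x} := by
      rw [Set.disjoint_left]; intro ω h1 h2; exact h (h1 ▸ (h1.symm.trans h2))
    have hm : MeasurableSet {ω : ℕ → ℤ | ω 0 = x} :=
      (measurable_pi_apply 0) (measurableSet_singleton _)
    have := measure_union hd hm (μ := c.law x)
    have hle : c.law x ({ω | ω 0 = u 0} ∪ {ω | ω 0 = x}) ≤ 1 := prob_le_one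
    rw [this, c.init x] at hle
    have : c.law x {ω : ℕ → ℤ | ω 0 = u 0} + 1 ≤ 0 + 1 := by simpa using hle
    simpa using ENNReal.le_of_add_le_add_right (by norm_num) this

lemma law_cyl (x : ℤ) (u : ℕ → ℤ) (t : ℕ) :
    c.law x {ω | ∀ i ≤ t, ω i = u i}
      = (if u 0 = x then 1 else 0) *
        ∏ s ∈ Finset.range t, ENNReal.ofReal (bdStep c.p c.q (u s) (u (s+1))) := by
  induction t with
  | zero => simpa using law_cyl_zero c x u
  | succ t ih =>
    rw [c.markov x u t, ih, Finset.prod_range_succ, mul_assoc]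

end Infra
section Decomp
variable {b a : ℤ} (c : BDChain b a)

/-- Extension of a finite vector to an infinite path. -/
def extv (t : ℕ) (v : Fin (t+1) → ℤ) : ℕ → ℤ :=
  fun i => if h : i < t + 1 then v ⟨i, h⟩ else 0

def cylV (t : ℕ) (v : Fin (t+1) → ℤ) : Set (ℕ → ℤ) := {ω | ∀ i ≤ t, ω i = extv t v i}

lemma extv_eq (t : ℕ) (v : Fin (t+1) → ℤ) (i : ℕ) (hi : i ≤ t) (h : i < t + 1 := by omega) :
    extv t v i = v ⟨i, h⟩ := by
  simp [extv, h]

lemma mem_cylV_restr (t : ℕ) (ω : ℕ → ℤ) : ω ∈ cylV t (fun i => ω i) := by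
  intro i hi
  rw [extv_eq t _ i hi]

lemma cylV_measurable (t : ℕ) (v : Fin (t+1) → ℤ) : MeasurableSet (cylV t v) :=
  cyl_measurable _ t

lemma cylV_disjoint (t : ℕ) : Pairwise (Function.onFun Disjoint (fun v : Fin (t+1) → ℤ => cylV t v)) := by
  intro v w hvw
  rw [Function.onFun, Set.disjoint_left]
  intro ω hv hw
  apply hvw
  funext i
  have h1 := hv i (by omega)
  have h2 := hw i (by omega)
  rw [extv_eq t v i (by omega), extv_eq t w i (by omega)] at *
  simp only [Fin.eta] at h1 h2
  rw [← h1, ← h2]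

/-- Decomposition of a coordinate-`≤ t` determined event into cylinders. -/
lemma event_eq_iUnion (t : ℕ) (E : Set (ℕ → ℤ))
    (hE : ∀ ω ω' : ℕ → ℤ, (∀ i ≤ t, ω i = ω' i) → ω ∈ E → ω' ∈ E) :
    E = ⋃ v : {v : Fin (t+1) → ℤ // extv t v ∈ E}, cylV t v.1 := by
  ext ω
  constructor
  · intro hω
    have hmem : extv t (fun i => ω i) ∈ E := by
      apply hE ω _ _ hω
      intro i hi
      rw [extv_eq t _ i hi]
    exact Set.mem_iUnion.2 ⟨⟨_, hmem⟩, mem_cylV_restr t ω⟩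
  · intro hω
    obtain ⟨⟨v, hv⟩, hmem⟩ := Set.mem_iUnion.1 hω
    exact hE (extv t v) ω (fun i hi => (hmem i hi).symm) hv

lemma law_event_eq_tsum (x : ℤ) (t : ℕ) (E : Set (ℕ → ℤ))
    (hE : ∀ ω ω' : ℕ → ℤ, (∀ i ≤ t, ω i = ω' i) → ω ∈ E → ω' ∈ E) :
    c.law x E = ∑' v : {v : Fin (t+1) → ℤ // extv t v ∈ E}, c.law x (cylV t v.1) := by
  conv_lhs => rw [event_eq_iUnion t E hE]
  apply measure_iUnion
  · intro v w hvw
    exact cylV_disjoint t (show v.1 ≠ w.1 from fun h => hvw (Subtype.ext h))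
  · exact fun v => cylV_measurable t v.1

/-- Extension of a vector by one more value. -/
def extv1 (t : ℕ) (v : Fin (t+1) → ℤ) (y : ℤ) : ℕ → ℤ :=
  fun i => if i = t + 1 then y else extv t v i

lemma extv1_of_le (t : ℕ) (v : Fin (t+1) → ℤ) (y : ℤ) (i : ℕ) (hi : i ≤ t) :
    extv1 t v y i = extv t v i := by
  show (if i = t + 1 then y else extv t v i) = extv t v i
  rw [if_neg (by omega : ¬ i = t + 1)]

lemma extv1_last (t : ℕ) (v : Fin (t+1) → ℤ) (y : ℤ) : extv1 t v y (t+1) = y := by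
  simp [extv1]

/-- One-step extension. -/
lemma law_one_step (x z y : ℤ) (t : ℕ) (E : Set (ℕ → ℤ))
    (hE : ∀ ω ω' : ℕ → ℤ, (∀ i ≤ t, ω i = ω' i) → ω ∈ E → ω' ∈ E)
    (hz : E ⊆ {ω | ω t = z}) :
    c.law x (E ∩ {ω | ω (t+1) = y})
      = c.law x E * ENNReal.ofReal (bdStep c.p c.q z y) := by
  have hdecomp := event_eq_iUnion t E hE
  have hstep : ∀ v : {v : Fin (t+1) → ℤ // extv t v ∈ E},
      c.law x (cylV t v.1 ∩ {ω | ω (t+1) = y})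
        = c.law x (cylV t v.1) * ENNReal.ofReal (bdStep c.p c.q z y) := by
    rintro ⟨v, hv⟩
    have hset : cylV t v ∩ {ω | ω (t+1) = y} = {ω | ∀ i ≤ t + 1, ω i = extv1 t v y i} := by
      ext ω
      constructor
      · rintro ⟨h1, h2⟩ i hi
        by_cases hit : i = t + 1
        · rw [hit, extv1_last]; exact h2
        · rw [extv1_of_le t v y i (by omega)]; exact h1 i (by omega)
      · intro h
        refine ⟨fun i hi => ?_, ?_⟩
        · have := h i (by omega); rwa [extv1_of_le t v y i hi] at this
        · have := h (t+1) le_rfl; rwa [extv1_last] at this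
    have hcylset : {ω : ℕ → ℤ | ∀ i ≤ t, ω i = extv1 t v y i} = cylV t v := by
      ext ω
      constructor <;> intro h i hi <;> have := h i hi <;>
        first
        | (rwa [extv1_of_le t v y i hi] at this)
        | (rwa [extv1_of_le t v y i hi])
    have hvt : extv t v t = z := hz hv
    have hm := c.markov x (extv1 t v y) t
    rw [hset, hm, hcylset, extv1_last, extv1_of_le t v y t le_rfl, hvt]
  calc c.law x (E ∩ {ω | ω (t+1) = y})
      = c.law x ((⋃ v : {v : Fin (t+1) → ℤ // extv t v ∈ E}, cylV t v.1) ∩ {ω | ω (t+1) = y}) := by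
        rw [← hdecomp]
    _ = c.law x (⋃ v : {v : Fin (t+1) → ℤ // extv t v ∈ E}, (cylV t v.1 ∩ {ω | ω (t+1) = y})) := by
        rw [Set.iUnion_inter]
    _ = ∑' v : {v : Fin (t+1) → ℤ // extv t v ∈ E}, c.law x (cylV t v.1 ∩ {ω | ω (t+1) = y}) := by
        apply measure_iUnion
        · intro v w hvw
          exact Set.disjoint_of_subset Set.inter_subset_left Set.inter_subset_left
            (cylV_disjoint t (show v.1 ≠ w.1 from fun h => hvw (Subtype.ext h)))
        · exact fun v => (cylV_measurable t v.1).inter ((measurable_pi_apply (t+1)) (measurableSet_singleton _))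
    _ = ∑' v : {v : Fin (t+1) → ℤ // extv t v ∈ E}, c.law x (cylV t v.1) * ENNReal.ofReal (bdStep c.p c.q z y) := by
        exact tsum_congr hstep
    _ = (∑' v : {v : Fin (t+1) → ℤ // extv t v ∈ E}, c.law x (cylV t v.1)) * ENNReal.ofReal (bdStep c.p c.q z y) := by
        rw [ENNReal.tsum_mul_right]
    _ = c.law x E * ENNReal.ofReal (bdStep c.p c.q z y) := by
        rw [← law_event_eq_tsum c x t E hE]

end Decomp
section Gsec
variable {b a : ℤ} (c : BDChain b a)

/-- Event: avoid `n` up to time `t` and be at `y` at time `t`. -/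
def Aev (n : ℤ) (t : ℕ) (y : ℤ) : Set (ℕ → ℤ) := {ω | (∀ s ≤ t, ω s ≠ n) ∧ ω t = y}

lemma Aev_det (n : ℤ) (t : ℕ) (y : ℤ) (ω ω' : ℕ → ℤ) (h : ∀ i ≤ t, ω i = ω' i) :
    ω ∈ Aev n t y → ω' ∈ Aev n t y := by
  rintro ⟨h1, h2⟩
  exact ⟨fun s hs => (h s hs) ▸ h1 s hs, (h t le_rfl) ▸ h2⟩

lemma Aev_sub (n : ℤ) (t : ℕ) (y : ℤ) : Aev n t y ⊆ {ω | ω t = y} := fun ω hω => hω.2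

lemma coord_measurable (t : ℕ) (y : ℤ) : MeasurableSet {ω : ℕ → ℤ | ω t = y} := by
  have h : {ω : ℕ → ℤ | ω t = y} = (fun ω : ℕ → ℤ => ω t) ⁻¹' {y} := rfl
  rw [h]
  exact (measurable_pi_apply t) (measurableSet_singleton y)

lemma avoid_measurable (n : ℤ) (t : ℕ) : MeasurableSet {ω : ℕ → ℤ | ∀ s ≤ t, ω s ≠ n} := by
  have h : {ω : ℕ → ℤ | ∀ s ≤ t, ω s ≠ n}
      = ⋂ s ∈ Set.Iic t, (fun ω : ℕ → ℤ => ω s) ⁻¹' ({n}ᶜ) := by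
    ext ω; simp [Set.mem_iInter]
  rw [h]
  exact MeasurableSet.biInter (Set.to_countable _)
    (fun s _ => (measurable_pi_apply s) (measurableSet_singleton n).compl)

lemma Aev_measurable (n : ℤ) (t : ℕ) (y : ℤ) : MeasurableSet (Aev n t y) := by
  have h : Aev n t y = {ω : ℕ → ℤ | ∀ s ≤ t, ω s ≠ n} ∩ {ω | ω t = y} := rfl
  rw [h]
  exact (avoid_measurable n t).inter (coord_measurable t y)

/-- Occupation function `G x t y = P_x(avoid n up to t, X_t = y)`. -/
def BDG (c : BDChain b a) (n x : ℤ) (t : ℕ) (y : ℤ) : ℝ≥0∞ := c.law x (Aev n t y)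

lemma BDG_n (n x : ℤ) (t : ℕ) : BDG c n x t n = 0 := by
  have : Aev n t n = (∅ : Set (ℕ → ℤ)) := by
    ext ω; simp only [Aev, Set.mem_setOf_eq, Set.mem_empty_iff_false, iff_false]
    rintro ⟨h1, h2⟩; exact h1 t le_rfl h2
  simp [BDG, this]

lemma BDG_zero (n x y : ℤ) :
    BDG c n x 0 y = if y = n then 0 else if y = x then 1 else 0 := by
  by_cases hyn : y = n
  · rw [hyn, BDG_n]; simp
  · have : Aev n 0 y = {ω : ℕ → ℤ | ∀ i ≤ 0, ω i = (fun _ => y) i} := by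
      ext ω
      simp only [Aev, Set.mem_setOf_eq]
      constructor
      · rintro ⟨h1, h2⟩ i hi; interval_cases i; exact h2
      · intro h
        have h0 := h 0 le_rfl
        exact ⟨fun s hs => by interval_cases s; rw [h0]; exact hyn, h0⟩
    rw [BDG, this, law_cyl_zero]
    simp [hyn]

lemma BDG_succ (n x : ℤ) (t : ℕ) (y : ℤ) :
    BDG c n x (t+1) y = if y = n then 0 else
      ∑' z : ℤ, BDG c n x t z * ENNReal.ofReal (bdStep c.p c.q z y) := by
  by_cases hyn : y = n
  · rw [hyn, BDG_n]; simp
  rw [if_neg hyn]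
  have hsplit : Aev n (t+1) y = ⋃ z : ℤ, (Aev n t z ∩ {ω | ω (t+1) = y}) := by
    ext ω
    simp only [Aev, Set.mem_setOf_eq, Set.mem_iUnion, Set.mem_inter_iff]
    constructor
    · rintro ⟨h1, h2⟩
      exact ⟨ω t, ⟨⟨fun s hs => h1 s (by omega), rfl⟩, h2⟩⟩
    · rintro ⟨z, ⟨⟨h1, _⟩, h2⟩⟩
      refine ⟨fun s hs => ?_, h2⟩
      rcases Nat.lt_or_ge s (t+1) with hlt | hge
      · exact h1 s (by omega)
      · have : s = t + 1 := by omega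
        rw [this, h2]; exact hyn
    
  rw [BDG, hsplit]
  rw [measure_iUnion ?_ ?_]
  · exact tsum_congr fun z => law_one_step c x z y t (Aev n t z) (Aev_det n t z) (Aev_sub n t z)
  · intro z w hzw
    apply Set.disjoint_of_subset Set.inter_subset_left Set.inter_subset_left
    rw [Set.disjoint_left]
    rintro ω ⟨_, hz⟩ ⟨_, hw⟩
    exact hzw (hz ▸ hw ▸ rfl)
  · exact fun z => (Aev_measurable n t z).inter (coord_measurable (t+1) y)

end Gsec
section CKsec
variable {b a : ℤ} (c : BDChain b a)

lemma bdStep_cases (z y : ℤ) (h : bdStep c.p c.q z y ≠ 0) :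
    (y = z + 1 ∧ c.p z ≠ 0) ∨ (y = z - 1 ∧ c.q z ≠ 0) ∨ y = z := by
  unfold bdStep at h
  split_ifs at h with h1 h2 h3
  · exact Or.inl ⟨h1, h⟩
  · exact Or.inr (Or.inl ⟨h2, h⟩)
  · exact Or.inr (Or.inr h3)
  · exact absurd rfl h

lemma BDG_support (n x : ℤ) (hx1 : n + 1 ≤ x) (hx2 : x ≤ a) :
    ∀ t y, BDG c n x t y ≠ 0 → n + 1 ≤ y ∧ y ≤ a := by
  intro t
  induction t with
  | zero =>
    intro y hy
    rw [BDG_zero] at hy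
    by_cases h1 : y = n
    · rw [if_pos h1] at hy; exact absurd rfl hy
    by_cases h2 : y = x
    · exact h2 ▸ ⟨hx1, hx2⟩
    · rw [if_neg h1, if_neg h2] at hy; exact absurd rfl hy
  | succ t ih =>
    intro y hy
    rw [BDG_succ] at hy
    by_cases h1 : y = n
    · rw [if_pos h1] at hy; exact absurd rfl hy
    rw [if_neg h1] at hy
    have : ∃ z, BDG c n x t z * ENNReal.ofReal (bdStep c.p c.q z y) ≠ 0 := by
      by_contra hc
      push_neg at hc
      exact hy (by rw [ENNReal.tsum_eq_zero]; exact fun z => hc z)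
    obtain ⟨z, hz⟩ := this
    have hG : BDG c n x t z ≠ 0 := fun h => hz (by rw [h, zero_mul])
    have hstep : bdStep c.p c.q z y ≠ 0 := by
      intro h
      exact hz (by rw [h, ENNReal.ofReal_zero, mul_zero])
    obtain ⟨hz1, hz2⟩ := ih z hG
    rcases bdStep_cases c z y hstep with ⟨hy1, hp⟩ | ⟨hy1, hq⟩ | hy1
    · have : ¬ (z < b ∨ a ≤ z) := fun hor => hp (c.p_zero z hor)
      push_neg at this
      omega
    · have : ¬ (z ≤ b ∨ a < z) := fun hor => hq (c.q_zero z hor)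
      push_neg at this
      have hyn : y ≠ n := h1
      omega
    · omega

lemma BDG_CK (n x : ℤ) (s : ℕ) :
    ∀ t y, BDG c n x (s + t) y = ∑' z, BDG c n x s z * BDG c n z t y := by
  intro t
  induction t with
  | zero =>
    intro y
    rw [Nat.add_zero]
    rw [tsum_eq_single y ?_]
    · rw [BDG_zero]
      by_cases hyn : y = n
      · simp [hyn, BDG_n]
      · simp [hyn]
    · intro z hz
      rw [BDG_zero]
      by_cases hyn : y = n
      · simp [hyn]
      · simp [hyn, (Ne.symm hz : ¬ y = z)]
  | succ t ih =>
    intro y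
    by_cases hyn : y = n
    · subst hyn
      rw [BDG_n]
      symm
      rw [ENNReal.tsum_eq_zero]
      intro z
      rw [BDG_n, mul_zero]
    · rw [show s + (t + 1) = (s + t) + 1 by omega, BDG_succ, if_neg hyn]
      calc ∑' z', BDG c n x (s+t) z' * ENNReal.ofReal (bdStep c.p c.q z' y)
          = ∑' z', (∑' z, BDG c n x s z * BDG c n z t z') * ENNReal.ofReal (bdStep c.p c.q z' y) := by
            exact tsum_congr fun z' => by rw [ih z']
        _ = ∑' z', ∑' z, BDG c n x s z * BDG c n z t z' * ENNReal.ofReal (bdStep c.p c.q z' y) := by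
            exact tsum_congr fun z' => ENNReal.tsum_mul_right.symm
        _ = ∑' z, ∑' z', BDG c n x s z * BDG c n z t z' * ENNReal.ofReal (bdStep c.p c.q z' y) := by
            exact ENNReal.tsum_comm
        _ = ∑' z, BDG c n x s z * ∑' z', BDG c n z t z' * ENNReal.ofReal (bdStep c.p c.q z' y) := by
            refine tsum_congr fun z => ?_
            rw [← ENNReal.tsum_mul_left]
            exact tsum_congr fun z' => by ring
        _ = ∑' z, BDG c n x s z * BDG c n z (t+1) y := by
            refine tsum_congr fun z => ?_
            rw [BDG_succ, if_neg hyn]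

/-- Event: avoid `n` up to time `t`. -/
def Eav (n : ℤ) (t : ℕ) : Set (ℕ → ℤ) := {ω | ∀ s ≤ t, ω s ≠ n}

/-- Survival function `F x t = P_x(T_n > t)`. -/
def BDF (c : BDChain b a) (n x : ℤ) (t : ℕ) : ℝ≥0∞ := c.law x (Eav n t)

lemma BDF_eq_tsum (n x : ℤ) (t : ℕ) : BDF c n x t = ∑' y, BDG c n x t y := by
  have hsplit : Eav n t = ⋃ y : ℤ, Aev n t y := by
    ext ω
    simp only [Eav, Aev, Set.mem_setOf_eq, Set.mem_iUnion]
    exact ⟨fun h => ⟨ω t, h, rfl⟩, fun ⟨y, h, _⟩ => h⟩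
  rw [BDF, hsplit]
  apply measure_iUnion
  · intro y z hyz
    rw [Function.onFun, Set.disjoint_left]
    rintro ω ⟨_, hy⟩ ⟨_, hz⟩
    exact hyz (hy ▸ hz ▸ rfl)
  · exact fun y => Aev_measurable n t y

lemma BDF_le_one (n x : ℤ) (t : ℕ) : BDF c n x t ≤ 1 := by
  have := c.prob x
  exact prob_le_one

lemma BDF_antitone (n x : ℤ) {t t' : ℕ} (h : t ≤ t') : BDF c n x t' ≤ BDF c n x t :=
  measure_mono fun ω hω s hs => hω s (le_trans hs h)

lemma BDF_CK (n x : ℤ) (s t : ℕ) :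
    BDF c n x (s + t) = ∑' z, BDG c n x s z * BDF c n z t := by
  rw [BDF_eq_tsum]
  calc ∑' y, BDG c n x (s+t) y
      = ∑' y, ∑' z, BDG c n x s z * BDG c n z t y := tsum_congr fun y => BDG_CK c n x s t y
    _ = ∑' z, ∑' y, BDG c n x s z * BDG c n z t y := ENNReal.tsum_comm
    _ = ∑' z, BDG c n x s z * ∑' y, BDG c n z t y := tsum_congr fun z => ENNReal.tsum_mul_left
    _ = ∑' z, BDG c n x s z * BDF c n z t := tsum_congr fun z => by rw [BDF_eq_tsum]

end CKsec
section Decay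
variable {b a : ℤ} (c : BDChain b a)

lemma bdStep_down (x : ℤ) : bdStep c.p c.q x (x - 1) = c.q x := by
  unfold bdStep
  rw [if_neg (by omega), if_pos rfl]

lemma straight_down (n : ℤ) (hn : b ≤ n) (z : ℤ) (hz1 : n + 1 ≤ z) (hz2 : z ≤ a) :
    ENNReal.ofReal (∏ m ∈ Finset.Icc (n+1) a, c.q m)
      ≤ c.law z {ω | ∀ i ≤ (z - n).toNat, ω i = z - i} := by
  have hcyl := law_cyl c z (fun i => z - (i : ℤ)) ((z - n).toNat)
  norm_num at hcyl
  have hterm : ∀ s ∈ Finset.range ((z-n).toNat),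
      ENNReal.ofReal (bdStep c.p c.q (z - (s:ℤ)) (z - ((s:ℤ) + 1))) =
        ENNReal.ofReal (c.q (z - s)) := by
    intro s _
    congr 1
    have h : (z - ((s:ℤ) + 1)) = (z - s) - 1 := by ring
    rw [h, bdStep_down]
  rw [hcyl, Finset.prod_congr rfl hterm, ← ENNReal.ofReal_prod_of_nonneg
    (fun m _ => c.q_nonneg _)]
  apply ENNReal.ofReal_le_ofReal
  have hsplit : Finset.Icc (n+1) a = Finset.Icc (n+1) z ∪ Finset.Icc (z+1) a := by
    ext m
    simp only [Finset.mem_Icc, Finset.mem_union]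
    omega
  have hdisj : Disjoint (Finset.Icc (n+1) z) (Finset.Icc (z+1) a) := by
    rw [Finset.disjoint_left]
    intro m h1 h2
    simp only [Finset.mem_Icc] at h1 h2
    omega
  rw [hsplit, Finset.prod_union hdisj]
  have h2le : ∏ m ∈ Finset.Icc (z+1) a, c.q m ≤ 1 :=
    Finset.prod_le_one (fun m _ => c.q_nonneg m) (fun m _ => c.q_le_one m)
  have h1eq : ∏ m ∈ Finset.Icc (n+1) z, c.q m = ∏ s ∈ Finset.range ((z-n).toNat), c.q (z - s) := by
    refine Finset.prod_nbij' (fun m => (z - m).toNat) (fun s => z - (s : ℤ)) ?_ ?_ ?_ ?_ ?_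
    · intro m hm
      simp only [Finset.mem_Icc] at hm
      simp only [Finset.mem_range]
      omega
    · intro s hs
      simp only [Finset.mem_range] at hs
      simp only [Finset.mem_Icc]
      omega
    · intro m hm
      simp only [Finset.mem_Icc] at hm
      omega
    · intro s hs
      simp only [Finset.mem_range] at hs
      omega
    · intro m hm
      simp only [Finset.mem_Icc] at hm
      congr 1
      omega
  rw [h1eq]
  have hnn : 0 ≤ ∏ s ∈ Finset.range ((z-n).toNat), c.q (z - s) :=
    Finset.prod_nonneg (fun s _ => c.q_nonneg _)
  nlinarith [Finset.prod_nonneg (fun s (_ : s ∈ Finset.range ((z-n).toNat)) => c.q_nonneg (z - s))]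

lemma BDF_bound (n : ℤ) (hn : b ≤ n) (z : ℤ) (hz1 : n + 1 ≤ z) (hz2 : z ≤ a) :
    BDF c n z ((a - n).toNat)
      ≤ 1 - ENNReal.ofReal (∏ m ∈ Finset.Icc (n+1) a, c.q m) := by
  set D : Set (ℕ → ℤ) := {ω | ∀ i ≤ (z - n).toNat, ω i = z - i} with hD
  have hdisj : Disjoint (Eav n ((a-n).toNat)) D := by
    rw [Set.disjoint_left]
    intro ω hω hωD
    have h1 : ω ((z-n).toNat) = z - ((z-n).toNat : ℤ) := hωD _ le_rfl
    have h2 : z - (((z-n).toNat : ℕ) : ℤ) = n := by omega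
    exact hω ((z-n).toNat) (by omega : (z-n).toNat ≤ (a-n).toNat) (h1.trans h2)
  have hmeasD : MeasurableSet D := cyl_measurable _ _
  haveI := c.prob z
  have hsum : BDF c n z ((a-n).toNat) + c.law z D ≤ 1 := by
    show c.law z (Eav n ((a-n).toNat)) + c.law z D ≤ 1
    rw [← measure_union hdisj hmeasD]
    exact prob_le_one
  have h1 : BDF c n z ((a-n).toNat) ≤ 1 - c.law z D :=
    ENNReal.le_sub_of_add_le_right (measure_ne_top _ _) hsum
  refine h1.trans (tsub_le_tsub_left ?_ 1)
  exact straight_down c n hn z hz1 hz2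

end Decay
section Tendsto0
variable {b a : ℤ} (c : BDChain b a)

lemma BDF_decay (n : ℤ) (hn : b ≤ n) (hna : n < a) :
    ∀ (k : ℕ) (z : ℤ), n + 1 ≤ z → z ≤ a →
      BDF c n z (k * (a - n).toNat)
        ≤ (1 - ENNReal.ofReal (∏ m ∈ Finset.Icc (n+1) a, c.q m)) ^ k := by
  intro k
  induction k with
  | zero => intro z _ _; simpa using BDF_le_one c n z 0
  | succ k ih =>
    intro z hz1 hz2
    have hstep : (k+1) * (a-n).toNat = (a-n).toNat + k * (a-n).toNat := by ring
    rw [hstep, BDF_CK]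
    calc ∑' w, BDG c n z ((a-n).toNat) w * BDF c n w (k * (a-n).toNat)
        ≤ ∑' w, BDG c n z ((a-n).toNat) w *
            (1 - ENNReal.ofReal (∏ m ∈ Finset.Icc (n+1) a, c.q m)) ^ k := by
          refine ENNReal.tsum_le_tsum fun w => ?_
          by_cases hw : BDG c n z ((a-n).toNat) w = 0
          · rw [hw, zero_mul, zero_mul]
          · obtain ⟨hw1, hw2⟩ := BDG_support c n z hz1 hz2 _ w hw
            exact mul_le_mul_right (ih w hw1 hw2) _
      _ = BDF c n z ((a-n).toNat) *
            (1 - ENNReal.ofReal (∏ m ∈ Finset.Icc (n+1) a, c.q m)) ^ k := by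
          rw [ENNReal.tsum_mul_right, ← BDF_eq_tsum]
      _ ≤ (1 - ENNReal.ofReal (∏ m ∈ Finset.Icc (n+1) a, c.q m)) ^ (k+1) := by
          rw [pow_succ']
          exact mul_le_mul_left (BDF_bound c n hn z hz1 hz2) _
  
lemma BDF_tendsto_zero (n : ℤ) (hn : b ≤ n) (hna : n < a) (x : ℤ)
    (hx1 : n + 1 ≤ x) (hx2 : x ≤ a) :
    Filter.Tendsto (BDF c n x) Filter.atTop (nhds 0) := by
  set ε := ∏ m ∈ Finset.Icc (n+1) a, c.q m with hε
  have hεpos : 0 < ε := Finset.prod_pos fun m hm => by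
    simp only [Finset.mem_Icc] at hm
    exact c.q_pos m (by omega) hm.2
  set r := 1 - ENNReal.ofReal ε with hr
  have hrlt : r < 1 := by
    apply ENNReal.sub_lt_self one_ne_top one_ne_zero
    simpa using hεpos
  set N := (a - n).toNat with hN
  have hNpos : 0 < N := by omega
  have hbound : ∀ t, BDF c n x t ≤ r ^ (t / N) := by
    intro t
    have h1 : (t / N) * N ≤ t := Nat.div_mul_le_self t N
    exact (BDF_antitone c n x h1).trans (BDF_decay c n hn hna (t / N) x hx1 hx2)
  have hdiv : Filter.Tendsto (fun t : ℕ => t / N) Filter.atTop Filter.atTop := by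
    rw [Filter.tendsto_atTop_atTop]
    intro k
    exact ⟨k * N, fun t ht => (Nat.le_div_iff_mul_le hNpos).2 ht⟩
  have hpow : Filter.Tendsto (fun t : ℕ => r ^ (t / N)) Filter.atTop (nhds 0) :=
    (ENNReal.tendsto_pow_atTop_nhds_zero_of_lt_one hrlt).comp hdiv
  exact tendsto_of_tendsto_of_tendsto_of_le_of_le tendsto_const_nhds hpow
    (fun t => zero_le) hbound

end Tendsto0
section Harmonic
variable {b a : ℤ} (c : BDChain b a) (π : ℤ → ℝ)

/-- The candidate mean hitting time function. -/
def BDH (c : BDChain b a) (π : ℤ → ℝ) (n : ℤ) (k : ℤ) : ℝ :=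
  ∑ m ∈ Finset.Icc (n+1) k, (∑ i ∈ Finset.Icc m a, π i) / (c.q m * π m)

variable {n : ℤ}

lemma BDH_term_nonneg (hπ : c.IsStationary π) (hbn : b ≤ n) (m : ℤ) (hm : n + 1 ≤ m) :
    0 ≤ (∑ i ∈ Finset.Icc m a, π i) / (c.q m * π m) := by
  obtain ⟨hpos, hzero, hsum, hrev⟩ := hπ
  rcases le_or_gt m a with hma | hma
  · apply div_nonneg
    · exact Finset.sum_nonneg fun i hi => by
        simp only [Finset.mem_Icc] at hi
        exact (hpos i (by omega) hi.2).le
    · exact mul_nonneg (c.q_nonneg m) (hpos m (by omega) hma).le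
  · simp [c.q_zero m (Or.inr hma)]

lemma BDH_nonneg (hπ : c.IsStationary π) (hbn : b ≤ n) (k : ℤ) : 0 ≤ BDH c π n k :=
  Finset.sum_nonneg fun m hm => BDH_term_nonneg c π hπ hbn m (Finset.mem_Icc.1 hm).1

lemma BDH_mono (hπ : c.IsStationary π) (hbn : b ≤ n) {k k' : ℤ} (h : k ≤ k') :
    BDH c π n k ≤ BDH c π n k' :=
  Finset.sum_le_sum_of_subset_of_nonneg (Finset.Icc_subset_Icc_right h)
    (fun m hm _ => BDH_term_nonneg c π hπ hbn m (Finset.mem_Icc.1 hm).1)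

lemma BDH_le_top (hπ : c.IsStationary π) (hbn : b ≤ n) (hna : n < a) (y : ℤ) :
    BDH c π n y ≤ BDH c π n a := by
  rcases le_or_gt y a with h | h
  · exact BDH_mono c π hπ hbn h
  · have hsplit : Finset.Icc (n+1) y = Finset.Icc (n+1) a ∪ Finset.Icc (a+1) y := by
      ext m; simp only [Finset.mem_Icc, Finset.mem_union]; omega
    have hdisj : Disjoint (Finset.Icc (n+1) a) (Finset.Icc (a+1) y) := by
      rw [Finset.disjoint_left]; intro m h1 h2
      simp only [Finset.mem_Icc] at h1 h2; omega
    rw [BDH, hsplit, Finset.sum_union hdisj]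
    have hz : ∑ m ∈ Finset.Icc (a+1) y, (∑ i ∈ Finset.Icc m a, π i) / (c.q m * π m) = 0 := by
      apply Finset.sum_eq_zero
      intro m hm
      simp only [Finset.mem_Icc] at hm
      simp [c.q_zero m (Or.inr (by omega : a < m))]
    rw [hz, add_zero]
    exact le_refl _

lemma BDH_diff (z : ℤ) (hz : n + 1 ≤ z) :
    BDH c π n z = BDH c π n (z-1) + (∑ i ∈ Finset.Icc z a, π i) / (c.q z * π z) := by
  rw [BDH, BDH, show Finset.Icc (n+1) z = insert z (Finset.Icc (n+1) (z-1)) by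
    ext m; simp only [Finset.mem_Icc, Finset.mem_insert]; omega,
    Finset.sum_insert (by simp only [Finset.mem_Icc]; omega)]
  ring

lemma BDH_harmonic (hπ : c.IsStationary π) (hbn : b ≤ n) (z : ℤ) (hz1 : n + 1 ≤ z) (hz2 : z ≤ a) :
    BDH c π n z = 1 + c.q z * BDH c π n (z-1)
      + (1 - c.p z - c.q z) * BDH c π n z + c.p z * BDH c π n (z+1) := by
  obtain ⟨hpos, hzero, hsum, hrev⟩ := hπ
  have hq : c.q z ≠ 0 := (c.q_pos z (by omega) hz2).ne'
  have hπz : π z ≠ 0 := (hpos z (by omega) hz2).ne'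
  have e1 : BDH c π n z = BDH c π n (z-1) + (∑ i ∈ Finset.Icc z a, π i) / (c.q z * π z) :=
    BDH_diff c π z hz1
  have e2 : BDH c π n (z+1) = BDH c π n z + (∑ i ∈ Finset.Icc (z+1) a, π i) / (c.q (z+1) * π (z+1)) := by
    have h := BDH_diff (n := n) c π (z+1) (by omega)
    simpa using h
  have hsplitS : ∑ i ∈ Finset.Icc z a, π i = π z + ∑ i ∈ Finset.Icc (z+1) a, π i := by
    rw [show Finset.Icc z a = insert z (Finset.Icc (z+1) a) by
      ext i; simp only [Finset.mem_Icc, Finset.mem_insert]; omega,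
      Finset.sum_insert (by simp only [Finset.mem_Icc]; omega)]
  have key : c.q z * ((∑ i ∈ Finset.Icc z a, π i) / (c.q z * π z))
      = 1 + c.p z * ((∑ i ∈ Finset.Icc (z+1) a, π i) / (c.q (z+1) * π (z+1))) := by
    rcases lt_or_ge z a with hza | hza
    · have hq1 : c.q (z+1) ≠ 0 := (c.q_pos (z+1) (by omega) (by omega)).ne'
      have hπ1 : π (z+1) ≠ 0 := (hpos (z+1) (by omega) (by omega)).ne'
      have hrevz : π (z+1) * c.q (z+1) = π z * c.p z := by
        have h := hrev (z+1) (by omega) (by omega)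
        simpa using h
      rw [hsplitS]
      field_simp
      linear_combination (∑ x ∈ Finset.Icc (z+1) a, π x) * hrevz
    · have hza' : z = a := le_antisymm hz2 hza
      have hpz : c.p z = 0 := c.p_zero z (Or.inr (by omega))
      have hSz : ∑ i ∈ Finset.Icc z a, π i = π z := by
        rw [show Finset.Icc z a = {z} by ext i; simp only [Finset.mem_Icc, Finset.mem_singleton]; omega]
        exact Finset.sum_singleton _ _
      rw [hpz, hSz]
      field_simp
      simp
  rw [e2, e1]
  ring_nf
  ring_nf at key
  linarith [key]

end Harmonic
section Telescope
variable {b a : ℤ} (c : BDChain b a) (π : ℤ → ℝ) {n : ℤ}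

lemma bdStep_self (z : ℤ) : bdStep c.p c.q z z = 1 - c.p z - c.q z := by
  unfold bdStep
  rw [if_neg (by omega), if_neg (by omega), if_pos rfl]

lemma bdStep_up (z : ℤ) : bdStep c.p c.q z (z + 1) = c.p z := by
  unfold bdStep
  rw [if_pos rfl]

lemma BDH_at_n : BDH c π n n = 0 := by
  rw [BDH, Finset.Icc_eq_empty (by omega), Finset.sum_empty]

lemma hit_identity (hπ : c.IsStationary π) (hbn : b ≤ n) (z : ℤ)
    (hz1 : n + 1 ≤ z) (hz2 : z ≤ a) :
    ENNReal.ofReal (BDH c π n z)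
      = 1 + ∑' y : ℤ, (if y = n then 0 else
          ENNReal.ofReal (bdStep c.p c.q z y) * ENNReal.ofReal (BDH c π n y)) := by
  classical
  have hnn := BDH_nonneg c π hπ hbn
  have hr : 0 ≤ 1 - c.p z - c.q z := by
    have := c.r_nonneg z (by omega) hz2
    linarith
  have hsum3 : ∑' y : ℤ, (if y = n then 0 else
      ENNReal.ofReal (bdStep c.p c.q z y) * ENNReal.ofReal (BDH c π n y))
      = ENNReal.ofReal (c.q z) * ENNReal.ofReal (BDH c π n (z-1))
        + ENNReal.ofReal (1 - c.p z - c.q z) * ENNReal.ofReal (BDH c π n z)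
        + ENNReal.ofReal (c.p z) * ENNReal.ofReal (BDH c π n (z+1)) := by
    rw [tsum_eq_sum (s := ({z-1, z, z+1} : Finset ℤ)) ?_]
    · rw [Finset.sum_insert (by simp only [Finset.mem_insert, Finset.mem_singleton]; omega),
        Finset.sum_insert (by simp only [Finset.mem_singleton]; omega),
        Finset.sum_singleton]
      have h2 : (if z = n then (0:ℝ≥0∞) else
          ENNReal.ofReal (bdStep c.p c.q z z) * ENNReal.ofReal (BDH c π n z))
          = ENNReal.ofReal (1 - c.p z - c.q z) * ENNReal.ofReal (BDH c π n z) := by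
        rw [if_neg (by omega), bdStep_self]
      have h3 : (if z + 1 = n then (0:ℝ≥0∞) else
          ENNReal.ofReal (bdStep c.p c.q z (z+1)) * ENNReal.ofReal (BDH c π n (z+1)))
          = ENNReal.ofReal (c.p z) * ENNReal.ofReal (BDH c π n (z+1)) := by
        rw [if_neg (by omega), bdStep_up]
      have h1 : (if z - 1 = n then (0:ℝ≥0∞) else
          ENNReal.ofReal (bdStep c.p c.q z (z-1)) * ENNReal.ofReal (BDH c π n (z-1)))
          = ENNReal.ofReal (c.q z) * ENNReal.ofReal (BDH c π n (z-1)) := by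
        by_cases hzn : z - 1 = n
        · rw [if_pos hzn, hzn, BDH_at_n, ENNReal.ofReal_zero, mul_zero]
        · rw [if_neg hzn, bdStep_down]
      rw [h1, h2, h3]
      ring
    · intro y hy
      simp only [Finset.mem_insert, Finset.mem_singleton] at hy
      push_neg at hy
      have hstep : bdStep c.p c.q z y = 0 := by
        by_contra hc
        rcases bdStep_cases c z y hc with ⟨h, _⟩ | ⟨h, _⟩ | h <;> omega
      rw [hstep]
      simp
  have hharm := BDH_harmonic c π hπ hbn z hz1 hz2
  have hq0 : 0 ≤ c.q z * BDH c π n (z-1) := mul_nonneg (c.q_nonneg z) (hnn _)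
  have hr0 : 0 ≤ (1 - c.p z - c.q z) * BDH c π n z := mul_nonneg hr (hnn _)
  have hp0 : 0 ≤ c.p z * BDH c π n (z+1) := mul_nonneg (c.p_nonneg z) (hnn _)
  have e : ENNReal.ofReal (1 + c.q z * BDH c π n (z-1)
        + (1 - c.p z - c.q z) * BDH c π n z + c.p z * BDH c π n (z+1))
      = 1 + (ENNReal.ofReal (c.q z) * ENNReal.ofReal (BDH c π n (z-1))
        + ENNReal.ofReal (1 - c.p z - c.q z) * ENNReal.ofReal (BDH c π n z)
        + ENNReal.ofReal (c.p z) * ENNReal.ofReal (BDH c π n (z+1))) := by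
    rw [ENNReal.ofReal_add (by linarith) hp0, ENNReal.ofReal_add (by linarith) hr0,
      ENNReal.ofReal_add (by norm_num) hq0, ENNReal.ofReal_one,
      ENNReal.ofReal_mul (c.q_nonneg z), ENNReal.ofReal_mul hr, ENNReal.ofReal_mul (c.p_nonneg z)]
    ring
  rw [hsum3]
  conv_lhs => rw [hharm]
  exact e

lemma u_step (hπ : c.IsStationary π) (hbn : b ≤ n) (j : ℤ)
    (hj1 : n + 1 ≤ j) (hj2 : j ≤ a) (t : ℕ) :
    ∑' y, BDG c n j t y * ENNReal.ofReal (BDH c π n y)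
      = BDF c n j t + ∑' y, BDG c n j (t+1) y * ENNReal.ofReal (BDH c π n y) := by
  classical
  have step1 : ∀ z : ℤ, BDG c n j t z * ENNReal.ofReal (BDH c π n z)
      = BDG c n j t z + BDG c n j t z * ∑' y : ℤ, (if y = n then 0 else
          ENNReal.ofReal (bdStep c.p c.q z y) * ENNReal.ofReal (BDH c π n y)) := by
    intro z
    by_cases hz : BDG c n j t z = 0
    · rw [hz, zero_mul, zero_mul, add_zero]
    · obtain ⟨hz1, hz2⟩ := BDG_support c n j hj1 hj2 t z hz
      rw [hit_identity c π hπ hbn z hz1 hz2, mul_add, mul_one]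
  calc ∑' z, BDG c n j t z * ENNReal.ofReal (BDH c π n z)
      = ∑' z, (BDG c n j t z + BDG c n j t z * ∑' y : ℤ, (if y = n then 0 else
          ENNReal.ofReal (bdStep c.p c.q z y) * ENNReal.ofReal (BDH c π n y))) :=
        tsum_congr step1
    _ = (∑' z, BDG c n j t z) + ∑' z, BDG c n j t z * ∑' y : ℤ, (if y = n then 0 else
          ENNReal.ofReal (bdStep c.p c.q z y) * ENNReal.ofReal (BDH c π n y)) :=
        ENNReal.tsum_add
    _ = BDF c n j t + ∑' z, ∑' y : ℤ, BDG c n j t z * (if y = n then 0 else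
          ENNReal.ofReal (bdStep c.p c.q z y) * ENNReal.ofReal (BDH c π n y)) := by
        rw [← BDF_eq_tsum]
        congr 1
        exact tsum_congr fun z => ENNReal.tsum_mul_left.symm
    _ = BDF c n j t + ∑' y : ℤ, ∑' z, BDG c n j t z * (if y = n then 0 else
          ENNReal.ofReal (bdStep c.p c.q z y) * ENNReal.ofReal (BDH c π n y)) := by
        rw [ENNReal.tsum_comm (f := fun z y => BDG c n j t z * (if y = n then 0 else
          ENNReal.ofReal (bdStep c.p c.q z y) * ENNReal.ofReal (BDH c π n y)))]
    _ = BDF c n j t + ∑' y, BDG c n j (t+1) y * ENNReal.ofReal (BDH c π n y) := by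
        congr 1
        refine tsum_congr fun y => ?_
        by_cases hyn : y = n
        · simp [hyn, BDG_n]
        · simp only [if_neg hyn]
          rw [BDG_succ, if_neg hyn]
          calc ∑' z, BDG c n j t z * (ENNReal.ofReal (bdStep c.p c.q z y) * ENNReal.ofReal (BDH c π n y))
              = ∑' z, (BDG c n j t z * ENNReal.ofReal (bdStep c.p c.q z y)) * ENNReal.ofReal (BDH c π n y) :=
                tsum_congr fun z => (mul_assoc _ _ _).symm
            _ = (∑' z, BDG c n j t z * ENNReal.ofReal (bdStep c.p c.q z y)) * ENNReal.ofReal (BDH c π n y) :=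
                ENNReal.tsum_mul_right

lemma u_zero (hbn : b ≤ n) (j : ℤ) (hj1 : n + 1 ≤ j) :
    ∑' y, BDG c n j 0 y * ENNReal.ofReal (BDH c π n y)
      = ENNReal.ofReal (BDH c π n j) := by
  rw [tsum_eq_single j ?_]
  · rw [BDG_zero, if_neg (by omega), if_pos rfl, one_mul]
  · intro y hy
    rw [BDG_zero]
    by_cases hyn : y = n
    · rw [if_pos hyn, zero_mul]
    · rw [if_neg hyn, if_neg hy, zero_mul]

lemma partial_sum_eq (hπ : c.IsStationary π) (hbn : b ≤ n) (j : ℤ)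
    (hj1 : n + 1 ≤ j) (hj2 : j ≤ a) (T : ℕ) :
    (∑ t ∈ Finset.range T, BDF c n j t)
        + ∑' y, BDG c n j T y * ENNReal.ofReal (BDH c π n y)
      = ENNReal.ofReal (BDH c π n j) := by
  induction T with
  | zero => simpa using u_zero c π hbn j hj1
  | succ T ih =>
    rw [Finset.sum_range_succ, ← ih, u_step c π hπ hbn j hj1 hj2 T]
    ring

lemma u_le (hπ : c.IsStationary π) (hbn : b ≤ n) (hna : n < a) (j : ℤ) (t : ℕ) :
    ∑' y, BDG c n j t y * ENNReal.ofReal (BDH c π n y)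
      ≤ ENNReal.ofReal (BDH c π n a) * BDF c n j t := by
  calc ∑' y, BDG c n j t y * ENNReal.ofReal (BDH c π n y)
      ≤ ∑' y, BDG c n j t y * ENNReal.ofReal (BDH c π n a) := by
        refine ENNReal.tsum_le_tsum fun y => ?_
        exact mul_le_mul_right (ENNReal.ofReal_le_ofReal (BDH_le_top c π hπ hbn hna y)) _
    _ = ENNReal.ofReal (BDH c π n a) * BDF c n j t := by
        rw [ENNReal.tsum_mul_right, ← BDF_eq_tsum]
        ring

lemma tsum_BDF_eq (hπ : c.IsStationary π) (hbn : b ≤ n) (hna : n < a) (j : ℤ)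
    (hj1 : n + 1 ≤ j) (hj2 : j ≤ a) :
    ∑' t, BDF c n j t = ENNReal.ofReal (BDH c π n j) := by
  set u : ℕ → ℝ≥0∞ := fun t => ∑' y, BDG c n j t y * ENNReal.ofReal (BDH c π n y) with hu
  have hpartial : ∀ T, (∑ t ∈ Finset.range T, BDF c n j t) + u T
      = ENNReal.ofReal (BDH c π n j) := partial_sum_eq c π hπ hbn j hj1 hj2
  have hutend : Filter.Tendsto u Filter.atTop (nhds 0) := by
    have h1 : Filter.Tendsto (fun t => ENNReal.ofReal (BDH c π n a) * BDF c n j t)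
        Filter.atTop (nhds 0) := by
      have h0 := ENNReal.Tendsto.const_mul (a := ENNReal.ofReal (BDH c π n a))
        (BDF_tendsto_zero c n hbn hna j hj1 hj2) (Or.inr ENNReal.ofReal_ne_top)
      simpa using h0
    exact tendsto_of_tendsto_of_tendsto_of_le_of_le tendsto_const_nhds h1
      (fun t => zero_le) (fun t => u_le c π hπ hbn hna j t)
  apply le_antisymm
  · apply ENNReal.tsum_le_of_sum_range_le
    intro T
    calc ∑ t ∈ Finset.range T, BDF c n j t
        ≤ (∑ t ∈ Finset.range T, BDF c n j t) + u T := le_self_add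
      _ = ENNReal.ofReal (BDH c π n j) := hpartial T
  · apply ENNReal.le_of_forall_pos_le_add
    intro ε hε _
    obtain ⟨T, hT⟩ := (ENNReal.tendsto_atTop_zero.1 hutend) ε (by simpa using hε)
    calc ENNReal.ofReal (BDH c π n j)
        = (∑ t ∈ Finset.range T, BDF c n j t) + u T := (hpartial T).symm
      _ ≤ (∑' t, BDF c n j t) + ε := by
          exact add_le_add (ENNReal.sum_le_tsum _) (hT T le_rfl)

end Telescope
section Final

lemma Eav_measurable (n : ℤ) (t : ℕ) : MeasurableSet (Eav n t) := avoid_measurable n t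

lemma hitTime_eq_tsum (n : ℤ) (ω : ℕ → ℤ) :
    hitTime {n} ω = ∑' t : ℕ, (Eav n t).indicator (fun _ => (1:ℝ≥0∞)) ω := by
  classical
  by_cases h : ∃ t : ℕ, ω t = n
  · set m := Nat.find h with hm
    have hspec : ω m = n := Nat.find_spec h
    have hlhs : hitTime {n} ω = (m : ℝ≥0∞) := by
      apply le_antisymm
      · exact iInf_le_of_le m (iInf_le_of_le hspec le_rfl)
      · refine le_iInf fun t => le_iInf fun ht => ?_
        exact Nat.cast_le.mpr (Nat.find_min' h ht)
    have hind : ∀ t : ℕ, (Eav n t).indicator (fun _ => (1:ℝ≥0∞)) ω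
        = if t < m then 1 else 0 := by
      intro t
      by_cases htm : t < m
      · rw [if_pos htm, Set.indicator_of_mem]
        intro s hs
        exact Nat.find_min h (by omega)
      · rw [if_neg htm, Set.indicator_of_notMem]
        intro hmem
        exact hmem m (by omega) hspec
    rw [hlhs]
    rw [tsum_congr hind, tsum_eq_sum (s := Finset.range m)
      (fun t ht => if_neg (by simp only [Finset.mem_range] at ht; omega))]
    rw [Finset.sum_congr rfl (fun t ht => if_pos (Finset.mem_range.1 ht)), Finset.sum_const,
      Finset.card_range, nsmul_eq_mul, mul_one]
  · push_neg at h
    have hlhs : hitTime {n} ω = ⊤ := by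
      rw [hitTime]
      rw [iInf_eq_top]
      intro t
      rw [iInf_eq_top]
      intro ht
      exact absurd ht (h t)
    have hind : ∀ t : ℕ, (Eav n t).indicator (fun _ => (1:ℝ≥0∞)) ω = 1 := by
      intro t
      exact Set.indicator_of_mem (show ω ∈ Eav n t from fun s _ => h s) _
    rw [hlhs, tsum_congr hind]
    exact (ENNReal.tsum_const_eq_top_of_ne_zero one_ne_zero).symm

/-- For an irreducible birth-and-death chain on `⟦b,a⟧` with
reversible invariant probability measure `π`, for all `b ≤ n < j ≤ a`:
`E[T_{j→n}] = Σ_{k=n+1}^{j} π(⟦k,a⟧) / (q_k π(k))`. -/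
theorem mean_hitting_time_down {b a : ℤ} (hab : b < a) (c : BDChain b a)
    (π : ℤ → ℝ) (hπ : c.IsStationary π)
    (n j : ℤ) (hn : b ≤ n) (hnj : n < j) (hj : j ≤ a) :
    c.eT j n = ENNReal.ofReal
      (∑ k ∈ Finset.Icc (n + 1) j, (∑ i ∈ Finset.Icc k a, π i) / (c.q k * π k)) := by
  have hna : n < a := lt_of_lt_of_le hnj hj
  have step1 : c.eT j n = ∑' t : ℕ, BDF c n j t := by
    rw [BDChain.eT]
    rw [lintegral_congr (fun ω => hitTime_eq_tsum n ω)]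
    rw [lintegral_tsum (fun t => (measurable_const.indicator (Eav_measurable n t)).aemeasurable)]
    exact tsum_congr fun t => lintegral_indicator_one (Eav_measurable n t)
  rw [step1, tsum_BDF_eq c π hπ hn hna j (by omega) hj]
  rfl

end Final
end
end

section
/- Let X be an irreducible birth-and-death chain on ⟦b,a⟧ with transition probabilities p_x, q_x and reversible invariant probability measure π. Then for all integers b ≤ j < n ≤ a: E[T_{j→n}] = Σ_{k=j}^{n−1} π(⟦b,k⟧) / ( p_k · π(k) ). -/
open MeasureTheory Filter Topology ENNReal ProbabilityTheory

noncomputable section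

namespace BD

def cyl (u : ℕ → ℤ) (m : ℕ) : Set (ℕ → ℤ) := {ω | ∀ i ≤ m, ω i = u i}

lemma measurableSet_eq_coord (i : ℕ) (z : ℤ) : MeasurableSet {ω : ℕ → ℤ | ω i = z} := by
  have : {ω : ℕ → ℤ | ω i = z} = (fun ω : ℕ → ℤ => ω i) ⁻¹' {z} := rfl
  rw [this]
  exact (measurable_pi_apply i) (measurableSet_singleton z)

lemma measurableSet_cyl (u : ℕ → ℤ) (m : ℕ) : MeasurableSet (cyl u m) := by
  have : cyl u m = ⋂ i ∈ Set.Iic m, {ω : ℕ → ℤ | ω i = u i} := by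
    ext ω; simp [cyl, Set.mem_iInter]
  rw [this]
  exact MeasurableSet.biInter (Set.to_countable _) (fun i _ => measurableSet_eq_coord i (u i))

variable {b a : ℤ} (c : BDChain b a)

lemma law_coord0 (x y : ℤ) :
    c.law x {ω : ℕ → ℤ | ω 0 = y} = if y = x then 1 else 0 := by
  haveI := c.prob x
  split_ifs with h
  · rw [h]; exact c.init x
  · have hsub : {ω : ℕ → ℤ | ω 0 = y} ⊆ {ω : ℕ → ℤ | ω 0 = x}ᶜ := by
      intro ω hω hx
      exact h (hω.symm.trans hx)
    refine le_antisymm ?_ zero_le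
    calc c.law x {ω : ℕ → ℤ | ω 0 = y} ≤ c.law x {ω : ℕ → ℤ | ω 0 = x}ᶜ :=
          measure_mono hsub
    _ = 0 := by
        rw [measure_compl (measurableSet_eq_coord 0 x) (measure_ne_top _ _), c.init x]
        simp

lemma law_cyl (x : ℤ) (u : ℕ → ℤ) (m : ℕ) :
    c.law x (cyl u m) = (if u 0 = x then 1 else 0) *
      ∏ i ∈ Finset.range m, ENNReal.ofReal (bdStep c.p c.q (u i) (u (i+1))) := by
  induction m with
  | zero =>
    have : cyl u 0 = {ω : ℕ → ℤ | ω 0 = u 0} := by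
      ext ω; constructor
      · intro h; exact h 0 le_rfl
      · intro h i hi; interval_cases i; exact h
    rw [this, law_coord0]; simp
  | succ m ih =>
    have := c.markov x u m
    rw [show cyl u (m+1) = {ω | ∀ i ≤ m + 1, ω i = u i} from rfl, this,
      show {ω | ∀ i ≤ m, ω i = u i} = cyl u m from rfl, ih,
      Finset.prod_range_succ]
    ring

/-- the shift map -/
def shift (ω : ℕ → ℤ) : ℕ → ℤ := fun k => ω (k + 1)

lemma measurable_shift : Measurable shift :=
  measurable_pi_lambda _ (fun k => measurable_pi_apply (k+1))

/-- 2-point path -/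
def u2 (x y : ℤ) : ℕ → ℤ := fun k => if k = 0 then x else y

lemma cyl_u2 (x y : ℤ) : cyl (u2 x y) 1 = {ω : ℕ → ℤ | ω 0 = x ∧ ω 1 = y} := by
  ext ω; constructor
  · intro h; exact ⟨h 0 (by norm_num), h 1 le_rfl⟩
  · rintro ⟨h0, h1⟩ i hi
    interval_cases i
    · exact h0
    · exact h1


-- π-system and generation (from part 1)
def Cyl : Set (Set (ℕ → ℤ)) := {S | ∃ m : ℕ, ∃ u : ℕ → ℤ, S = cyl u m}

lemma isPiSystem_Cyl : IsPiSystem Cyl := by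
  rintro s ⟨m, u, rfl⟩ t ⟨k, v, rfl⟩ ⟨ω, hω1, hω2⟩
  rcases le_total m k with h | h
  · refine ⟨k, v, ?_⟩
    ext ω'; constructor
    · rintro ⟨h1, h2⟩; exact h2
    · intro h2
      refine ⟨fun i hi => ?_, h2⟩
      rw [h2 i (hi.trans h), ← hω2 i (hi.trans h), hω1 i hi]
  · refine ⟨m, u, ?_⟩
    ext ω'; constructor
    · rintro ⟨h1, h2⟩; exact h1
    · intro h1
      refine ⟨h1, fun i hi => ?_⟩
      rw [h1 i (hi.trans h), ← hω1 i (hi.trans h), hω2 i hi]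

def pad (m : ℕ) (u : Fin (m+1) → ℤ) : ℕ → ℤ := fun k => if h : k < m + 1 then u ⟨k, h⟩ else 0

lemma gen_Cyl : (inferInstance : MeasurableSpace (ℕ → ℤ)) = MeasurableSpace.generateFrom Cyl := by
  apply le_antisymm
  · refine iSup_le fun i => ?_
    rw [MeasurableSpace.comap_le_iff_le_map]
    intro s _
    show MeasurableSet[MeasurableSpace.generateFrom Cyl] ((fun ω : ℕ → ℤ => ω i) ⁻¹' s)
    have : (fun ω : ℕ → ℤ => ω i) ⁻¹' s = ⋃ z ∈ s, {ω : ℕ → ℤ | ω i = z} := by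
      ext ω; simp
    rw [this]
    refine MeasurableSet.biUnion (Set.to_countable s) (fun z _ => ?_)
    have : {ω : ℕ → ℤ | ω i = z}
        = ⋃ (u : {u : Fin (i+1) → ℤ // u ⟨i, Nat.lt_succ_self i⟩ = z}), cyl (pad i u.1) i := by
      ext ω; constructor
      · intro (hz : ω i = z)
        refine Set.mem_iUnion.2 ⟨⟨fun k => ω k, hz⟩, fun k hk => ?_⟩
        simp [pad, Nat.lt_succ_of_le hk]
      · rintro hω
        rcases Set.mem_iUnion.1 hω with ⟨⟨u, hu⟩, h⟩
        have := h i le_rfl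
        simpa [pad, hu] using this
    rw [this]
    exact MeasurableSet.iUnion fun u =>
      MeasurableSpace.measurableSet_generateFrom ⟨i, pad i u.1, rfl⟩
  · exact MeasurableSpace.generateFrom_le (by rintro s ⟨m, u, rfl⟩; exact measurableSet_cyl u m)

/-- The one-step Markov property. -/
lemma oneStep (x y : ℤ) {A : Set (ℕ → ℤ)} (hA : MeasurableSet A) :
    c.law x (cyl (u2 x y) 1 ∩ shift ⁻¹' A)
      = ENNReal.ofReal (bdStep c.p c.q x y) * c.law y A := by
  haveI := c.prob x
  haveI := c.prob y
  set μ₁ : Measure (ℕ → ℤ) := Measure.map shift ((c.law x).restrict (cyl (u2 x y) 1)) with hμ₁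
  set μ₂ : Measure (ℕ → ℤ) := (ENNReal.ofReal (bdStep c.p c.q x y)) • c.law y with hμ₂
  have key : μ₁ = μ₂ := by
    haveI : IsFiniteMeasure ((c.law x).restrict (cyl (u2 x y) 1)) :=
      MeasureTheory.isFiniteMeasureRestrict _ _
    haveI : IsFiniteMeasure μ₁ := by
      rw [hμ₁]; exact Measure.isFiniteMeasure_map _ _
    refine MeasureTheory.ext_of_generate_finite Cyl gen_Cyl isPiSystem_Cyl ?_ ?_
    · rintro s ⟨k, v, rfl⟩
      rw [hμ₁, Measure.map_apply measurable_shift (measurableSet_cyl v k),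
        Measure.restrict_apply (measurable_shift (measurableSet_cyl v k)), hμ₂,
        Measure.smul_apply, smul_eq_mul, law_cyl]
      by_cases hv : v 0 = y
      · have hset : shift ⁻¹' cyl v k ∩ cyl (u2 x y) 1
            = cyl (fun i => if i = 0 then x else v (i - 1)) (k + 1) := by
          rw [cyl_u2]
          ext ω
          simp only [Set.mem_inter_iff, Set.mem_preimage, Set.mem_setOf_eq, cyl]
          constructor
          · rintro ⟨hsh, h0, h1⟩ i hi
            rcases Nat.eq_zero_or_pos i with rfl | hpos
            · simpa using h0
            · obtain ⟨j, hj⟩ : ∃ j, i = j + 1 := ⟨i - 1, by omega⟩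
              subst hj
              have := hsh j (by omega)
              simp only [shift] at this
              rw [if_neg (by omega)]
              simpa using this
          · intro h
            refine ⟨fun j hj => ?_, ?_, ?_⟩
            · have := h (j + 1) (by omega)
              rw [if_neg (by omega)] at this
              simpa [shift] using this
            · simpa using h 0 (by omega)
            · have := h 1 (by omega)
              norm_num at this
              simpa [hv] using this
        rw [hset, law_cyl,
          if_pos (show (fun i => if i = 0 then x else v (i-1)) 0 = x by simp),
          if_pos hv, Finset.prod_range_succ']
        have e1 : ∀ i ∈ Finset.range k,
            ENNReal.ofReal (bdStep c.p c.q
                ((fun i => if i = 0 then x else v (i - 1)) (i + 1))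
                ((fun i => if i = 0 then x else v (i - 1)) (i + 1 + 1)))
            = ENNReal.ofReal (bdStep c.p c.q (v i) (v (i + 1))) := by
          intro i _
          norm_num
        rw [Finset.prod_congr rfl e1]
        have e0 : ENNReal.ofReal (bdStep c.p c.q
            ((fun i => if i = 0 then x else v (i - 1)) 0)
            ((fun i => if i = 0 then x else v (i - 1)) (0 + 1)))
            = ENNReal.ofReal (bdStep c.p c.q x y) := by
          norm_num [hv]
        rw [e0]
        ring
      · have hset : shift ⁻¹' cyl v k ∩ cyl (u2 x y) 1 = ∅ := by
          rw [cyl_u2]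
          ext ω
          simp only [Set.mem_inter_iff, Set.mem_preimage, Set.mem_setOf_eq, cyl,
            Set.mem_empty_iff_false, iff_false, not_and]
          intro hsh h0 h1
          have := hsh 0 (Nat.zero_le k)
          simp only [shift] at this
          exact hv (this.symm.trans h1 ▸ (by rw [← this, h1]))
        rw [hset, if_neg hv]
        simp
    · rw [hμ₁, hμ₂]
      rw [Measure.map_apply measurable_shift MeasurableSet.univ]
      simp only [Set.preimage_univ, Measure.restrict_apply MeasurableSet.univ,
        Set.univ_inter, Measure.smul_apply, measure_univ, smul_eq_mul, mul_one]
      rw [law_cyl]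
      have : u2 x y 0 = x := rfl
      rw [if_pos this]
      simp [u2]
  have := congrArg (fun μ : Measure (ℕ → ℤ) => μ A) key
  simp only [hμ₁, hμ₂] at this
  rw [Measure.map_apply measurable_shift hA, Measure.restrict_apply (measurable_shift hA)] at this
  rw [Set.inter_comm] at this
  simpa using this

lemma bdStep_up (p q : ℤ → ℝ) (x : ℤ) : bdStep p q x (x+1) = p x := by
  simp [bdStep]

lemma bdStep_down (p q : ℤ → ℝ) (x : ℤ) : bdStep p q x (x-1) = q x := by
  unfold bdStep
  rw [if_neg (by omega), if_pos rfl]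

lemma bdStep_stay (p q : ℤ → ℝ) (x : ℤ) : bdStep p q x x = 1 - p x - q x := by
  unfold bdStep
  rw [if_neg (by omega), if_neg (by omega), if_pos rfl]

lemma bdStep_far (p q : ℤ → ℝ) {x y : ℤ} (h1 : y ≠ x + 1) (h2 : y ≠ x - 1) (h3 : y ≠ x) :
    bdStep p q x y = 0 := by
  unfold bdStep
  rw [if_neg h1, if_neg h2, if_neg h3]

/-- survival set: no visit to n up to time t -/
def S (n : ℤ) (t : ℕ) : Set (ℕ → ℤ) := {ω | ∀ i ≤ t, ω i ≠ n}

lemma measurableSet_S (n : ℤ) (t : ℕ) : MeasurableSet (S n t) := by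
  have : S n t = ⋂ i ∈ Set.Iic t, {ω : ℕ → ℤ | ω i = n}ᶜ := by
    ext ω; simp [S, Set.mem_iInter]
  rw [this]
  exact MeasurableSet.biInter (Set.to_countable _)
    (fun i _ => (measurableSet_eq_coord i n).compl)

lemma law_compl0 (x : ℤ) : c.law x {ω : ℕ → ℤ | ω 0 = x}ᶜ = 0 := by
  haveI := c.prob x
  rw [measure_compl (measurableSet_eq_coord 0 x) (measure_ne_top _ _), c.init x]
  simp

lemma law_inter_start (x : ℤ) (s : Set (ℕ → ℤ)) :
    c.law x s = c.law x (s ∩ {ω : ℕ → ℤ | ω 0 = x}) := by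
  refine le_antisymm ?_ (measure_mono Set.inter_subset_left)
  calc c.law x s ≤ c.law x (s ∩ {ω : ℕ → ℤ | ω 0 = x})
        + c.law x (s \ {ω : ℕ → ℤ | ω 0 = x}) := measure_le_inter_add_diff _ _ _
  _ = c.law x (s ∩ {ω : ℕ → ℤ | ω 0 = x}) := by
      have : c.law x (s \ {ω : ℕ → ℤ | ω 0 = x}) = 0 :=
        measure_mono_null (Set.diff_subset_compl _ _) (law_compl0 c x)
      rw [this, add_zero]

lemma f_absorb (n : ℤ) (t : ℕ) : c.law n (S n t) = 0 := by
  refine measure_mono_null ?_ (law_compl0 c n)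
  intro ω hω hx
  exact hω 0 (Nat.zero_le t) hx

lemma f_zero (n x : ℤ) (hx : x ≠ n) : c.law x (S n 0) = 1 := by
  haveI := c.prob x
  refine le_antisymm prob_le_one ?_
  have : {ω : ℕ → ℤ | ω 0 = x} ⊆ S n 0 := by
    intro ω hω i hi
    interval_cases i
    rw [hω]; exact hx
  calc (1 : ℝ≥0∞) = c.law x {ω : ℕ → ℤ | ω 0 = x} := (c.init x).symm
  _ ≤ c.law x (S n 0) := measure_mono this

lemma S_succ_decomp (n x : ℤ) (hx : x ≠ n) (t : ℕ) :
    S n (t+1) ∩ {ω : ℕ → ℤ | ω 0 = x} = ⋃ y : ℤ, (cyl (u2 x y) 1 ∩ shift ⁻¹' S n t) := by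
  ext ω
  simp only [Set.mem_inter_iff, Set.mem_setOf_eq, Set.mem_iUnion, Set.mem_preimage, cyl_u2]
  constructor
  · rintro ⟨hS, h0⟩
    exact ⟨ω 1, ⟨⟨h0, rfl⟩, fun i hi => hS (i+1) (by omega)⟩⟩
  · rintro ⟨y, ⟨⟨h0, h1⟩, hsh⟩⟩
    refine ⟨fun i hi => ?_, h0⟩
    rcases Nat.eq_zero_or_pos i with rfl | hpos
    · rw [h0]; exact hx
    · obtain ⟨j, hj⟩ : ∃ j, i = j + 1 := ⟨i - 1, by omega⟩
      subst hj
      exact hsh j (by omega)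

lemma f_rec (n x : ℤ) (hx : x ≠ n) (t : ℕ) :
    c.law x (S n (t+1))
      = ENNReal.ofReal (c.p x) * c.law (x+1) (S n t)
      + ENNReal.ofReal (c.q x) * c.law (x-1) (S n t)
      + ENNReal.ofReal (1 - c.p x - c.q x) * c.law x (S n t) := by
  rw [law_inter_start, S_succ_decomp n x hx t]
  have hdisj : Pairwise (Function.onFun Disjoint fun y : ℤ => cyl (u2 x y) 1 ∩ shift ⁻¹' S n t) := by
    intro y y' hyy'
    refine Set.disjoint_left.2 fun ω hω hω' => ?_
    rw [Set.mem_inter_iff, cyl_u2] at hω hω'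
    exact hyy' (hω.1.2.symm.trans hω'.1.2)
  have hmeas : ∀ y : ℤ, MeasurableSet (cyl (u2 x y) 1 ∩ shift ⁻¹' S n t) := fun y =>
    (measurableSet_cyl _ 1).inter (measurable_shift (measurableSet_S n t))
  rw [measure_iUnion hdisj hmeas]
  have hterm : ∀ y : ℤ, c.law x (cyl (u2 x y) 1 ∩ shift ⁻¹' S n t)
      = ENNReal.ofReal (bdStep c.p c.q x y) * c.law y (S n t) := fun y =>
    oneStep c x y (measurableSet_S n t)
  rw [tsum_congr hterm]
  have hsupp : ∀ y : ℤ, y ∉ ({x+1, x-1, x} : Finset ℤ) →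
      ENNReal.ofReal (bdStep c.p c.q x y) * c.law y (S n t) = 0 := by
    intro y hy
    simp only [Finset.mem_insert, Finset.mem_singleton, not_or] at hy
    rw [bdStep_far c.p c.q hy.1 hy.2.1 hy.2.2]
    simp
  rw [tsum_eq_sum hsupp]
  have h1 : (x+1 : ℤ) ∉ ({x-1, x} : Finset ℤ) := by
    simp only [Finset.mem_insert, Finset.mem_singleton]; omega
  have h2 : (x-1 : ℤ) ∉ ({x} : Finset ℤ) := by
    simp only [Finset.mem_singleton]; omega
  rw [show ({x+1, x-1, x} : Finset ℤ) = insert (x+1) (insert (x-1) {x}) from rfl,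
    Finset.sum_insert h1, Finset.sum_insert h2, Finset.sum_singleton,
    bdStep_up, bdStep_down, bdStep_stay]
  ring

lemma hitTime_eq_tsum (n : ℤ) (ω : ℕ → ℤ) :
    hitTime {n} ω = ∑' t : ℕ, (S n t).indicator (1 : (ℕ → ℤ) → ℝ≥0∞) ω := by
  by_cases hx : ∃ s : ℕ, ω s = n
  · have hfind := Nat.find_spec hx
    set s := Nat.find hx with hs
    have hhit : hitTime {n} ω = (s : ℝ≥0∞) := by
      refine le_antisymm (iInf₂_le s hfind) ?_
      refine le_iInf₂ fun t ht => ?_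
      exact Nat.cast_le.2 (Nat.find_le ht)
    rw [hhit]
    have hsum : ∀ t : ℕ, t ∉ Finset.range s →
        (S n t).indicator (1 : (ℕ → ℤ) → ℝ≥0∞) ω = 0 := by
      intro t ht
      rw [Finset.mem_range, not_lt] at ht
      refine Set.indicator_of_notMem (fun hω => ?_) _
      exact hω s ht hfind
    rw [tsum_eq_sum hsum]
    have : ∀ t ∈ Finset.range s, (S n t).indicator (1 : (ℕ → ℤ) → ℝ≥0∞) ω = 1 := by
      intro t ht
      rw [Finset.mem_range] at ht
      exact Set.indicator_of_mem
        (show ω ∈ S n t from fun i hi hin => Nat.find_min hx (by omega) hin) _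
    rw [Finset.sum_congr rfl this]
    simp
  · push_neg at hx
    have h1 : ∀ t : ℕ, (S n t).indicator (1 : (ℕ → ℤ) → ℝ≥0∞) ω = 1 := fun t =>
      Set.indicator_of_mem (show ω ∈ S n t from fun i _ => hx i) _
    rw [tsum_congr h1]
    have h2 : hitTime {n} ω = ⊤ := by
      simp [hitTime, hx]
    rw [h2, ENNReal.tsum_eq_iSup_nat]
    simp only [Finset.sum_const, Finset.card_range, nsmul_eq_mul, mul_one]
    rw [eq_comm, iSup_eq_top]
    intro c hc
    obtain ⟨k, hk⟩ := ENNReal.exists_nat_gt hc.ne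
    exact ⟨k, hk⟩

lemma eT_eq_tsum (x n : ℤ) :
    (∫⁻ ω, hitTime {n} ω ∂(c.law x)) = ∑' t : ℕ, c.law x (S n t) := by
  rw [lintegral_congr (hitTime_eq_tsum n)]
  rw [lintegral_tsum (fun t => ((measurable_one.indicator (measurableSet_S n t)).aemeasurable))]
  exact tsum_congr fun t => lintegral_indicator_one (measurableSet_S n t)


lemma Icc_split (b k : ℤ) (h : b ≤ k) :
    Finset.Icc b k = insert k (Finset.Icc b (k-1)) := by
  ext i; simp only [Finset.mem_Icc, Finset.mem_insert]; omega

theorem main {b a : ℤ} (hab : b < a) (c : BDChain b a)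
    (π : ℤ → ℝ) (hπ : c.IsStationary π)
    (j n : ℤ) (hj : b ≤ j) (hjn : j < n) (hn : n ≤ a) :
    (∫⁻ ω, hitTime {n} ω ∂(c.law j)) = ENNReal.ofReal
      (∑ k ∈ Finset.Icc j (n - 1), (∑ i ∈ Finset.Icc b k, π i) / (c.p k * π k)) := by
  obtain ⟨hπpos, hπzero, hπsum, hπrev⟩ := hπ
  set d : ℤ → ℝ := fun k => (∑ i ∈ Finset.Icc b k, π i) / (c.p k * π k) with hd
  set Φ : ℤ → ℝ := fun y => ∑ k ∈ Finset.Icc y (n-1), d k with hΦ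
  set fl : ℕ → ℤ → ℝ≥0∞ := fun t x => c.law x (S n t) with hfl
  set h : ℤ → ℝ≥0∞ := fun x => ∑' t : ℕ, fl t x with hh
  have f0' : ∀ x : ℤ, x ≠ n → fl 0 x = 1 := fun x hx => f_zero c n x hx
  have fabs' : ∀ t : ℕ, fl t n = 0 := fun t => f_absorb c n t
  have frec' : ∀ x : ℤ, x ≠ n → ∀ t : ℕ, fl (t+1) x
      = ENNReal.ofReal (c.p x) * fl t (x+1) + ENNReal.ofReal (c.q x) * fl t (x-1)
        + ENNReal.ofReal (1 - c.p x - c.q x) * fl t x :=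
    fun x hx t => f_rec c n x hx t
  -- nonnegativity of q on [b,a]
  have hq_nonneg : ∀ x, b ≤ x → x ≤ a → 0 ≤ c.q x := by
    intro x h1 h2
    rcases eq_or_lt_of_le h1 with heq | h1'
    · simp [c.q_zero x (Or.inl heq.ge)]
    · exact (c.q_pos x (by omega) h2).le
  have hp_nonneg : ∀ x, b ≤ x → x ≤ n - 1 → 0 ≤ c.p x :=
    fun x h1 h2 => (c.p_pos x h1 (by omega)).le
  have hr_nonneg : ∀ x, b ≤ x → x ≤ n - 1 → 0 ≤ 1 - c.p x - c.q x := by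
    intro x h1 h2
    have := c.r_nonneg x h1 (by omega)
    linarith
  -- (L0)
  have d_nonneg : ∀ k, b ≤ k → k ≤ n - 1 → 0 ≤ d k := by
    intro k h1 h2
    have hp := c.p_pos k h1 (by omega)
    have hπk := hπpos k h1 (by omega)
    have hsum : 0 ≤ ∑ i ∈ Finset.Icc b k, π i :=
      Finset.sum_nonneg fun i hi => by
        rw [Finset.mem_Icc] at hi
        exact (hπpos i hi.1 (by omega)).le
    exact div_nonneg hsum (by positivity)
  -- (L1)
  have L1 : ∀ k, b ≤ k → k ≤ n - 1 → c.p k * d k = 1 + c.q k * d (k-1) := by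
    intro k h1 h2
    have hpk := c.p_pos k h1 (by omega)
    have hπk := hπpos k h1 (by omega)
    rcases eq_or_lt_of_le h1 with heq | h1'
    · -- k = b
      rw [c.q_zero k (Or.inl heq.ge)]
      simp only [hd]
      rw [← heq, Finset.Icc_self, Finset.sum_singleton]
      rw [← heq] at hpk hπk
      rw [zero_mul, add_zero]
      field_simp
    · -- k > b
      have hrev := hπrev k (by omega) (by omega)
      have hpk1 := c.p_pos (k-1) (by omega) (by omega)
      have hπk1 := hπpos (k-1) (by omega) (by omega)
      have hsplit : ∑ i ∈ Finset.Icc b k, π i = π k + ∑ i ∈ Finset.Icc b (k-1), π i := by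
        rw [Icc_split b k (by omega), Finset.sum_insert (by simp only [Finset.mem_Icc]; omega)]
      simp only [hd]
      rw [hsplit]
      have hq : c.q k = π (k-1) * c.p (k-1) / π k := by
        rw [eq_div_iff hπk.ne']
        linear_combination hrev
      rw [hq]
      field_simp
  -- (L2)
  have L2 : ∀ x, x ≤ n - 1 → Φ x = d x + Φ (x+1) := by
    intro x hx
    simp only [hΦ]
    rw [show Finset.Icc x (n-1) = insert x (Finset.Icc (x+1) (n-1)) from by
        ext i; simp only [Finset.mem_Icc, Finset.mem_insert]; omega,
      Finset.sum_insert (by simp only [Finset.mem_Icc]; omega)]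
  -- (L3)
  have L3 : ∀ x, b ≤ x → 0 ≤ Φ x := by
    intro x hx
    refine Finset.sum_nonneg fun k hk => ?_
    rw [Finset.mem_Icc] at hk
    exact d_nonneg k (by omega) hk.2
  -- (L4)
  have L4 : ∀ x, b ≤ x → x ≤ n - 1 →
      Φ x = 1 + c.p x * Φ (x+1) + c.q x * Φ (x-1) + (1 - c.p x - c.q x) * Φ x := by
    intro x h1 h2
    have e1 := L1 x h1 h2
    have e2 := L2 x h2
    have e3 := L2 (x-1) (by omega)
    rw [show x - 1 + 1 = x from by omega] at e3
    linear_combination e1 + c.p x * e2 - c.q x * e3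
  -- (F)
  have F : ∀ t : ℕ, ∀ x, b ≤ x → x ≤ n →
      (∑ s ∈ Finset.range t, fl s x) ≤ ENNReal.ofReal (Φ x) := by
    intro t
    induction t with
    | zero => intro x h1 h2; simp
    | succ t ih =>
      intro x h1 h2
      rcases eq_or_lt_of_le h2 with rfl | h2'
      · -- x = n
        have : ∀ s ∈ Finset.range (t+1), fl s x = 0 := fun s _ => fabs' s
        rw [Finset.sum_congr rfl this]
        simp
      · -- x ≤ n - 1
        have hxn : x ≠ n := by omega
        rw [Finset.sum_range_succ']
        have hrec : ∀ s ∈ Finset.range t, fl (s+1) x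
            = ENNReal.ofReal (c.p x) * fl s (x+1) + ENNReal.ofReal (c.q x) * fl s (x-1)
              + ENNReal.ofReal (1 - c.p x - c.q x) * fl s x :=
          fun s _ => frec' x hxn s
        rw [Finset.sum_congr rfl hrec, Finset.sum_add_distrib, Finset.sum_add_distrib,
          ← Finset.mul_sum, ← Finset.mul_sum, ← Finset.mul_sum,
          f0' x hxn]
        have hA : ENNReal.ofReal (c.p x) * (∑ s ∈ Finset.range t, fl s (x+1))
            ≤ ENNReal.ofReal (c.p x * Φ (x+1)) := by
          rw [ENNReal.ofReal_mul (hp_nonneg x h1 (by omega))]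
          exact mul_le_mul_right (ih (x+1) (by omega) (by omega)) _
        have hB : ENNReal.ofReal (c.q x) * (∑ s ∈ Finset.range t, fl s (x-1))
            ≤ ENNReal.ofReal (c.q x * Φ (x-1)) := by
          rcases eq_or_lt_of_le h1 with heq | h1'
          · rw [c.q_zero x (Or.inl heq.ge)]
            simp
          · rw [ENNReal.ofReal_mul (hq_nonneg x h1 (by omega))]
            exact mul_le_mul_right (ih (x-1) (by omega) (by omega)) _
        have hC : ENNReal.ofReal (1 - c.p x - c.q x) * (∑ s ∈ Finset.range t, fl s x)
            ≤ ENNReal.ofReal ((1 - c.p x - c.q x) * Φ x) := by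
          rw [ENNReal.ofReal_mul (hr_nonneg x h1 (by omega))]
          exact mul_le_mul_right (ih x h1 h2) _
        calc ENNReal.ofReal (c.p x) * (∑ s ∈ Finset.range t, fl s (x+1))
              + ENNReal.ofReal (c.q x) * (∑ s ∈ Finset.range t, fl s (x-1))
              + ENNReal.ofReal (1 - c.p x - c.q x) * (∑ s ∈ Finset.range t, fl s x) + 1
            ≤ ENNReal.ofReal (c.p x * Φ (x+1)) + ENNReal.ofReal (c.q x * Φ (x-1))
              + ENNReal.ofReal ((1 - c.p x - c.q x) * Φ x) + 1 :=
              add_le_add (add_le_add (add_le_add hA hB) hC) le_rfl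
        _ = ENNReal.ofReal (Φ x) := by
              have n1 : 0 ≤ c.p x * Φ (x+1) :=
                mul_nonneg (hp_nonneg x h1 (by omega)) (L3 (x+1) (by omega))
              have n2 : 0 ≤ c.q x * Φ (x-1) := by
                rcases eq_or_lt_of_le h1 with heq | h1'
                · rw [c.q_zero x (Or.inl heq.ge)]; simp
                · exact mul_nonneg (hq_nonneg x h1 (by omega)) (L3 (x-1) (by omega))
              have n3 : 0 ≤ (1 - c.p x - c.q x) * Φ x :=
                mul_nonneg (hr_nonneg x h1 (by omega)) (L3 x h1)
              rw [← ENNReal.ofReal_one, ← ENNReal.ofReal_add n1 n2,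
                ← ENNReal.ofReal_add (by linarith) n3,
                ← ENNReal.ofReal_add (by linarith) (by norm_num)]
              congr 1
              linarith [L4 x h1 (by omega)]
  -- finiteness
  have hfin : ∀ x, b ≤ x → x ≤ n → h x ≤ ENNReal.ofReal (Φ x) := by
    intro x h1 h2
    rw [hh]
    simp only []
    rw [ENNReal.tsum_eq_iSup_nat]
    exact iSup_le fun t => F t x h1 h2
  have hne_top : ∀ x, b ≤ x → x ≤ n → h x ≠ ⊤ :=
    fun x h1 h2 => ((hfin x h1 h2).trans_lt ENNReal.ofReal_lt_top).ne
  -- recursion for h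
  have hrec : ∀ x, b ≤ x → x ≤ n - 1 →
      h x = 1 + ENNReal.ofReal (c.p x) * h (x+1) + ENNReal.ofReal (c.q x) * h (x-1)
        + ENNReal.ofReal (1 - c.p x - c.q x) * h x := by
    intro x h1 h2
    have hxn : x ≠ n := by omega
    have e0 : h x = fl 0 x + ∑' t : ℕ, fl (t+1) x :=
      tsum_eq_zero_add' ENNReal.summable
    conv_lhs => rw [e0, f0' x hxn]
    have e1 : ∀ t : ℕ, fl (t+1) x
        = ENNReal.ofReal (c.p x) * fl t (x+1) + ENNReal.ofReal (c.q x) * fl t (x-1)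
          + ENNReal.ofReal (1 - c.p x - c.q x) * fl t x := fun t => frec' x hxn t
    rw [tsum_congr e1, ENNReal.tsum_add, ENNReal.tsum_add,
      ENNReal.tsum_mul_left, ENNReal.tsum_mul_left, ENNReal.tsum_mul_left]
    have r1 : (∑' t : ℕ, fl t (x+1)) = h (x+1) := rfl
    have r2 : (∑' t : ℕ, fl t (x-1)) = h (x-1) := rfl
    have r3 : (∑' t : ℕ, fl t x) = h x := rfl
    rw [r1, r2, r3, ← add_assoc, ← add_assoc]
  -- real versions
  set H : ℤ → ℝ := fun x => (h x).toReal with hH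
  have EH : ∀ x, b ≤ x → x ≤ n - 1 →
      H x = 1 + c.p x * H (x+1) + c.q x * H (x-1) + (1 - c.p x - c.q x) * H x := by
    intro x h1 h2
    have hr := hrec x h1 h2
    have hA_ne : ENNReal.ofReal (c.p x) * h (x+1) ≠ ⊤ :=
      ENNReal.mul_ne_top ENNReal.ofReal_ne_top (hne_top (x+1) (by omega) (by omega))
    have hB_ne : ENNReal.ofReal (c.q x) * h (x-1) ≠ ⊤ := by
      rcases eq_or_lt_of_le h1 with heq | h1'
      · rw [c.q_zero x (Or.inl heq.ge)]; simp
      · exact ENNReal.mul_ne_top ENNReal.ofReal_ne_top (hne_top (x-1) (by omega) (by omega))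
    have hC_ne : ENNReal.ofReal (1 - c.p x - c.q x) * h x ≠ ⊤ :=
      ENNReal.mul_ne_top ENNReal.ofReal_ne_top (hne_top x h1 (by omega))
    have tA : (ENNReal.ofReal (c.p x) * h (x+1)).toReal = c.p x * H (x+1) := by
      rw [ENNReal.toReal_mul, ENNReal.toReal_ofReal (hp_nonneg x h1 h2)]
    have tB : (ENNReal.ofReal (c.q x) * h (x-1)).toReal = c.q x * H (x-1) := by
      rcases eq_or_lt_of_le h1 with heq | h1'
      · rw [c.q_zero x (Or.inl heq.ge)]; simp [hH]
      · rw [ENNReal.toReal_mul, ENNReal.toReal_ofReal (hq_nonneg x h1 (by omega))]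
    have tC : (ENNReal.ofReal (1 - c.p x - c.q x) * h x).toReal
        = (1 - c.p x - c.q x) * H x := by
      rw [ENNReal.toReal_mul, ENNReal.toReal_ofReal (hr_nonneg x h1 h2)]
    have := congrArg ENNReal.toReal hr
    rw [ENNReal.toReal_add (by
        refine ENNReal.add_ne_top.2 ⟨ENNReal.add_ne_top.2 ⟨?_, hA_ne⟩, hB_ne⟩
        exact ENNReal.one_ne_top) hC_ne,
      ENNReal.toReal_add (ENNReal.add_ne_top.2 ⟨ENNReal.one_ne_top, hA_ne⟩) hB_ne,
      ENNReal.toReal_add ENNReal.one_ne_top hA_ne,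
      ENNReal.toReal_one, tA, tB, tC] at this
    exact this
  -- G is "harmonic": successive differences vanish
  have claim1 : ∀ x, b ≤ x → x ≤ n - 1 →
      Φ x - H x = Φ (x+1) - H (x+1) := by
    intro x hx
    refine Int.le_induction
      (motive := fun x _ => x ≤ n - 1 → Φ x - H x = Φ (x+1) - H (x+1)) ?_ ?_ x hx
    · intro h2
      have eΦ := L4 b le_rfl h2
      have eH := EH b le_rfl h2
      have hq0 : c.q b = 0 := c.q_zero b (Or.inl le_rfl)
      have hp := c.p_pos b le_rfl (by omega)
      apply mul_left_cancel₀ hp.ne'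
      rw [hq0] at eΦ eH
      linear_combination eΦ - eH
    · intro x hbx ih h2
      have eΦ := L4 (x+1) (by omega) h2
      have eH := EH (x+1) (by omega) h2
      have hprev := ih (by omega)
      have hp := c.p_pos (x+1) (by omega) (by omega)
      apply mul_left_cancel₀ hp.ne'
      rw [show x + 1 - 1 = x from by omega] at eΦ eH
      linear_combination eΦ - eH + c.q (x+1) * hprev
  have claim2 : ∀ m : ℕ, ∀ x, b ≤ x → x + (m : ℤ) = n → Φ x - H x = Φ n - H n := by
    intro m
    induction m with
    | zero => intro x h1 h2; simp at h2; rw [h2]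
    | succ m ih =>
      intro x h1 h2
      have hx : x ≤ n - 1 := by omega
      rw [claim1 x h1 hx]
      exact ih (x+1) (by omega) (by push_cast at h2 ⊢; omega)
  have hΦn : Φ n = 0 := by
    simp only [hΦ]
    rw [Finset.Icc_eq_empty (by omega), Finset.sum_empty]
  have hHn : H n = 0 := by
    have : h n = 0 := by
      rw [hh]
      simp only []
      rw [tsum_congr fabs']
      simp
    rw [hH]
    simp only []
    rw [this]
    simp
  have hΦH : Φ j = H j := by
    have := claim2 (n - j).toNat j hj (by rw [Int.toNat_of_nonneg (by omega)]; ring)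
    rw [hΦn, hHn] at this
    linarith
  -- conclude
  have heT : (∫⁻ ω, hitTime {n} ω ∂(c.law j)) = h j := eT_eq_tsum c j n
  rw [heT, ← ENNReal.ofReal_toReal (hne_top j hj hjn.le)]
  congr 1
  show H j = _
  rw [← hΦH]

end BD


/-- For an irreducible birth-and-death chain on `⟦b,a⟧` with
reversible invariant probability measure `π`, for all `b ≤ j < n ≤ a`:
`E[T_{j→n}] = Σ_{k=j}^{n-1} π(⟦b,k⟧) / (p_k π(k))`. -/
theorem mean_hitting_time_up {b a : ℤ} (hab : b < a) (c : BDChain b a)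
    (π : ℤ → ℝ) (hπ : c.IsStationary π)
    (j n : ℤ) (hj : b ≤ j) (hjn : j < n) (hn : n ≤ a) :
    c.eT j n = ENNReal.ofReal
      (∑ k ∈ Finset.Icc j (n - 1), (∑ i ∈ Finset.Icc b k, π i) / (c.p k * π k)) :=
  BD.main hab c π hπ j n hj hjn hn
end
end

section
/- Let X be an irreducible birth-and-death chain on ⟦b,a⟧ with transition probabilities p_x, q_x and reversible invariant probability measure π. Then for all integers b ≤ j < n ≤ a: E[T_{j→n}] + E[T_{n→j}] = Σ_{k=j+1}^{n} 1 / ( q_k · π(k) ). -/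
open MeasureTheory Filter Topology ENNReal ProbabilityTheory

noncomputable section

/-! ### Auxiliary material for the proof -/


variable {b a : ℤ}

/-- transition kernel in `ℝ≥0∞`. -/
def bdK (c : BDChain b a) (x y : ℤ) : ℝ≥0∞ := ENNReal.ofReal (bdStep c.p c.q x y)

lemma bdK_up (c : BDChain b a) (x : ℤ) : bdK c x (x+1) = ENNReal.ofReal (c.p x) := by
  simp [bdK, bdStep]

lemma bdK_down (c : BDChain b a) (x : ℤ) : bdK c x (x-1) = ENNReal.ofReal (c.q x) := by
  have h : ¬ (x - 1 = x + 1) := by omega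
  simp [bdK, bdStep, h]

lemma bdK_stay (c : BDChain b a) (x : ℤ) :
    bdK c x x = ENNReal.ofReal (1 - c.p x - c.q x) := by
  have h1 : ¬ (x = x + 1) := by omega
  have h2 : ¬ (x = x - 1) := by omega
  simp [bdK, bdStep, h1, h2]

lemma bdK_out (c : BDChain b a) {x y : ℤ} (h1 : y ≠ x + 1) (h2 : y ≠ x - 1) (h3 : y ≠ x) :
    bdK c x y = 0 := by
  simp [bdK, bdStep, h1, h2, h3]

/-- expansion of `∑' y, bdK c x y * g y` as a three-term sum. -/
lemma tsum_bdK (c : BDChain b a) (x : ℤ) (g : ℤ → ℝ≥0∞) :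
    ∑' y, bdK c x y * g y
      = bdK c x (x+1) * g (x+1) + bdK c x (x-1) * g (x-1) + bdK c x x * g x := by
  have hs : ∀ y ∉ ({x+1, x-1, x} : Finset ℤ), bdK c x y * g y = 0 := by
    intro y hy
    simp only [Finset.mem_insert, Finset.mem_singleton, not_or] at hy
    rw [bdK_out c hy.1 hy.2.1 hy.2.2, zero_mul]
  rw [tsum_eq_sum hs]
  have h1 : (x+1) ∉ ({x-1, x} : Finset ℤ) := by
    simp only [Finset.mem_insert, Finset.mem_singleton]; omega
  have h2 : (x-1) ∉ ({x} : Finset ℤ) := by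
    simp only [Finset.mem_singleton]; omega
  rw [Finset.sum_insert h1, Finset.sum_insert h2, Finset.sum_singleton, add_assoc]

/-- measure of an exact cylinder. -/
lemma bd_cyl (c : BDChain b a) (x : ℤ) (u : ℕ → ℤ) (n : ℕ) :
    c.law x {ω | ∀ i ≤ n, ω i = u i}
      = (if u 0 = x then 1 else 0) * ∏ i ∈ Finset.range n, bdK c (u i) (u (i+1)) := by
  induction n with
  | zero =>
      have hset : {ω : ℕ → ℤ | ∀ i ≤ 0, ω i = u i} = {ω : ℕ → ℤ | ω 0 = u 0} := by
        ext ω; simp [Nat.le_zero]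
      rw [hset]
      simp only [Finset.range_zero, Finset.prod_empty, mul_one]
      by_cases h : u 0 = x
      · rw [if_pos h, h, c.init x]
      · rw [if_neg h]
        haveI := c.prob x
        have hm : MeasurableSet {ω : ℕ → ℤ | ω 0 = x} := by
          have : {ω : ℕ → ℤ | ω 0 = x} = (fun ω : ℕ → ℤ => ω 0) ⁻¹' {x} := rfl
          rw [this]
          exact (measurable_pi_apply 0) (MeasurableSet.singleton x)
        have hsub : {ω : ℕ → ℤ | ω 0 = u 0} ⊆ {ω : ℕ → ℤ | ω 0 = x}ᶜ := by
          intro ω hω hx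
          exact h (hω ▸ hx ▸ rfl)
        have hc : c.law x {ω : ℕ → ℤ | ω 0 = x}ᶜ = 0 := by
          rw [prob_compl_eq_zero_iff hm]
          exact c.init x
        exact le_antisymm (le_trans (measure_mono hsub) hc.le) zero_le
  | succ n ih =>
      rw [c.markov x u n, ih, Finset.prod_range_succ, mul_assoc]
      rfl

/-- combinatorial survival function: probability of avoiding `tgt` up to time `t`. -/
def bdF (c : BDChain b a) (tgt : ℤ) : ℕ → ℤ → ℝ≥0∞
  | 0, x => if x = tgt then 0 else 1
  | (t+1), x => if x = tgt then 0 else ∑' y : ℤ, bdK c x y * bdF c tgt t y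

lemma bdF_tgt (c : BDChain b a) (tgt : ℤ) (t : ℕ) : bdF c tgt t tgt = 0 := by
  cases t <;> simp [bdF]

lemma bdF_zero (c : BDChain b a) {tgt x : ℤ} (h : x ≠ tgt) : bdF c tgt 0 x = 1 := by
  simp [bdF, h]

lemma bdF_succ (c : BDChain b a) {tgt x : ℤ} (h : x ≠ tgt) (t : ℕ) :
    bdF c tgt (t+1) x = ∑' y : ℤ, bdK c x y * bdF c tgt t y := by
  simp [bdF, h]

/-- weight of a finite path. -/
def pwt (c : BDChain b a) (tgt : ℤ) (t : ℕ) (x : ℤ) (u : Fin (t+1) → ℤ) : ℝ≥0∞ :=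
  (if u 0 = x then 1 else 0) *
    ((if ∀ i, u i ≠ tgt then 1 else 0) * ∏ i : Fin t, bdK c (u i.castSucc) (u i.succ))

/-- the path-sum equals `bdF`. -/
lemma pwt_tsum (c : BDChain b a) (tgt : ℤ) :
    ∀ (t : ℕ) (x : ℤ), ∑' u : Fin (t+1) → ℤ, pwt c tgt t x u = bdF c tgt t x := by
  intro t
  induction t with
  | zero =>
      intro x
      have h1 : ∀ u : Fin 1 → ℤ, u ≠ (fun _ => x) → pwt c tgt 0 x u = 0 := by
        intro u hu
        have : u 0 ≠ x := by
          intro h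
          exact hu (funext fun i => by rw [Subsingleton.elim i 0, h])
        simp [pwt, this]
      rw [tsum_eq_single (fun _ => x) h1]
      by_cases h : x = tgt
      · simp [pwt, bdF, h]
      · have : ∀ i : Fin 1, x ≠ tgt := fun _ => h
        simp [pwt, bdF, h]
  | succ t ih =>
      intro x
      rw [← (Fin.consEquiv (fun _ : Fin (t+2) => ℤ)).tsum_eq (pwt c tgt (t+1) x)]
      rw [ENNReal.tsum_prod']
      have hce : ∀ (z : ℤ) (v : Fin (t+1) → ℤ),
          ((Fin.consEquiv (fun _ : Fin (t+2) => ℤ)) (z, v) : Fin (t+2) → ℤ) = Fin.cons z v :=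
        fun z v => rfl
      -- collapse the first coordinate to `x`
      have hz : ∀ z : ℤ, z ≠ x →
          ∑' v : Fin (t+1) → ℤ, pwt c tgt (t+1) x ((Fin.consEquiv fun _ => ℤ) (z, v)) = 0 := by
        intro z hzx
        have : ∀ v : Fin (t+1) → ℤ, pwt c tgt (t+1) x ((Fin.consEquiv fun _ => ℤ) (z, v)) = 0 := by
          intro v
          rw [hce]
          unfold pwt
          rw [if_neg (by rw [Fin.cons_zero]; exact hzx), zero_mul]
        simp [this]
      rw [tsum_eq_single x hz]
      by_cases hx : x = tgt
      · have hzero : ∀ v : Fin (t+1) → ℤ,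
            pwt c tgt (t+1) x ((Fin.consEquiv fun _ => ℤ) (x, v)) = 0 := by
          intro v
          rw [hce]
          unfold pwt
          have hforall : ¬ (∀ i : Fin (t+2), (Fin.cons x v : Fin (t+2) → ℤ) i ≠ tgt) := by
            intro h
            exact (h 0) (by rw [Fin.cons_zero]; exact hx)
          rw [if_neg hforall, zero_mul, mul_zero]
        rw [tsum_congr hzero]
        rw [bdF, if_pos hx]
        simp
      · -- main case
        have key : ∀ v : Fin (t+1) → ℤ,
            pwt c tgt (t+1) x ((Fin.consEquiv fun _ => ℤ) (x, v))
              = bdK c x (v 0) * pwt c tgt t (v 0) v := by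
          intro v
          rw [hce]
          have hall : (∀ i : Fin (t+2), (Fin.cons x v : Fin (t+2) → ℤ) i ≠ tgt)
              ↔ (x ≠ tgt ∧ ∀ i : Fin (t+1), v i ≠ tgt) := by
            rw [Fin.forall_fin_succ]
            simp [Fin.cons_zero, Fin.cons_succ]
          have hprod : (∏ i : Fin (t+1),
              bdK c ((Fin.cons x v : Fin (t+2) → ℤ) i.castSucc) ((Fin.cons x v : Fin (t+2) → ℤ) i.succ))
              = bdK c x (v 0) * ∏ i : Fin t, bdK c (v i.castSucc) (v i.succ) := by
            rw [Fin.prod_univ_succ]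
            simp [Fin.cons_succ, ← Fin.succ_castSucc]
          unfold pwt
          rw [Fin.cons_zero, if_pos rfl, one_mul, hprod, if_pos rfl, one_mul]
          by_cases hv : ∀ i : Fin (t+1), v i ≠ tgt
          · rw [if_pos (hall.mpr ⟨hx, hv⟩), if_pos hv, one_mul, one_mul]
          · rw [if_neg (fun h => hv (hall.mp h).2), if_neg hv, zero_mul, zero_mul, mul_zero]
        calc ∑' v : Fin (t+1) → ℤ, pwt c tgt (t+1) x ((Fin.consEquiv fun _ => ℤ) (x, v))
            = ∑' v : Fin (t+1) → ℤ, bdK c x (v 0) * pwt c tgt t (v 0) v := tsum_congr key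
          _ = ∑' (v : Fin (t+1) → ℤ) (y : ℤ),
                (if v 0 = y then 1 else 0) * (bdK c x y * pwt c tgt t y v) := by
              apply tsum_congr; intro v
              rw [tsum_eq_single (v 0) ?_]
              · simp
              · intro y hy
                rw [if_neg (fun h => hy h.symm), zero_mul]
          _ = ∑' (y : ℤ) (v : Fin (t+1) → ℤ),
                (if v 0 = y then 1 else 0) * (bdK c x y * pwt c tgt t y v) := ENNReal.tsum_comm
          _ = ∑' (y : ℤ), bdK c x y * ∑' v : Fin (t+1) → ℤ,
                (if v 0 = y then 1 else 0) * pwt c tgt t y v := by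
              apply tsum_congr; intro y
              rw [← ENNReal.tsum_mul_left]
              apply tsum_congr; intro v
              ring
          _ = ∑' (y : ℤ), bdK c x y * ∑' v : Fin (t+1) → ℤ, pwt c tgt t y v := by
              apply tsum_congr; intro y
              congr 1
              apply tsum_congr; intro v
              by_cases hv : v 0 = y
              · simp [pwt, hv]
              · simp [pwt, hv]
          _ = ∑' (y : ℤ), bdK c x y * bdF c tgt t y := by
              apply tsum_congr; intro y
              rw [ih y]
          _ = bdF c tgt (t+1) x := (bdF_succ c hx t).symm

/-- the event of avoiding `tgt` up to time `t`. -/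
def avoidSet (tgt : ℤ) (t : ℕ) : Set (ℕ → ℤ) := {ω | ∀ s ≤ t, ω s ≠ tgt}

lemma measurable_avoidSet (tgt : ℤ) (t : ℕ) : MeasurableSet (avoidSet tgt t) := by
  have : avoidSet tgt t = ⋂ (s : ℕ) (_ : s ≤ t), (fun ω : ℕ → ℤ => ω s) ⁻¹' ({tgt}ᶜ) := by
    ext ω; simp [avoidSet]
  rw [this]
  exact MeasurableSet.iInter fun s => MeasurableSet.iInter fun _ =>
    (measurable_pi_apply s) (MeasurableSet.singleton tgt).compl

lemma law_avoid (c : BDChain b a) (x tgt : ℤ) (t : ℕ) :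
    c.law x (avoidSet tgt t) = bdF c tgt t x := by
  classical
  set D : (Fin (t+1) → ℤ) → Set (ℕ → ℤ) := fun u =>
    {ω | (∀ i : Fin (t+1), ω i = u i) ∧ ∀ i : Fin (t+1), u i ≠ tgt} with hD
  have hunion : avoidSet tgt t = ⋃ u, D u := by
    ext ω
    constructor
    · intro h
      refine Set.mem_iUnion.mpr ⟨fun i => ω i, ⟨fun i => rfl, fun i => h i (Nat.lt_succ_iff.mp i.isLt)⟩⟩
    · rintro h s hs
      rcases Set.mem_iUnion.mp h with ⟨u, h1, h2⟩
      rw [show (s : ℕ) = ((⟨s, Nat.lt_succ_of_le hs⟩ : Fin (t+1)) : ℕ) from rfl,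
        h1 ⟨s, Nat.lt_succ_of_le hs⟩]
      exact h2 _
  have hdisj : Pairwise (Function.onFun Disjoint D) := by
    intro u v huv
    simp only [Function.onFun]
    rw [Set.disjoint_left]
    rintro ω ⟨h1, _⟩ ⟨h2, _⟩
    exact huv (funext fun i => (h1 i).symm.trans (h2 i))
  have hmeas : ∀ u, MeasurableSet (D u) := by
    intro u
    have hDi : D u = {ω : ℕ → ℤ | ∀ i : Fin (t+1), ω i = u i}
        ∩ {ω : ℕ → ℤ | ∀ i : Fin (t+1), u i ≠ tgt} := rfl
    rw [hDi]
    apply MeasurableSet.inter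
    · have h2 : {ω : ℕ → ℤ | ∀ i : Fin (t+1), ω i = u i}
          = ⋂ i : Fin (t+1), (fun ω : ℕ → ℤ => ω i) ⁻¹' {u i} := by
        ext ω; simp [Set.mem_iInter]
      rw [h2]
      exact MeasurableSet.iInter fun i =>
        (measurable_pi_apply (i : ℕ)) (MeasurableSet.singleton (u i))
    · exact MeasurableSet.const _
  have hval : ∀ u, c.law x (D u) = pwt c tgt t x u := by
    intro u
    by_cases hcond : ∀ i : Fin (t+1), u i ≠ tgt
    · have hDu : D u = {ω : ℕ → ℤ | ∀ i : Fin (t+1), ω i = u i} := by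
        ext ω; simp [hD, hcond]
      obtain ⟨uext, huval⟩ : ∃ uext : ℕ → ℤ, ∀ (i : ℕ) (h : i < t+1), uext i = u ⟨i, h⟩ :=
        ⟨fun i => if h : i < t+1 then u ⟨i, h⟩ else 0, fun i h => dif_pos h⟩
      have hset : {ω : ℕ → ℤ | ∀ i : Fin (t+1), ω i = u i}
          = {ω : ℕ → ℤ | ∀ i ≤ t, ω i = uext i} := by
        ext ω
        constructor
        · intro h i hi
          rw [huval i (Nat.lt_succ_of_le hi)]
          exact h ⟨i, Nat.lt_succ_of_le hi⟩
        · intro h i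
          have h3 := h (i : ℕ) (Nat.lt_succ_iff.mp i.isLt)
          rw [huval (i : ℕ) i.isLt] at h3
          simpa using h3
      rw [hDu, hset, bd_cyl]
      have h0 : uext 0 = u 0 := huval 0 t.succ_pos
      have hprod : ∏ i ∈ Finset.range t, bdK c (uext i) (uext (i+1))
          = ∏ i : Fin t, bdK c (u i.castSucc) (u i.succ) := by
        rw [← Fin.prod_univ_eq_prod_range]
        apply Finset.prod_congr rfl
        intro i _
        congr 1
        · rw [huval (i : ℕ) (by omega)]
          exact congrArg u (Fin.ext rfl)
        · rw [huval ((i : ℕ)+1) (by omega)]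
          exact congrArg u (Fin.ext rfl)
      rw [h0, hprod]
      unfold pwt
      rw [if_pos hcond, one_mul]
    · have hDu : D u = ∅ := by
        ext ω; simp only [hD, Set.mem_setOf_eq, Set.mem_empty_iff_false, iff_false]
        rintro ⟨_, h2⟩
        exact hcond h2
      rw [hDu, measure_empty]
      unfold pwt
      rw [if_neg hcond, zero_mul, mul_zero]
  rw [hunion, measure_iUnion hdisj hmeas]
  rw [tsum_congr hval, pwt_tsum]

lemma hitTime_singleton_eq (z : ℤ) (ω : ℕ → ℤ) :
    hitTime {z} ω = ∑' t : ℕ, (if ∀ s ≤ t, ω s ≠ z then (1 : ℝ≥0∞) else 0) := by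
  by_cases hex : ∃ s, ω s = z
  · set m := Nat.find hex with hm
    have hlhs : hitTime {z} ω = (m : ℝ≥0∞) := by
      apply le_antisymm
      · exact iInf_le_of_le m (iInf_le_of_le (Nat.find_spec hex) le_rfl)
      · refine le_iInf fun s => le_iInf fun hs => ?_
        exact_mod_cast Nat.cast_le.mpr (Nat.find_min' hex hs)
    have hcond : ∀ s : ℕ, (∀ i ≤ s, ω i ≠ z) ↔ s < m := by
      intro s
      constructor
      · intro h
        by_contra hs
        exact h m (by omega) (Nat.find_spec hex)
      · intro hs i hi
        exact Nat.find_min hex (by omega)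
    have hrhs : ∑' s : ℕ, (if ∀ i ≤ s, ω i ≠ z then (1 : ℝ≥0∞) else 0) = (m : ℝ≥0∞) := by
      rw [tsum_eq_sum (s := Finset.range m) ?_]
      · rw [Finset.sum_congr rfl (fun s hs => if_pos ((hcond s).mpr (Finset.mem_range.mp hs)))]
        simp
      · intro s hs
        have hns : ¬ s < m := fun h => hs (Finset.mem_range.mpr h)
        exact if_neg (fun h => hns ((hcond s).mp h))
    rw [hlhs, hrhs]
  · have hnot : ∀ s, ω s ∉ ({z} : Set ℤ) := fun s h => hex ⟨s, h⟩
    have hlhs : hitTime {z} ω = ⊤ := by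
      unfold hitTime
      simp [hnot]
    have : ∀ s : ℕ, (∀ i ≤ s, ω i ≠ z) := fun s i _ h => hex ⟨i, h⟩
    rw [hlhs, tsum_congr (fun s => if_pos (this s))]
    exact (ENNReal.tsum_const_eq_top_of_ne_zero one_ne_zero).symm

lemma eT_eq_tsum_bdF (c : BDChain b a) (x tgt : ℤ) :
    c.eT x tgt = ∑' t : ℕ, bdF c tgt t x := by
  unfold BDChain.eT
  have h1 : ∀ ω : ℕ → ℤ, hitTime {tgt} ω
      = ∑' t : ℕ, (avoidSet tgt t).indicator (fun _ => (1:ℝ≥0∞)) ω := by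
    intro ω
    rw [hitTime_singleton_eq tgt ω]
    apply tsum_congr
    intro t
    by_cases hmem : ω ∈ avoidSet tgt t
    · rw [Set.indicator_of_mem hmem]
      exact if_pos (hmem : ∀ s ≤ t, ω s ≠ tgt)
    · rw [Set.indicator_of_notMem hmem]
      exact if_neg (fun h : ∀ s ≤ t, ω s ≠ tgt => hmem h)
  rw [lintegral_congr h1, lintegral_tsum]
  · apply tsum_congr
    intro t
    rw [show (fun _ : ℕ → ℤ => (1:ℝ≥0∞)) = (1 : (ℕ → ℤ) → ℝ≥0∞) from rfl,
      lintegral_indicator_one (measurable_avoidSet tgt t)]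
    exact law_avoid c x tgt t
  · intro t
    exact (measurable_one.indicator (measurable_avoidSet tgt t)).aemeasurable

/-- expected hitting time as a series. -/
def bdH (c : BDChain b a) (tgt x : ℤ) : ℝ≥0∞ := ∑' t : ℕ, bdF c tgt t x

lemma bdH_tgt (c : BDChain b a) (tgt : ℤ) : bdH c tgt tgt = 0 := by
  unfold bdH
  simp [bdF_tgt]

lemma bdH_rec (c : BDChain b a) {tgt x : ℤ} (hxt : x ≠ tgt) :
    bdH c tgt x = 1 + ∑' y, bdK c x y * bdH c tgt y := by
  unfold bdH
  rw [tsum_eq_zero_add' ENNReal.summable, bdF_zero c hxt,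
    tsum_congr (fun t => bdF_succ c hxt t), ENNReal.tsum_comm]
  congr 1
  exact tsum_congr fun y => ENNReal.tsum_mul_left

/-- Core comparison lemma: if `v` is a bounded nonnegative solution of the
one-step equations on a region `I` closed under the dynamics, then `bdH` equals
`ofReal ∘ v` on `I`. -/
lemma bdH_eq_candidate (c : BDChain b a) (tgt : ℤ) (I : Set ℤ) (v : ℤ → ℝ) (M : ℝ)
    (hv0 : v tgt = 0)
    (hM : ∀ x ∈ I, v x ≤ M)
    (hconf : ∀ x ∈ I, x ≠ tgt → ∀ y, bdK c x y ≠ 0 → y ∈ I)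
    (heq : ∀ x ∈ I, x ≠ tgt →
      ENNReal.ofReal (v x) = 1 + ∑' y, bdK c x y * ENNReal.ofReal (v y)) :
    ∀ x ∈ I, bdH c tgt x = ENNReal.ofReal (v x) := by
  -- upper bound on partial sums
  have hG : ∀ m, ∀ x ∈ I, ∑ t ∈ Finset.range m, bdF c tgt t x ≤ ENNReal.ofReal (v x) := by
    intro m
    induction m with
    | zero => intro x hx; simp
    | succ m ih =>
        intro x hx
        by_cases hxt : x = tgt
        · subst hxt
          rw [Finset.sum_congr rfl (fun t _ => bdF_tgt c x t)]
          simp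
        · rw [Finset.sum_range_succ', bdF_zero c hxt,
            Finset.sum_congr rfl (fun t _ => bdF_succ c hxt t),
            ← Summable.tsum_finsetSum (fun _ _ => ENNReal.summable), add_comm, heq x hx hxt]
          refine add_le_add le_rfl ?_
          apply ENNReal.tsum_le_tsum
          intro y
          rw [← Finset.mul_sum]
          by_cases hk : bdK c x y = 0
          · simp [hk]
          · exact mul_le_mul_right (ih y (hconf x hx hxt y hk)) _
  have hHle : ∀ x ∈ I, bdH c tgt x ≤ ENNReal.ofReal (v x) := fun x hx =>
    Summable.tsum_le_of_sum_range_le ENNReal.summable (fun m => hG m x hx)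
  -- lower bound
  have hlow : ∀ m, ∀ x ∈ I, ENNReal.ofReal (v x)
      ≤ bdH c tgt x + ENNReal.ofReal M * bdF c tgt m x := by
    intro m
    induction m with
    | zero =>
        intro x hx
        by_cases hxt : x = tgt
        · subst hxt; rw [hv0]; simp
        · rw [bdF_zero c hxt, mul_one]
          calc ENNReal.ofReal (v x) ≤ ENNReal.ofReal M := ENNReal.ofReal_le_ofReal (hM x hx)
            _ ≤ bdH c tgt x + ENNReal.ofReal M := le_add_self
    | succ m ih =>
        intro x hx
        by_cases hxt : x = tgt
        · subst hxt; rw [hv0]; simp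
        · rw [heq x hx hxt, bdH_rec c hxt, bdF_succ c hxt m]
          have hsplit : (1 + ∑' y, bdK c x y * bdH c tgt y)
                + ENNReal.ofReal M * ∑' y, bdK c x y * bdF c tgt m y
              = 1 + ∑' y, bdK c x y * (bdH c tgt y + ENNReal.ofReal M * bdF c tgt m y) := by
            rw [add_assoc]
            congr 1
            rw [tsum_congr (fun y => (mul_add (bdK c x y) _ _ : bdK c x y * _ = _)),
              ENNReal.tsum_add]
            congr 1
            rw [← ENNReal.tsum_mul_left]
            exact tsum_congr fun y => by ring
          rw [hsplit]
          refine add_le_add le_rfl ?_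
          apply ENNReal.tsum_le_tsum
          intro y
          by_cases hk : bdK c x y = 0
          · simp [hk]
          · exact mul_le_mul_right (ih y (hconf x hx hxt y hk)) _
  -- conclusion
  intro x hx
  by_cases hxt : x = tgt
  · subst hxt; rw [bdH_tgt, hv0]; simp
  · refine le_antisymm (hHle x hx) ?_
    have hfin : bdH c tgt x ≠ ⊤ := (lt_of_le_of_lt (hHle x hx) ENNReal.ofReal_lt_top).ne
    have htend : Tendsto (fun m => bdF c tgt m x) atTop (𝓝 0) :=
      ENNReal.tendsto_atTop_zero_of_tsum_ne_top hfin
    have htend2 : Tendsto (fun m => bdH c tgt x + ENNReal.ofReal M * bdF c tgt m x)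
        atTop (𝓝 (bdH c tgt x)) := by
      have h2 : Tendsto (fun m => ENNReal.ofReal M * bdF c tgt m x) atTop (𝓝 0) := by
        have h3 := ENNReal.Tendsto.const_mul (a := ENNReal.ofReal M) htend (Or.inr (ENNReal.ofReal_ne_top (r := M)))
        simpa using h3
      have h4 := Filter.Tendsto.add (tendsto_const_nhds
        (x := bdH c tgt x) (f := atTop (α := ℕ))) h2
      simpa using h4
    exact ge_of_tendsto' htend2 (fun m => hlow m x hx)

lemma bd_p_nonneg (c : BDChain b a) (x : ℤ) : 0 ≤ c.p x := by
  by_cases h : b ≤ x ∧ x ≤ a - 1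
  · exact (c.p_pos x h.1 h.2).le
  · rw [c.p_zero x (by omega)]

lemma bd_q_nonneg (c : BDChain b a) (x : ℤ) : 0 ≤ c.q x := by
  by_cases h : b + 1 ≤ x ∧ x ≤ a
  · exact (c.q_pos x h.1 h.2).le
  · rw [c.q_zero x (by omega)]

lemma pi_nonneg {c : BDChain b a} {π : ℤ → ℝ} (hπ : c.IsStationary π) (x : ℤ) : 0 ≤ π x := by
  by_cases h : b ≤ x ∧ x ≤ a
  · exact (hπ.1 x h.1 h.2).le
  · rw [hπ.2.1 x (by omega)]

lemma eT_up (c : BDChain b a) (π : ℤ → ℝ) (hπ : c.IsStationary π)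
    (j n : ℤ) (hj : b ≤ j) (hjn : j < n) (hn : n ≤ a) :
    c.eT j n = ENNReal.ofReal (∑ k ∈ Finset.Ico j n,
      (∑ i ∈ Finset.Icc b k, π i) / (c.p k * π k)) := by
  obtain ⟨hπpos, hπzero, hπsum, hπrev⟩ := hπ
  set A : ℤ → ℝ := fun k => ∑ i ∈ Finset.Icc b k, π i with hA
  set tu : ℤ → ℝ := fun k => A k / (c.p k * π k) with htu
  set w : ℤ → ℝ := fun x => ∑ k ∈ Finset.Ico x n, tu k with hw
  have hπnn : ∀ x, 0 ≤ π x := pi_nonneg ⟨hπpos, hπzero, hπsum, hπrev⟩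
  have hAnn : ∀ k, k < n → 0 ≤ A k := by
    intro k _
    exact Finset.sum_nonneg fun i _ => hπnn i
  have htunn : ∀ k, k < n → 0 ≤ tu k := by
    intro k hk
    exact div_nonneg (hAnn k hk) (mul_nonneg (bd_p_nonneg c k) (hπnn k))
  have hwnn : ∀ x, 0 ≤ w x := by
    intro x
    exact Finset.sum_nonneg fun k hk => htunn k (Finset.mem_Ico.mp hk).2
  have hwle : ∀ x ∈ Set.Icc b n, w x ≤ w b := by
    intro x hx
    have hx' := Set.mem_Icc.mp hx
    apply Finset.sum_le_sum_of_subset_of_nonneg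
    · intro k hk
      rw [Finset.mem_Ico] at hk ⊢
      omega
    · intro k hk _
      exact htunn k (Finset.mem_Ico.mp hk).2
  have hwn : w n = 0 := by simp [hw]
  -- the key one-step identity for `tu`
  have hkey : ∀ x, b ≤ x → x < n → c.p x * tu x = 1 + c.q x * tu (x-1) := by
    intro x hbx hxn
    have hpx : 0 < c.p x := c.p_pos x hbx (by omega)
    have hπx : 0 < π x := hπpos x hbx (by omega)
    have hAx : A x = A (x-1) + π x := by
      show (∑ i ∈ Finset.Icc b x, π i) = (∑ i ∈ Finset.Icc b (x-1), π i) + π x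
      have hins : Finset.Icc b x = insert x (Finset.Icc b (x-1)) := by
        ext z; simp only [Finset.mem_Icc, Finset.mem_insert]; omega
      rw [hins, Finset.sum_insert (by simp only [Finset.mem_Icc]; omega)]
      ring
    have htux : tu x = A x / (c.p x * π x) := rfl
    have htux1 : tu (x-1) = A (x-1) / (c.p (x-1) * π (x-1)) := rfl
    by_cases hxb : x = b
    · have hq : c.q x = 0 := c.q_zero x (Or.inl (le_of_eq hxb))
      have hAb : A x = π x := by
        show (∑ i ∈ Finset.Icc b x, π i) = π x
        rw [hxb]
        simp
      rw [htux, hAb, hq, zero_mul, add_zero]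
      field_simp
    · have hqx : 0 < c.q x := c.q_pos x (by omega) (by omega)
      have hπx1 : 0 < π (x-1) := hπpos (x-1) (by omega) (by omega)
      have hpx1 : 0 < c.p (x-1) := c.p_pos (x-1) (by omega) (by omega)
      have hrev := hπrev x (by omega) (by omega)
      have hP : c.p (x-1) * π (x-1) = π x * c.q x := by
        rw [mul_comm]
        exact hrev.symm
      rw [htux, htux1, hP, hAx]
      field_simp
      ring
  -- the exact one-step equation for `w`
  have hreal : ∀ x, b ≤ x → x < n →
      w x = 1 + (c.p x * w (x+1) + c.q x * w (x-1) + (1 - c.p x - c.q x) * w x) := by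
    intro x hbx hxn
    have h1 : w x = tu x + w (x+1) := by
      rw [hw]
      simp only
      have : Finset.Ico x n = insert x (Finset.Ico (x+1) n) := by
        ext z; simp only [Finset.mem_Ico, Finset.mem_insert]; omega
      rw [this, Finset.sum_insert (by simp only [Finset.mem_Ico]; omega)]
    have h2 : w (x-1) = tu (x-1) + w x := by
      rw [hw]
      simp only
      have : Finset.Ico (x-1) n = insert (x-1) (Finset.Ico x n) := by
        ext z; simp only [Finset.mem_Ico, Finset.mem_insert]; omega
      rw [this, Finset.sum_insert (by simp only [Finset.mem_Ico]; omega)]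
    rw [h2, h1]
    linear_combination hkey x hbx hxn
  -- the ENNReal one-step equation
  have heq : ∀ x ∈ Set.Icc b n, x ≠ n →
      ENNReal.ofReal (w x) = 1 + ∑' y, bdK c x y * ENNReal.ofReal (w y) := by
    intro x hx hxn
    rw [Set.mem_Icc] at hx
    have hxn' : x < n := lt_of_le_of_ne hx.2 hxn
    have hrnn : 0 ≤ 1 - c.p x - c.q x := by
      have := c.r_nonneg x hx.1 (by omega)
      linarith
    have e1 : 0 ≤ c.p x * w (x+1) := mul_nonneg (bd_p_nonneg c x) (hwnn _)
    have e2 : 0 ≤ c.q x * w (x-1) := mul_nonneg (bd_q_nonneg c x) (hwnn _)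
    have e3 : 0 ≤ (1 - c.p x - c.q x) * w x := mul_nonneg hrnn (hwnn _)
    rw [tsum_bdK, bdK_up, bdK_down, bdK_stay,
      ← ENNReal.ofReal_mul (bd_p_nonneg c x), ← ENNReal.ofReal_mul (bd_q_nonneg c x),
      ← ENNReal.ofReal_mul hrnn,
      ← ENNReal.ofReal_add e1 e2,
      ← ENNReal.ofReal_add (add_nonneg e1 e2) e3,
      ← ENNReal.ofReal_one,
      ← ENNReal.ofReal_add (by norm_num) (add_nonneg (add_nonneg e1 e2) e3)]
    apply congrArg
    linarith [hreal x hx.1 hxn']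
  -- region closed under dynamics
  have hconf : ∀ x ∈ Set.Icc b n, x ≠ n → ∀ y, bdK c x y ≠ 0 → y ∈ Set.Icc b n := by
    intro x hx hxn y hky
    rw [Set.mem_Icc] at hx ⊢
    by_cases h1 : y = x + 1
    · subst h1; constructor <;> omega
    · by_cases h2 : y = x - 1
      · subst h2
        have hq : 0 < c.q x := by
          by_contra hq
          apply hky
          rw [bdK_down, ENNReal.ofReal_eq_zero]
          linarith
        have hnx : ¬ (x ≤ b ∨ a < x) := by
          intro h
          rw [c.q_zero x h] at hq
          exact lt_irrefl 0 hq
        constructor <;> omega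
      · by_cases h3 : y = x
        · subst h3; exact ⟨hx.1, hx.2⟩
        · exact absurd (bdK_out c h1 h2 h3) hky
  have hmain := bdH_eq_candidate c n (Set.Icc b n) w (w b) hwn
    (fun x hx => hwle x hx) hconf heq j (Set.mem_Icc.mpr ⟨hj, by omega⟩)
  rw [eT_eq_tsum_bdF]
  exact hmain

lemma eT_down (c : BDChain b a) (π : ℤ → ℝ) (hπ : c.IsStationary π)
    (j n : ℤ) (hj : b ≤ j) (hjn : j < n) (hn : n ≤ a) :
    c.eT n j = ENNReal.ofReal (∑ k ∈ Finset.Ioc j n,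
      (∑ i ∈ Finset.Icc k a, π i) / (c.q k * π k)) := by
  obtain ⟨hπpos, hπzero, hπsum, hπrev⟩ := hπ
  set B : ℤ → ℝ := fun k => ∑ i ∈ Finset.Icc k a, π i with hB
  set du : ℤ → ℝ := fun k => B k / (c.q k * π k) with hdu
  set v : ℤ → ℝ := fun x => ∑ k ∈ Finset.Ioc j x, du k with hv
  have hπnn : ∀ x, 0 ≤ π x := pi_nonneg ⟨hπpos, hπzero, hπsum, hπrev⟩
  have hBnn : ∀ k, 0 ≤ B k := fun k => Finset.sum_nonneg fun i _ => hπnn i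
  have hdunn : ∀ k, 0 ≤ du k := fun k =>
    div_nonneg (hBnn k) (mul_nonneg (bd_q_nonneg c k) (hπnn k))
  have hvnn : ∀ x, 0 ≤ v x := fun x => Finset.sum_nonneg fun k _ => hdunn k
  have hvle : ∀ x ∈ Set.Icc j a, v x ≤ v a := by
    intro x hx
    have hx' := Set.mem_Icc.mp hx
    apply Finset.sum_le_sum_of_subset_of_nonneg
    · intro k hk
      rw [Finset.mem_Ioc] at hk ⊢
      omega
    · intro k _ _
      exact hdunn k
  have hvj : v j = 0 := by simp [hv]
  -- key one-step identity for `du`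
  have hkey : ∀ x, j < x → x ≤ a → c.q x * du x = 1 + c.p x * du (x+1) := by
    intro x hjx hxa
    have hqx : 0 < c.q x := c.q_pos x (by omega) hxa
    have hπx : 0 < π x := hπpos x (by omega) hxa
    have hBx : B x = π x + B (x+1) := by
      show (∑ i ∈ Finset.Icc x a, π i) = π x + (∑ i ∈ Finset.Icc (x+1) a, π i)
      have hins : Finset.Icc x a = insert x (Finset.Icc (x+1) a) := by
        ext z; simp only [Finset.mem_Icc, Finset.mem_insert]; omega
      rw [hins, Finset.sum_insert (by simp only [Finset.mem_Icc]; omega)]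
    have hdux : du x = B x / (c.q x * π x) := rfl
    have hdux1 : du (x+1) = B (x+1) / (c.q (x+1) * π (x+1)) := rfl
    by_cases hxa' : x = a
    · have hp : c.p x = 0 := c.p_zero x (Or.inr (ge_of_eq hxa'))
      have hBa : B x = π x := by
        show (∑ i ∈ Finset.Icc x a, π i) = π x
        rw [hxa']
        simp
      rw [hdux, hBa, hp, zero_mul, add_zero]
      field_simp
    · have hpx : 0 < c.p x := c.p_pos x (by omega) (by omega)
      have hπx1 : 0 < π (x+1) := hπpos (x+1) (by omega) (by omega)
      have hqx1 : 0 < c.q (x+1) := c.q_pos (x+1) (by omega) (by omega)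
      have hrev := hπrev (x+1) (by omega) (by omega)
      have hP : c.q (x+1) * π (x+1) = π x * c.p x := by
        have h1 : π (x+1) * c.q (x+1) = π ((x+1)-1) * c.p ((x+1)-1) := hrev
        simp only [add_sub_cancel_right] at h1
        rw [mul_comm]
        exact h1
      rw [hdux, hdux1, hP, hBx]
      field_simp
  -- exact one-step equation for `v`
  have hreal : ∀ x, j < x → x ≤ a →
      v x = 1 + (c.p x * v (x+1) + c.q x * v (x-1) + (1 - c.p x - c.q x) * v x) := by
    intro x hjx hxa
    have h1 : v x = du x + v (x-1) := by
      show (∑ k ∈ Finset.Ioc j x, du k) = du x + (∑ k ∈ Finset.Ioc j (x-1), du k)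
      have hins : Finset.Ioc j x = insert x (Finset.Ioc j (x-1)) := by
        ext z; simp only [Finset.mem_Ioc, Finset.mem_insert]; omega
      rw [hins, Finset.sum_insert (by simp only [Finset.mem_Ioc]; omega)]
    have h2 : v (x+1) = du (x+1) + v x := by
      show (∑ k ∈ Finset.Ioc j (x+1), du k) = du (x+1) + (∑ k ∈ Finset.Ioc j x, du k)
      have hins : Finset.Ioc j (x+1) = insert (x+1) (Finset.Ioc j x) := by
        ext z; simp only [Finset.mem_Ioc, Finset.mem_insert]; omega
      rw [hins, Finset.sum_insert (by simp only [Finset.mem_Ioc]; omega)]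
    rw [h2, h1]
    linear_combination hkey x hjx hxa
  -- ENNReal one-step equation
  have heq : ∀ x ∈ Set.Icc j a, x ≠ j →
      ENNReal.ofReal (v x) = 1 + ∑' y, bdK c x y * ENNReal.ofReal (v y) := by
    intro x hx hxj
    rw [Set.mem_Icc] at hx
    have hjx : j < x := lt_of_le_of_ne hx.1 (Ne.symm hxj)
    have hrnn : 0 ≤ 1 - c.p x - c.q x := by
      have := c.r_nonneg x (by omega) hx.2
      linarith
    have e1 : 0 ≤ c.p x * v (x+1) := mul_nonneg (bd_p_nonneg c x) (hvnn _)
    have e2 : 0 ≤ c.q x * v (x-1) := mul_nonneg (bd_q_nonneg c x) (hvnn _)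
    have e3 : 0 ≤ (1 - c.p x - c.q x) * v x := mul_nonneg hrnn (hvnn _)
    rw [tsum_bdK, bdK_up, bdK_down, bdK_stay,
      ← ENNReal.ofReal_mul (bd_p_nonneg c x), ← ENNReal.ofReal_mul (bd_q_nonneg c x),
      ← ENNReal.ofReal_mul hrnn,
      ← ENNReal.ofReal_add e1 e2,
      ← ENNReal.ofReal_add (add_nonneg e1 e2) e3,
      ← ENNReal.ofReal_one,
      ← ENNReal.ofReal_add (by norm_num) (add_nonneg (add_nonneg e1 e2) e3)]
    apply congrArg
    linarith [hreal x hjx hx.2]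
  -- region closed under dynamics
  have hconf : ∀ x ∈ Set.Icc j a, x ≠ j → ∀ y, bdK c x y ≠ 0 → y ∈ Set.Icc j a := by
    intro x hx hxj y hky
    rw [Set.mem_Icc] at hx ⊢
    have hjx : j < x := lt_of_le_of_ne hx.1 (Ne.symm hxj)
    by_cases h1 : y = x + 1
    · subst h1
      have hp : 0 < c.p x := by
        by_contra hp
        apply hky
        rw [bdK_up, ENNReal.ofReal_eq_zero]
        linarith [bd_p_nonneg c x]
      have hnx : ¬ (x < b ∨ a ≤ x) := by
        intro h
        rw [c.p_zero x h] at hp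
        exact lt_irrefl 0 hp
      constructor <;> omega
    · by_cases h2 : y = x - 1
      · subst h2; constructor <;> omega
      · by_cases h3 : y = x
        · subst h3; exact ⟨hx.1, hx.2⟩
        · exact absurd (bdK_out c h1 h2 h3) hky
  have hmain := bdH_eq_candidate c j (Set.Icc j a) v (v a) hvj
    (fun x hx => hvle x hx) hconf heq n (Set.mem_Icc.mpr ⟨by omega, hn⟩)
  rw [eT_eq_tsum_bdF]
  have hIoc : ∀ x : ℤ, x ≤ a → v x = ∑ k ∈ Finset.Ioc j x, du k := fun _ _ => rfl
  exact hmain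

/-- For an irreducible birth-and-death chain on `⟦b,a⟧` with
reversible invariant probability measure `π`, for all `b ≤ j < n ≤ a`:
`E[T_{j→n}] + E[T_{n→j}] = Σ_{k=j+1}^{n} 1 / (q_k π(k))`. -/
theorem commute_time_identity {b a : ℤ} (hab : b < a) (c : BDChain b a)
    (π : ℤ → ℝ) (hπ : c.IsStationary π)
    (j n : ℤ) (hj : b ≤ j) (hjn : j < n) (hn : n ≤ a) :
    c.eT j n + c.eT n j = ENNReal.ofReal
      (∑ k ∈ Finset.Icc (j + 1) n, 1 / (c.q k * π k)) := by
  rw [eT_up c π hπ j n hj hjn hn, eT_down c π hπ j n hj hjn hn]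
  obtain ⟨hπpos, hπzero, hπsum, hπrev⟩ := hπ
  have hπnn : ∀ x, 0 ≤ π x := pi_nonneg ⟨hπpos, hπzero, hπsum, hπrev⟩
  have h1nn : 0 ≤ ∑ k ∈ Finset.Ico j n, (∑ i ∈ Finset.Icc b k, π i) / (c.p k * π k) :=
    Finset.sum_nonneg fun k _ => div_nonneg (Finset.sum_nonneg fun i _ => hπnn i)
      (mul_nonneg (bd_p_nonneg c k) (hπnn k))
  have h2nn : 0 ≤ ∑ k ∈ Finset.Ioc j n, (∑ i ∈ Finset.Icc k a, π i) / (c.q k * π k) :=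
    Finset.sum_nonneg fun k _ => div_nonneg (Finset.sum_nonneg fun i _ => hπnn i)
      (mul_nonneg (bd_q_nonneg c k) (hπnn k))
  rw [← ENNReal.ofReal_add h1nn h2nn]
  congr 1
  -- rewrite `Ioc` as `Icc`
  have hIoc : Finset.Ioc j n = Finset.Icc (j+1) n := by
    ext z; simp only [Finset.mem_Ioc, Finset.mem_Icc]; omega
  rw [hIoc]
  -- reindex the first sum
  have hre : ∑ k ∈ Finset.Ico j n, (∑ i ∈ Finset.Icc b k, π i) / (c.p k * π k)
      = ∑ k ∈ Finset.Icc (j+1) n, (∑ i ∈ Finset.Icc b (k-1), π i) / (c.p (k-1) * π (k-1)) := by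
    apply Finset.sum_nbij' (i := fun k => k + 1) (j := fun k => k - 1)
    · intro k hk
      rw [Finset.mem_Ico] at hk
      rw [Finset.mem_Icc]
      omega
    · intro k hk
      rw [Finset.mem_Icc] at hk
      rw [Finset.mem_Ico]
      omega
    · intro k _; omega
    · intro k _; omega
    · intro k _
      norm_num
  rw [hre, ← Finset.sum_add_distrib]
  apply Finset.sum_congr rfl
  intro k hk
  rw [Finset.mem_Icc] at hk
  have hqk : 0 < c.q k := c.q_pos k (by omega) (by omega)
  have hπk : 0 < π k := hπpos k (by omega) (by omega)
  have hrev := hπrev k (by omega) (by omega)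
  have hP : c.p (k-1) * π (k-1) = c.q k * π k := by linear_combination - hrev
  rw [hP, ← add_div]
  have hsplit : (∑ i ∈ Finset.Icc b (k-1), π i) + (∑ i ∈ Finset.Icc k a, π i) = 1 := by
    have hdis : Disjoint (Finset.Icc b (k-1)) (Finset.Icc k a) := by
      rw [Finset.disjoint_left]
      intro z hz1 hz2
      rw [Finset.mem_Icc] at hz1 hz2
      omega
    have hun : Finset.Icc b (k-1) ∪ Finset.Icc k a = Finset.Icc b a := by
      ext z; simp only [Finset.mem_union, Finset.mem_Icc]; omega
    rw [← Finset.sum_union hdis, hun]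
    exact hπsum
  rw [hsplit]
end
end
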